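/- arXiv:1403.5605 — 3 statements merged into one kernel-verified Lean document; each statement's English description precedes it below -/
import Mathlib

section
/- In every execution of the BWBGME algorithm, if a process P flips GlobalColor at the time point t_i ending the interval I_i, then when P was computing its token number there existed a conflicting process Q with the same token color as P and a strictly smaller token number; moreover, both P and Q performed their read of GlobalColor (line 5) during the interval I_i. -/
/-! ## Model of the Black and White Bakery GME (BWBGME) algorithm -/

inductive Color : Type
  | black
  | white
  deriving DecidableEq

/-- The opposite color. -/
def Color.opp : Color → Color
  | .black => .white
  | .white => .black

/-- A token: a session number, a color in {black, white, ⊥} (`none` is ⊥) and a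
token number. -/
structure BWTok where
  session : ℕ
  color : Option Color
  number : ℕ
  deriving DecidableEq

def BWTok.init : BWTok := ⟨0, none, 0⟩

/-- Program counter of a process in the BWBGME algorithm.  The doorway is
`d1 s` (Token[i]:=(s,⊥,0)), `d2 s` (Choosing[i]:=true, line 4),
`d3 s` (mycolor:=GlobalColor, line 5), `scan s c j m` (the loop computing the max `m`
of the token numbers of conflicting processes with token color `c`; `j` is the next
index to read), `d4 s c m` (Token[i]:=(s,c,m), where `m` is the final mynumber) and
`d5 s c m` (Choosing[i]:=false).  The waiting room iterates, for each `j`: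
`w1` (wait until Choosing[j]=false or Token[j].session=s), `wB` (the branch reading
Token[j].color), and the busy-waits `wSame` / `wDiff`.  The exit section is the scan
`x1 s c m j` looking for an active process of the opposite color (entered only when
`m ≠ 1`), `xFlip s c m` (GlobalColor := opposite of `c`) and `x2` (Token[i]:=(0,⊥,0)). -/
inductive BWPc : Type
  | remainder
  | d1 (s : ℕ)
  | d2 (s : ℕ)
  | d3 (s : ℕ)
  | scan (s : ℕ) (c : Color) (j : ℕ) (m : ℕ)
  | d4 (s : ℕ) (c : Color) (m : ℕ)
  | d5 (s : ℕ) (c : Color) (m : ℕ)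
  | w1 (s : ℕ) (c : Color) (m : ℕ) (j : ℕ)
  | wB (s : ℕ) (c : Color) (m : ℕ) (j : ℕ)
  | wSame (s : ℕ) (c : Color) (m : ℕ) (j : ℕ)
  | wDiff (s : ℕ) (c : Color) (m : ℕ) (j : ℕ)
  | cs (s : ℕ) (c : Color) (m : ℕ)
  | x1 (s : ℕ) (c : Color) (m : ℕ) (j : ℕ)
  | xFlip (s : ℕ) (c : Color) (m : ℕ)
  | x2
  deriving DecidableEq

/-- Global state: GlobalColor, the shared arrays Token and Choosing, and the
control state of each process. -/
structure BWState (N : ℕ) where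
  gcolor : Color
  token : Fin N → BWTok
  choosing : Fin N → Bool
  pc : Fin N → BWPc

/-- Initial state; GlobalColor is initialized arbitrarily to `c0`. -/
def bwInit (N : ℕ) (c0 : Color) : BWState N :=
  { gcolor := c0, token := fun _ => BWTok.init, choosing := fun _ => false,
    pc := fun _ => BWPc.remainder }

/-- One atomic step of process `i` of the BWBGME algorithm. -/
def bwStep {N : ℕ} (st : BWState N) (i : Fin N) (st' : BWState N) : Prop :=
  match st.pc i with
  | .remainder =>
      st' = st ∨ ∃ s : ℕ, 0 < s ∧ st' = { st with pc := Function.update st.pc i (.d1 s) }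
  | .d1 s =>
      st' = { st with token := Function.update st.token i ⟨s, none, 0⟩,
                      pc := Function.update st.pc i (.d2 s) }
  | .d2 s =>
      st' = { st with choosing := Function.update st.choosing i true,
                      pc := Function.update st.pc i (.d3 s) }
  | .d3 s =>
      st' = { st with pc := Function.update st.pc i (.scan s st.gcolor 0 0) }
  | .scan s c j m =>
      if h : j < N then
        st' = { st with pc := Function.update st.pc i (.scan s c (j+1)
                  (if (st.token ⟨j, h⟩).color = some c ∧ (st.token ⟨j, h⟩).session ≠ 0 ∧
                      (st.token ⟨j, h⟩).session ≠ s
                   then max m (st.token ⟨j, h⟩).number else m)) }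
      else
        st' = { st with pc := Function.update st.pc i (.d4 s c (m+1)) }
  | .d4 s c m =>
      st' = { st with token := Function.update st.token i ⟨s, some c, m⟩,
                      pc := Function.update st.pc i (.d5 s c m) }
  | .d5 s c m =>
      st' = { st with choosing := Function.update st.choosing i false,
                      pc := Function.update st.pc i (.w1 s c m 0) }
  | .w1 s c m j =>
      if h : j < N then
        if st.choosing ⟨j, h⟩ = false ∨ (st.token ⟨j, h⟩).session = s then
          st' = { st with pc := Function.update st.pc i (.wB s c m j) }
        else st' = st
      else
        st' = { st with pc := Function.update st.pc i (.cs s c m) }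
  | .wB s c m j =>
      if h : j < N then
        if (st.token ⟨j, h⟩).color = some c then
          st' = { st with pc := Function.update st.pc i (.wSame s c m j) }
        else
          st' = { st with pc := Function.update st.pc i (.wDiff s c m j) }
      else st' = st
  | .wSame s c m j =>
      if h : j < N then
        if (m < (st.token ⟨j, h⟩).number ∨ (m = (st.token ⟨j, h⟩).number ∧ i.val < j)) ∨
            (st.token ⟨j, h⟩).color ≠ some c ∨ (st.token ⟨j, h⟩).session = 0 ∨
            (st.token ⟨j, h⟩).session = s then
          st' = { st with pc := Function.update st.pc i (.w1 s c m (j+1)) }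
        else st' = st
      else st' = st
  | .wDiff s c m j =>
      if h : j < N then
        if st.gcolor ≠ c ∨ (st.token ⟨j, h⟩).color = some c ∨
            (st.token ⟨j, h⟩).session = 0 ∨ (st.token ⟨j, h⟩).session = s then
          st' = { st with pc := Function.update st.pc i (.w1 s c m (j+1)) }
        else st' = st
      else st' = st
  | .cs s c m =>
      st' = st ∨
        st' = { st with pc :=
                  Function.update st.pc i (if m = 1 then BWPc.x2 else BWPc.x1 s c m 0) }
  | .x1 s c m j =>
      if h : j < N then
        if (st.token ⟨j, h⟩).session ≠ 0 ∧ (st.token ⟨j, h⟩).color = some c.opp then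
          st' = { st with pc := Function.update st.pc i .x2 }
        else
          st' = { st with pc := Function.update st.pc i (.x1 s c m (j+1)) }
      else
        st' = { st with pc := Function.update st.pc i (.xFlip s c m) }
  | .xFlip _ c _ =>
      st' = { st with gcolor := c.opp, pc := Function.update st.pc i .x2 }
  | .x2 =>
      st' = { st with token := Function.update st.token i BWTok.init,
                      pc := Function.update st.pc i .remainder }

/-- An execution of the BWBGME algorithm: an interleaving of atomic steps from an
initial state (with arbitrary GlobalColor) in which every process outside its
remainder section eventually takes its next step. -/
structure BWExec (N : ℕ) where
  state : ℕ → BWState N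
  sched : ℕ → Fin N
  init : ∃ c0, state 0 = bwInit N c0
  step : ∀ n, bwStep (state n) (sched n) (state (n + 1))
  fair : ∀ (i : Fin N) (n : ℕ), (state n).pc i ≠ BWPc.remainder →
           ∃ m, n ≤ m ∧ sched m = i

/-- Process `i` is in the critical section. -/
def bwInCS {N : ℕ} (st : BWState N) (i : Fin N) : Prop :=
  ∃ s c m, st.pc i = BWPc.cs s c m

/-- Process `i` is in the entry section (doorway or waiting room). -/
def bwInEntry {N : ℕ} (st : BWState N) (i : Fin N) : Prop :=
  match st.pc i with
  | .remainder => False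
  | .cs _ _ _ => False
  | .x1 _ _ _ _ => False
  | .xFlip _ _ _ => False
  | .x2 => False
  | _ => True

/-- At step `n`, process `i` leaves the remainder and enters the doorway,
requesting session `s`. -/
def bwEntersDoorway {N : ℕ} (e : BWExec N) (i : Fin N) (s : ℕ) (n : ℕ) : Prop :=
  (e.state n).pc i = BWPc.remainder ∧ (e.state (n+1)).pc i = BWPc.d1 s

/-- At step `n`, process `i` completes its doorway (executes Choosing[i]:=false),
having requested session `s` and chosen token color `c` and token number `m`. -/
def bwCompletesDoorway {N : ℕ} (e : BWExec N) (i : Fin N) (s : ℕ) (c : Color) (m : ℕ)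
    (n : ℕ) : Prop :=
  (e.state n).pc i = BWPc.d5 s c m ∧ (e.state (n+1)).pc i = BWPc.w1 s c m 0

/-- At step `n`, process `i` executes line 5, reading GlobalColor = `c`
(its invocation requests session `s`). -/
def bwLine5 {N : ℕ} (e : BWExec N) (i : Fin N) (s : ℕ) (c : Color) (n : ℕ) : Prop :=
  (e.state n).pc i = BWPc.d3 s ∧ (e.state (n+1)).pc i = BWPc.scan s c 0 0

/-- At step `n`, process `i` executes line 4 (Choosing[i]:=true). -/
def bwLine4 {N : ℕ} (e : BWExec N) (i : Fin N) (s : ℕ) (n : ℕ) : Prop :=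
  (e.state n).pc i = BWPc.d2 s ∧ (e.state (n+1)).pc i = BWPc.d3 s

/-- At step `n`, process `i` enters the critical section. -/
def bwEntersCS {N : ℕ} (e : BWExec N) (i : Fin N) (n : ℕ) : Prop :=
  ¬ bwInCS (e.state n) i ∧ bwInCS (e.state (n+1)) i

/-- At step `n`, process `i` finishes (leaves) the critical section. -/
def bwLeavesCS {N : ℕ} (e : BWExec N) (i : Fin N) (n : ℕ) : Prop :=
  bwInCS (e.state n) i ∧ ¬ bwInCS (e.state (n+1)) i

/-- At step `n`, process `i` completes its exit section
(executes Token[i]:=(0,⊥,0) and returns to the remainder section). -/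
def bwCompletesExit {N : ℕ} (e : BWExec N) (i : Fin N) (n : ℕ) : Prop :=
  (e.state n).pc i = BWPc.x2 ∧ (e.state (n+1)).pc i = BWPc.remainder

/-- Process `i` does not pass through the remainder section during `(a, b]`
(so times `a` and `b` belong to the same invocation of `i`). -/
def bwActiveThrough {N : ℕ} (e : BWExec N) (i : Fin N) (a b : ℕ) : Prop :=
  ∀ k, a < k → k ≤ b → (e.state k).pc i ≠ BWPc.remainder

/-- GlobalColor is flipped at step `n`: the step is a write that changes its value. -/
def bwFlipAt {N : ℕ} (e : BWExec N) (n : ℕ) : Prop :=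
  (e.state (n+1)).gcolor ≠ (e.state n).gcolor


section BWsecD2
namespace BW


variable {N : ℕ}

/-- A step either preserves gcolor, or the stepper is at `xFlip` and writes `c.opp`. -/
lemma gcolor_step {st st' : BWState N} {i : Fin N} (h : bwStep st i st') :
    st'.gcolor = st.gcolor ∨
      ∃ s c m, st.pc i = BWPc.xFlip s c m ∧ st'.gcolor = c.opp := by
  unfold bwStep at h
  split at h <;>
    [ (rcases h with h|⟨s, hs, h⟩); skip; skip; skip;
      skip; skip; skip; skip; skip; skip; skip; (rcases h with h|h); skip; skip; skip] <;>
  · first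
    | (subst h; left; rfl)
    | (rename_i s c m heq; right; exact ⟨s, c, m, heq, by rw [h]⟩)
    | ((repeat' split at h) <;> (subst h; left; rfl))


end BW
end BWsecD2

section BWsecD3
namespace BW


variable {N : ℕ}

/-- Per-process invariant relating pc, token and choosing. -/
def pcInv : BWPc → BWTok → Bool → Prop
  | .remainder, tk, ch => tk = BWTok.init ∧ ch = false
  | .d1 s, tk, ch => 0 < s ∧ tk = BWTok.init ∧ ch = false
  | .d2 s, tk, ch => 0 < s ∧ tk = ⟨s, none, 0⟩ ∧ ch = false
  | .d3 s, tk, ch => 0 < s ∧ tk = ⟨s, none, 0⟩ ∧ ch = true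
  | .scan s _ _ _, tk, ch => 0 < s ∧ tk = ⟨s, none, 0⟩ ∧ ch = true
  | .d4 s _ m, tk, ch => 0 < s ∧ tk = ⟨s, none, 0⟩ ∧ ch = true ∧ 1 ≤ m
  | .d5 s c m, tk, ch => 0 < s ∧ tk = ⟨s, some c, m⟩ ∧ ch = true ∧ 1 ≤ m
  | .w1 s c m _, tk, ch => 0 < s ∧ tk = ⟨s, some c, m⟩ ∧ ch = false ∧ 1 ≤ m
  | .wB s c m _, tk, ch => 0 < s ∧ tk = ⟨s, some c, m⟩ ∧ ch = false ∧ 1 ≤ m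
  | .wSame s c m _, tk, ch => 0 < s ∧ tk = ⟨s, some c, m⟩ ∧ ch = false ∧ 1 ≤ m
  | .wDiff s c m _, tk, ch => 0 < s ∧ tk = ⟨s, some c, m⟩ ∧ ch = false ∧ 1 ≤ m
  | .cs s c m, tk, ch => 0 < s ∧ tk = ⟨s, some c, m⟩ ∧ ch = false ∧ 1 ≤ m
  | .x1 s c m _, tk, ch => 0 < s ∧ tk = ⟨s, some c, m⟩ ∧ ch = false ∧ 1 ≤ m ∧ m ≠ 1
  | .xFlip s c m, tk, ch => 0 < s ∧ tk = ⟨s, some c, m⟩ ∧ ch = false ∧ 1 ≤ m ∧ m ≠ 1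
  | .x2, tk, ch => (∃ s c m, 0 < s ∧ tk = ⟨s, some c, m⟩) ∧ ch = false

def Inv (st : BWState N) : Prop := ∀ i, pcInv (st.pc i) (st.token i) (st.choosing i)

private lemma frameD3 {st st' : BWState N} {i j : Fin N} (h : bwStep st i st') (hji : j ≠ i) :
    st'.pc j = st.pc j ∧ st'.token j = st.token j ∧ st'.choosing j = st.choosing j := by
  unfold bwStep at h
  split at h <;>
    [ (rcases h with h|⟨s, hs, h⟩); skip; skip; skip;
      skip; skip; skip; skip; skip; skip; skip; (rcases h with h|h); skip; skip; skip] <;>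
  · first
    | (subst h; simp [Function.update_of_ne hji])
    | (repeat' split at h) <;> (subst h; simp [Function.update_of_ne hji])

lemma inv_step {st st' : BWState N} {i : Fin N} (h : bwStep st i st') (hI : Inv st) :
    Inv st' := by
  intro j
  rcases eq_or_ne j i with rfl | hji
  · have hIj := hI j
    unfold bwStep at h
    split at h <;>
      [ (rcases h with h|⟨s, hs, h⟩); skip; skip; skip;
        skip; skip; skip; skip; skip; skip; skip; (rcases h with h|h); skip; skip; skip] <;>
      rename_i hpc <;>
    · first
      | (subst h; rw [hpc] at hIj ⊢; exact hIj)
      | ((repeat' split at h) <;>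
          (subst h; rw [hpc] at hIj; (try simp only [Function.update_self]); try split) <;>
          (try simp only [pcInv] at hIj ⊢) <;>
          (first
            | tauto
            | (refine ⟨hIj.1, hIj.2.1, hIj.2.2, ?_⟩; omega)
            | (refine ⟨hIj.1, hIj.2.1, hIj.2.2.1, ?_⟩; omega)))
  · have hf := frameD3 h hji
    rw [hf.1, hf.2.1, hf.2.2]; exact hI j

lemma invAt (e : BWExec N) : ∀ n, Inv (e.state n) := by
  intro n
  induction n with
  | zero =>
      obtain ⟨c0, h0⟩ := e.init
      rw [h0]; intro i; simp [bwInit, pcInv, BWTok.init]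
  | succ n ih => exact inv_step (e.step n) ih



end BW
end BWsecD3

section BWsecD4
namespace BW


variable {N : ℕ}

lemma frame' {st st' : BWState N} {i j : Fin N} (h : bwStep st i st') (hji : j ≠ i) :
    st'.pc j = st.pc j ∧ st'.token j = st.token j ∧ st'.choosing j = st.choosing j := by
  unfold bwStep at h
  split at h <;>
    [ (rcases h with h|⟨s, hs, h⟩); skip; skip; skip;
      skip; skip; skip; skip; skip; skip; skip; (rcases h with h|h); skip; skip; skip] <;>
  · first
    | (subst h; simp [Function.update_of_ne hji])
    | (repeat' split at h) <;> (subst h; simp [Function.update_of_ne hji])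

variable {e : BWExec N} {R : Fin N} {n : ℕ}

lemma pc_ne (hs : e.sched n ≠ R) : (e.state (n+1)).pc R = (e.state n).pc R :=
  (frame' (e.step n) (fun h => hs h.symm)).1

lemma back_scan {s : ℕ} {c : Color} {j acc : ℕ}
    (h : (e.state (n+1)).pc R = .scan s c j acc) :
    (e.state n).pc R = .scan s c j acc ∨
    (e.sched n = R ∧
      (((e.state n).pc R = .d3 s ∧ (e.state n).gcolor = c ∧ j = 0 ∧ acc = 0) ∨
       (∃ j₀ acc₀, ∃ hj : j₀ < N, (e.state n).pc R = .scan s c j₀ acc₀ ∧ j = j₀ + 1 ∧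
          acc = if ((e.state n).token ⟨j₀, hj⟩).color = some c ∧
                   ((e.state n).token ⟨j₀, hj⟩).session ≠ 0 ∧
                   ((e.state n).token ⟨j₀, hj⟩).session ≠ s
                then max acc₀ ((e.state n).token ⟨j₀, hj⟩).number else acc₀))) := by
  rcases eq_or_ne (e.sched n) R with hs | hs
  · have hstep := e.step n
    rw [hs] at hstep
    unfold bwStep at hstep
    split at hstep <;> rename_i hpc <;>
      [ (rcases hstep with hstep|⟨s', hs', hstep⟩); skip; skip; skip;
        skip; skip; skip; skip; skip; skip; skip; (rcases hstep with hstep|hstep);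
        skip; skip; skip] <;>
      (try (repeat' split at hstep)) <;>
      rw [hstep] at h <;>
      (try simp only [Function.update_self] at h) <;>
      (try (first | exact Or.inl h | (simp at h; done)))
    · simp only [BWPc.scan.injEq] at h
      obtain ⟨rfl, hg, rfl, rfl⟩ := h
      exact Or.inr ⟨hs, Or.inl ⟨hpc, hg, rfl, rfl⟩⟩
    · rename_i hj hcond
      simp only [BWPc.scan.injEq] at h
      obtain ⟨rfl, rfl, rfl, rfl⟩ := h
      exact Or.inr ⟨hs, Or.inr ⟨_, _, hj, hpc, rfl, (if_pos hcond).symm⟩⟩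
    · rename_i hj hcond
      simp only [BWPc.scan.injEq] at h
      obtain ⟨rfl, rfl, rfl, rfl⟩ := h
      exact Or.inr ⟨hs, Or.inr ⟨_, _, hj, hpc, rfl, (if_neg hcond).symm⟩⟩
  · exact Or.inl ((pc_ne hs) ▸ h)



end BW
end BWsecD4

section BWsecD5
namespace BW



variable {N : ℕ} {e : BWExec N} {R : Fin N} {n : ℕ}

section backs
set_option maxHeartbeats 1000000

lemma back_d4 {s : ℕ} {c : Color} {m : ℕ}
    (h : (e.state (n+1)).pc R = .d4 s c m) :
    (e.state n).pc R = .d4 s c m ∨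
    (e.sched n = R ∧ ∃ j acc, ¬ j < N ∧ (e.state n).pc R = .scan s c j acc ∧ m = acc + 1) := by
  rcases eq_or_ne (e.sched n) R with hs | hs
  · have hstep := e.step n
    rw [hs] at hstep
    unfold bwStep at hstep
    split at hstep <;> rename_i hpc <;>
      [ (rcases hstep with hstep|⟨s', hs', hstep⟩); skip; skip; skip;
        skip; skip; skip; skip; skip; skip; skip; (rcases hstep with hstep|hstep);
        skip; skip; skip] <;>
      (try (repeat' split at hstep)) <;>
      rw [hstep] at h <;>
      (try simp only [Function.update_self] at h) <;>
      (try (first | exact Or.inl h | (simp at h; done)))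
    · rename_i hj
      simp only [BWPc.d4.injEq] at h
      obtain ⟨rfl, rfl, rfl⟩ := h
      exact Or.inr ⟨hs, _, _, hj, hpc, rfl⟩
  · exact Or.inl ((pc_ne hs) ▸ h)

lemma back_d5 {s : ℕ} {c : Color} {m : ℕ}
    (h : (e.state (n+1)).pc R = .d5 s c m) :
    (e.state n).pc R = .d5 s c m ∨
    (e.sched n = R ∧ (e.state n).pc R = .d4 s c m) := by
  rcases eq_or_ne (e.sched n) R with hs | hs
  · have hstep := e.step n
    rw [hs] at hstep
    unfold bwStep at hstep
    split at hstep <;> rename_i hpc <;>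
      [ (rcases hstep with hstep|⟨s', hs', hstep⟩); skip; skip; skip;
        skip; skip; skip; skip; skip; skip; skip; (rcases hstep with hstep|hstep);
        skip; skip; skip] <;>
      (try (repeat' split at hstep)) <;>
      rw [hstep] at h <;>
      (try simp only [Function.update_self] at h) <;>
      (try (first | exact Or.inl h | (simp at h; done)))
    · simp only [BWPc.d5.injEq] at h
      obtain ⟨rfl, rfl, rfl⟩ := h
      exact Or.inr ⟨hs, hpc⟩
  · exact Or.inl ((pc_ne hs) ▸ h)

lemma back_w1 {s : ℕ} {c : Color} {m j : ℕ}
    (h : (e.state (n+1)).pc R = .w1 s c m j) :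
    (e.state n).pc R = .w1 s c m j ∨
    (e.sched n = R ∧
      ((j = 0 ∧ (e.state n).pc R = .d5 s c m) ∨
       (∃ j₀, ∃ hj : j₀ < N, j = j₀ + 1 ∧
         (((e.state n).pc R = .wSame s c m j₀ ∧
            ((m < ((e.state n).token ⟨j₀, hj⟩).number ∨
              (m = ((e.state n).token ⟨j₀, hj⟩).number ∧ R.val < j₀)) ∨
             ((e.state n).token ⟨j₀, hj⟩).color ≠ some c ∨
             ((e.state n).token ⟨j₀, hj⟩).session = 0 ∨
             ((e.state n).token ⟨j₀, hj⟩).session = s)) ∨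
          ((e.state n).pc R = .wDiff s c m j₀ ∧
            ((e.state n).gcolor ≠ c ∨ ((e.state n).token ⟨j₀, hj⟩).color = some c ∨
             ((e.state n).token ⟨j₀, hj⟩).session = 0 ∨
             ((e.state n).token ⟨j₀, hj⟩).session = s)))))) := by
  rcases eq_or_ne (e.sched n) R with hs | hs
  · have hstep := e.step n
    rw [hs] at hstep
    unfold bwStep at hstep
    split at hstep <;> rename_i hpc <;>
      [ (rcases hstep with hstep|⟨s', hs', hstep⟩); skip; skip; skip;
        skip; skip; skip; skip; skip; skip; skip; (rcases hstep with hstep|hstep);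
        skip; skip; skip] <;>
      (try (repeat' split at hstep)) <;>
      rw [hstep] at h <;>
      (try simp only [Function.update_self] at h) <;>
      (try (first | exact Or.inl h | (simp at h; done)))
    · simp only [BWPc.w1.injEq] at h
      obtain ⟨rfl, rfl, rfl, rfl⟩ := h
      exact Or.inr ⟨hs, Or.inl ⟨rfl, hpc⟩⟩
    · rename_i hj hcond
      simp only [BWPc.w1.injEq] at h
      obtain ⟨rfl, rfl, rfl, rfl⟩ := h
      exact Or.inr ⟨hs, Or.inr ⟨_, hj, rfl, Or.inl ⟨hpc, hcond⟩⟩⟩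
    · rename_i hj hcond
      simp only [BWPc.w1.injEq] at h
      obtain ⟨rfl, rfl, rfl, rfl⟩ := h
      exact Or.inr ⟨hs, Or.inr ⟨_, hj, rfl, Or.inr ⟨hpc, hcond⟩⟩⟩
  · exact Or.inl ((pc_ne hs) ▸ h)

lemma back_wB {s : ℕ} {c : Color} {m j : ℕ}
    (h : (e.state (n+1)).pc R = .wB s c m j) :
    (e.state n).pc R = .wB s c m j ∨
    (e.sched n = R ∧ ∃ hj : j < N, (e.state n).pc R = .w1 s c m j ∧
      ((e.state n).choosing ⟨j, hj⟩ = false ∨ ((e.state n).token ⟨j, hj⟩).session = s)) := by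
  rcases eq_or_ne (e.sched n) R with hs | hs
  · have hstep := e.step n
    rw [hs] at hstep
    unfold bwStep at hstep
    split at hstep <;> rename_i hpc <;>
      [ (rcases hstep with hstep|⟨s', hs', hstep⟩); skip; skip; skip;
        skip; skip; skip; skip; skip; skip; skip; (rcases hstep with hstep|hstep);
        skip; skip; skip] <;>
      (try (repeat' split at hstep)) <;>
      rw [hstep] at h <;>
      (try simp only [Function.update_self] at h) <;>
      (try (first | exact Or.inl h | (simp at h; done)))
    · rename_i hj hcond
      simp only [BWPc.wB.injEq] at h
      obtain ⟨rfl, rfl, rfl, rfl⟩ := h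
      exact Or.inr ⟨hs, hj, hpc, hcond⟩
  · exact Or.inl ((pc_ne hs) ▸ h)

lemma back_wSame {s : ℕ} {c : Color} {m j : ℕ}
    (h : (e.state (n+1)).pc R = .wSame s c m j) :
    (e.state n).pc R = .wSame s c m j ∨
    (e.sched n = R ∧ ∃ hj : j < N, (e.state n).pc R = .wB s c m j ∧
      ((e.state n).token ⟨j, hj⟩).color = some c) := by
  rcases eq_or_ne (e.sched n) R with hs | hs
  · have hstep := e.step n
    rw [hs] at hstep
    unfold bwStep at hstep
    split at hstep <;> rename_i hpc <;>
      [ (rcases hstep with hstep|⟨s', hs', hstep⟩); skip; skip; skip;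
        skip; skip; skip; skip; skip; skip; skip; (rcases hstep with hstep|hstep);
        skip; skip; skip] <;>
      (try (repeat' split at hstep)) <;>
      rw [hstep] at h <;>
      (try simp only [Function.update_self] at h) <;>
      (try (first | exact Or.inl h | (simp at h; done)))
    · rename_i hj hcond
      simp only [BWPc.wSame.injEq] at h
      obtain ⟨rfl, rfl, rfl, rfl⟩ := h
      exact Or.inr ⟨hs, hj, hpc, hcond⟩
  · exact Or.inl ((pc_ne hs) ▸ h)

lemma back_cs {s : ℕ} {c : Color} {m : ℕ}
    (h : (e.state (n+1)).pc R = .cs s c m) :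
    (e.state n).pc R = .cs s c m ∨
    (e.sched n = R ∧ ∃ j, ¬ j < N ∧ (e.state n).pc R = .w1 s c m j) := by
  rcases eq_or_ne (e.sched n) R with hs | hs
  · have hstep := e.step n
    rw [hs] at hstep
    unfold bwStep at hstep
    split at hstep <;> rename_i hpc <;>
      [ (rcases hstep with hstep|⟨s', hs', hstep⟩); skip; skip; skip;
        skip; skip; skip; skip; skip; skip; skip; (rcases hstep with hstep|hstep);
        skip; skip; skip] <;>
      (try (repeat' split at hstep)) <;>
      rw [hstep] at h <;>
      (try simp only [Function.update_self] at h) <;>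
      (try (first | exact Or.inl h | (simp at h; done)))
    · rename_i hj
      simp only [BWPc.cs.injEq] at h
      obtain ⟨rfl, rfl, rfl⟩ := h
      exact Or.inr ⟨hs, _, hj, hpc⟩
  · exact Or.inl ((pc_ne hs) ▸ h)

lemma back_x1 {s : ℕ} {c : Color} {m j : ℕ}
    (h : (e.state (n+1)).pc R = .x1 s c m j) :
    (e.state n).pc R = .x1 s c m j ∨
    (e.sched n = R ∧
      ((j = 0 ∧ (e.state n).pc R = .cs s c m ∧ m ≠ 1) ∨
       (∃ j₀, ∃ hj : j₀ < N, j = j₀ + 1 ∧ (e.state n).pc R = .x1 s c m j₀ ∧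
         ¬(((e.state n).token ⟨j₀, hj⟩).session ≠ 0 ∧
           ((e.state n).token ⟨j₀, hj⟩).color = some c.opp)))) := by
  rcases eq_or_ne (e.sched n) R with hs | hs
  · have hstep := e.step n
    rw [hs] at hstep
    unfold bwStep at hstep
    split at hstep <;> rename_i hpc <;>
      [ (rcases hstep with hstep|⟨s', hs', hstep⟩); skip; skip; skip;
        skip; skip; skip; skip; skip; skip; skip; (rcases hstep with hstep|hstep);
        skip; skip; skip] <;>
      (try (repeat' split at hstep)) <;>
      rw [hstep] at h <;>
      (try simp only [Function.update_self] at h) <;>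
      (try (first | exact Or.inl h | (simp at h; done)))
    · rename_i hm
      simp only [BWPc.x1.injEq] at h
      obtain ⟨rfl, rfl, rfl, rfl⟩ := h
      exact Or.inr ⟨hs, Or.inl ⟨rfl, hpc, hm⟩⟩
    · rename_i hj hcond
      simp only [BWPc.x1.injEq] at h
      obtain ⟨rfl, rfl, rfl, rfl⟩ := h
      exact Or.inr ⟨hs, Or.inr ⟨_, hj, rfl, hpc, hcond⟩⟩
  · exact Or.inl ((pc_ne hs) ▸ h)

lemma back_xFlip {s : ℕ} {c : Color} {m : ℕ}
    (h : (e.state (n+1)).pc R = .xFlip s c m) :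
    (e.state n).pc R = .xFlip s c m ∨
    (e.sched n = R ∧ ∃ j, ¬ j < N ∧ (e.state n).pc R = .x1 s c m j) := by
  rcases eq_or_ne (e.sched n) R with hs | hs
  · have hstep := e.step n
    rw [hs] at hstep
    unfold bwStep at hstep
    split at hstep <;> rename_i hpc <;>
      [ (rcases hstep with hstep|⟨s', hs', hstep⟩); skip; skip; skip;
        skip; skip; skip; skip; skip; skip; skip; (rcases hstep with hstep|hstep);
        skip; skip; skip] <;>
      (try (repeat' split at hstep)) <;>
      rw [hstep] at h <;>
      (try simp only [Function.update_self] at h) <;>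
      (try (first | exact Or.inl h | (simp at h; done)))
    · rename_i hj
      simp only [BWPc.xFlip.injEq] at h
      obtain ⟨rfl, rfl, rfl⟩ := h
      exact Or.inr ⟨hs, _, hj, hpc⟩
  · exact Or.inl ((pc_ne hs) ▸ h)

lemma back_x2 (h : (e.state (n+1)).pc R = .x2) :
    (e.state n).pc R = .x2 ∨
    (e.sched n = R ∧ ∃ s c m,
      (((e.state n).pc R = .cs s c m ∧ m = 1) ∨
       (∃ j, ∃ hj : j < N, (e.state n).pc R = .x1 s c m j ∧
          ((e.state n).token ⟨j, hj⟩).session ≠ 0 ∧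
          ((e.state n).token ⟨j, hj⟩).color = some c.opp) ∨
       (e.state n).pc R = .xFlip s c m)) := by
  rcases eq_or_ne (e.sched n) R with hs | hs
  · have hstep := e.step n
    rw [hs] at hstep
    unfold bwStep at hstep
    split at hstep <;> rename_i hpc <;>
      [ (rcases hstep with hstep|⟨s', hs', hstep⟩); skip; skip; skip;
        skip; skip; skip; skip; skip; skip; skip; (rcases hstep with hstep|hstep);
        skip; skip; skip] <;>
      (try (repeat' split at hstep)) <;>
      rw [hstep] at h <;>
      (try simp only [Function.update_self] at h) <;>
      (try (first | exact Or.inl h | (simp at h; done)))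
    · rename_i hm
      exact Or.inr ⟨hs, _, _, _, Or.inl ⟨hpc, hm⟩⟩
    · rename_i hj hcond
      exact Or.inr ⟨hs, _, _, _, Or.inr (Or.inl ⟨_, hj, hpc, hcond⟩)⟩
    · exact Or.inr ⟨hs, _, _, _, Or.inr (Or.inr hpc)⟩
  · exact Or.inl ((pc_ne hs) ▸ h)

end backs


end BW
end BWsecD5

section BWsecD6
namespace BW



variable {N : ℕ} {e : BWExec N} {R : Fin N} {n : ℕ}
set_option maxHeartbeats 1000000

lemma back_wDiff {s : ℕ} {c : Color} {m j : ℕ}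
    (h : (e.state (n+1)).pc R = .wDiff s c m j) :
    (e.state n).pc R = .wDiff s c m j ∨
    (e.sched n = R ∧ ∃ hj : j < N, (e.state n).pc R = .wB s c m j ∧
      ¬((e.state n).token ⟨j, hj⟩).color = some c) := by
  rcases eq_or_ne (e.sched n) R with hs | hs
  · have hstep := e.step n
    rw [hs] at hstep
    unfold bwStep at hstep
    split at hstep <;> rename_i hpc <;>
      [ (rcases hstep with hstep|⟨s', hs', hstep⟩); skip; skip; skip;
        skip; skip; skip; skip; skip; skip; skip; (rcases hstep with hstep|hstep);
        skip; skip; skip] <;>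
      (try (repeat' split at hstep)) <;>
      rw [hstep] at h <;>
      (try simp only [Function.update_self] at h) <;>
      (try (first | exact Or.inl h | (simp at h; done)))
    · rename_i hj hcond
      simp only [BWPc.wDiff.injEq] at h
      obtain ⟨rfl, rfl, rfl, rfl⟩ := h
      exact Or.inr ⟨hs, hj, hpc, hcond⟩
  · exact Or.inl ((pc_ne hs) ▸ h)

/-- Token changes only at the owner's `d1`, `d4` or `x2` steps. -/
lemma token_step :
    (e.state (n+1)).token R = (e.state n).token R ∨
    (e.sched n = R ∧
      ((∃ s, (e.state n).pc R = .d1 s ∧ (e.state (n+1)).token R = ⟨s, none, 0⟩) ∨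
       (∃ s c m, (e.state n).pc R = .d4 s c m ∧
          (e.state (n+1)).token R = ⟨s, some c, m⟩) ∨
       ((e.state n).pc R = .x2 ∧ (e.state (n+1)).token R = BWTok.init))) := by
  rcases eq_or_ne (e.sched n) R with hs | hs
  · have hstep := e.step n
    rw [hs] at hstep
    unfold bwStep at hstep
    split at hstep <;> rename_i hpc <;>
      [ (rcases hstep with hstep|⟨s', hs', hstep⟩); skip; skip; skip;
        skip; skip; skip; skip; skip; skip; skip; (rcases hstep with hstep|hstep);
        skip; skip; skip] <;>
      (try (repeat' split at hstep)) <;>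
      (try (left; rw [hstep]; done))
    · exact Or.inr ⟨hs, Or.inl ⟨_, hpc, by rw [hstep]; simp⟩⟩
    · exact Or.inr ⟨hs, Or.inr (Or.inl ⟨_, _, _, hpc, by rw [hstep]; simp⟩)⟩
    · exact Or.inr ⟨hs, Or.inr (Or.inr ⟨hpc, by rw [hstep]; simp⟩)⟩
  · exact Or.inl (frame' (e.step n) (fun h => hs h.symm)).2.1

/-- Stages from `scan` onwards (within one invocation, up to the return to
the remainder). -/
def postD3 : BWPc → Prop
  | .remainder => False
  | .d1 _ => False
  | .d2 _ => False
  | .d3 _ => False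
  | _ => True

lemma fwd_postD3 (hp : postD3 ((e.state n).pc R)) :
    postD3 ((e.state (n+1)).pc R) ∨ (e.state (n+1)).pc R = .remainder := by
  rcases eq_or_ne (e.sched n) R with hs | hs
  · have hstep := e.step n
    rw [hs] at hstep
    unfold bwStep at hstep
    split at hstep <;> rename_i hpc <;>
      (try (rw [hpc] at hp; exact hp.elim)) <;>
      [ skip; skip; skip; skip; skip; skip; skip; (rcases hstep with hstep|hstep);
        skip; skip; skip] <;>
      (try (repeat' split at hstep)) <;>
      rw [hstep] <;>
      (try simp only [Function.update_self]) <;>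
      (try rw [hpc]) <;> simp [postD3]
  · rw [pc_ne hs]; exact Or.inl hp


end BW
end BWsecD6

section BWsecD7
namespace BW






variable {N : ℕ} {e : BWExec N} {R : Fin N} {n : ℕ}

lemma two_colors {a b : Color} (h : a ≠ b.opp) : a = b := by
  cases a <;> cases b <;> simp_all [Color.opp]

lemma opp_opp (c : Color) : c.opp.opp = c := by cases c <;> rfl
lemma opp_ne (c : Color) : c.opp ≠ c := by cases c <;> simp [Color.opp]
lemma ne_opp {a b : Color} (h : a ≠ b) : a = b.opp := by
  cases a <;> cases b <;> simp_all [Color.opp]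

/-- Identify the flipper at a flip. -/
lemma flip_flipper {t : ℕ} (h : bwFlipAt e t) :
    ∃ s c m, (e.state t).pc (e.sched t) = .xFlip s c m ∧
      (e.state t).gcolor = c ∧ (e.state (t+1)).gcolor = c.opp := by
  rcases gcolor_step (e.step t) with hg | ⟨s, c, m, hpc, hg⟩
  · exact absurd hg h
  · have hne : (e.state t).gcolor ≠ c.opp := fun hh => h (hg.trans hh.symm)
    exact ⟨s, c, m, hpc, two_colors hne, hg⟩

lemma gcolor_const {a b : ℕ} (hab : a ≤ b) (h : ∀ k, a ≤ k → k < b → ¬ bwFlipAt e k) :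
    (e.state b).gcolor = (e.state a).gcolor := by
  induction b with
  | zero =>
      have : a = 0 := by omega
      rw [this]
  | succ b ih =>
      rcases Nat.lt_or_ge a (b+1) with hlt | hge
      · have hb : a ≤ b := by omega
        have h1 : ¬ bwFlipAt e b := h b hb (by omega)
        have : (e.state (b+1)).gcolor = (e.state b).gcolor := not_not.mp h1
        rw [this]; exact ih hb (fun k hk hk' => h k hk (by omega))
      · have : a = b + 1 := by omega
        rw [this]

lemma exists_flip {a b : ℕ} (hab : a ≤ b) (h : (e.state b).gcolor ≠ (e.state a).gcolor) :
    ∃ k, a ≤ k ∧ k < b ∧ bwFlipAt e k := by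
  by_contra hcon
  push_neg at hcon
  exact h (gcolor_const hab (fun k hk hk' hf => hcon k hk hk' hf))

lemma exists_last_flip {a b k : ℕ} (hk : a ≤ k) (hkb : k < b) (hf : bwFlipAt e k) :
    ∃ k', a ≤ k' ∧ k' < b ∧ bwFlipAt e k' ∧ ∀ j, k' < j → j < b → ¬ bwFlipAt e j := by
  induction b with
  | zero => omega
  | succ b ih =>
      by_cases hb : bwFlipAt e b
      · by_cases hab : a ≤ b
        · exact ⟨b, hab, by omega, hb, by omega⟩
        · refine ⟨k, hk, by omega, hf, ?_⟩
          intro j h1 h2 _; omega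
      · rcases Nat.lt_or_ge k b with hlt | hge
        · obtain ⟨k', h1, h2, h3, h4⟩ := ih hlt
          refine ⟨k', h1, by omega, h3, ?_⟩
          intro j hj1 hj2
          rcases Nat.lt_or_ge j b with hj | hj
          · exact h4 j hj1 hj
          · have : j = b := by omega
            rw [this]; exact hb
        · have : k = b := by omega
          rw [this] at hf; exact absurd hf hb

lemma exists_first_flip {a b k : ℕ} (hk : a ≤ k) (hkb : k < b) (hf : bwFlipAt e k) :
    ∃ k', a ≤ k' ∧ k' < b ∧ bwFlipAt e k' ∧ ∀ j, a ≤ j → j < k' → ¬ bwFlipAt e j := by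
  classical
  have hex : ∃ i, a ≤ i ∧ i < b ∧ bwFlipAt e i := ⟨k, hk, hkb, hf⟩
  obtain ⟨i, hi⟩ := hex
  induction i using Nat.strong_induction_on with
  | _ i ih =>
      by_cases hall : ∀ j, a ≤ j → j < i → ¬ bwFlipAt e j
      · exact ⟨i, hi.1, hi.2.1, hi.2.2, hall⟩
      · push_neg at hall
        obtain ⟨j, hj1, hj2, hj3⟩ := hall
        exact ih j hj2 ⟨hj1, by omega, not_not.mp (not_not_intro hj3) ⟩

/-- Token-writing stages. -/
def tokWriter : BWPc → Prop
  | .d1 _ => True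
  | .d4 _ _ _ => True
  | .x2 => True
  | _ => False

/-- A colored token persists until the owner's `x2` step. -/
lemma token_persist {T : BWTok} {c0 : Color} (hcol : T.color = some c0) :
    ∀ (b a : ℕ), a ≤ b → (e.state a).token R = T →
    (∀ k, a ≤ k → k ≤ b → (e.state k).token R = T) ∨
    (∃ x, a ≤ x ∧ x < b ∧ e.sched x = R ∧ (e.state x).pc R = .x2 ∧
      ∀ k, a ≤ k → k ≤ x → (e.state k).token R = T) := by
  intro b
  induction b with
  | zero =>
      intro a ha hT
      left; intro k h1 h2
      have : k = 0 := by omega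
      subst this
      have : a = 0 := by omega
      subst this; exact hT
  | succ b ih =>
      intro a ha hT
      rcases Nat.lt_or_ge b a with hba | hba
      · left; intro k h1 h2
        have hk : k = a := by omega
        rw [hk]; exact hT
      · rcases ih a hba hT with hconst | ⟨x, h1, h2, h3, h4, h5⟩
        · -- token constant up to b; examine step b
          rcases @token_step N e R b with heq | ⟨hsch, hw⟩
          · left; intro k hk1 hk2
            rcases Nat.lt_or_ge k (b+1) with hk | hk
            · exact hconst k hk1 (by omega)
            · have : k = b + 1 := by omega
              subst this
              rw [heq]; exact hconst b hba (le_refl b)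
          · -- a writer step at b by R
            have hTb : (e.state b).token R = T := hconst b hba (le_refl b)
            have hIb := invAt e b R
            rcases hw with ⟨s, hpc, _⟩ | ⟨s, c, m, hpc, _⟩ | ⟨hpc, _⟩
            · rw [hpc] at hIb
              rw [hTb] at hIb
              simp only [pcInv] at hIb
              rw [hIb.2.1] at hcol
              simp [BWTok.init] at hcol
            · rw [hpc] at hIb
              rw [hTb] at hIb
              simp only [pcInv] at hIb
              have := hIb.2.1
              rw [this] at hcol
              simp at hcol
            · exact Or.inr ⟨b, hba, by omega, hsch, hpc, fun k hk1 hk2 => hconst k hk1 hk2⟩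
        · exact Or.inr ⟨x, h1, by omega, h3, h4, h5⟩

/-- sessions of colored tokens are positive. -/
lemma colored_session_pos {k : ℕ} {s' : ℕ} {c' : Color} {n' : ℕ}
    (h : (e.state k).token R = ⟨s', some c', n'⟩) : s' ≠ 0 := by
  have hI := invAt e k R
  intro h0
  subst h0
  cases hpc : (e.state k).pc R <;> rw [hpc] at hI <;> rw [h] at hI <;>
    simp only [pcInv, BWTok.init, BWTok.mk.injEq] at hI <;>
    first
      | omega
      | exact hI.elim
      | simp at hI

/-- positions with colored token are post-d4 (not remainder, not doorway pre-d5). -/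
lemma colored_not_remainder {k : ℕ} {s' : ℕ} {c' : Color} {n' : ℕ}
    (h : (e.state k).token R = ⟨s', some c', n'⟩) :
    (e.state k).pc R ≠ .remainder := by
  have hI := invAt e k R
  intro hpc
  rw [hpc] at hI
  rw [h] at hI
  simp [pcInv, BWTok.init] at hI



end BW
end BWsecD7

section BWsecD8
namespace BW







variable {N : ℕ} {e : BWExec N} {R : Fin N}

/-- pc is a `scan s c _ _` stage. -/
def isScan (s : ℕ) (c : Color) : BWPc → Prop
  | .scan s' c' _ _ => s' = s ∧ c' = c
  | _ => False

lemma pc_at_zero (i : Fin N) : (e.state 0).pc i = .remainder := by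
  obtain ⟨c0, h0⟩ := e.init
  rw [h0]; rfl

lemma scan_origin : ∀ {t : ℕ} {s : ℕ} {c : Color} {j acc : ℕ},
    (e.state t).pc R = .scan s c j acc →
    ∃ u, u < t ∧ e.sched u = R ∧ (e.state u).pc R = .d3 s ∧ (e.state u).gcolor = c ∧
      (e.state (u+1)).pc R = .scan s c 0 0 ∧
      (∀ n, u < n → n ≤ t → isScan s c ((e.state n).pc R)) ∧
      (1 ≤ acc → ∃ σ, u < σ ∧ σ < t ∧ e.sched σ = R ∧ ∃ j₀ acc₀, ∃ hj : j₀ < N,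
        (e.state σ).pc R = .scan s c j₀ acc₀ ∧
        ∃ s' n', (e.state σ).token ⟨j₀, hj⟩ = ⟨s', some c, n'⟩ ∧
          s' ≠ 0 ∧ s' ≠ s ∧ n' ≤ acc) := by
  intro t
  induction t with
  | zero => intro s c j acc h; rw [pc_at_zero] at h; cases h
  | succ t ih =>
      intro s c j acc h
      rcases back_scan h with hsame | ⟨hs, hcase⟩
      · obtain ⟨u, h1, h2, h3, h4, h5, h6, h7⟩ := ih hsame
        refine ⟨u, by omega, h2, h3, h4, h5, ?_, ?_⟩
        · intro n hn1 hn2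
          rcases Nat.lt_or_ge n (t+1) with hn | hn
          · exact h6 n hn1 (by omega)
          · have : n = t + 1 := by omega
            rw [this, h]; exact ⟨rfl, rfl⟩
        · intro hacc
          obtain ⟨σ, hh1, hh2, rest⟩ := h7 hacc
          exact ⟨σ, hh1, by omega, rest⟩
      · rcases hcase with ⟨h3, h4, rfl, rfl⟩ | ⟨j₀, acc₀, hj, h3, rfl, hacc'⟩
        · refine ⟨t, by omega, hs, h3, h4, h, ?_, by omega⟩
          intro n hn1 hn2
          have : n = t + 1 := by omega
          rw [this, h]; exact ⟨rfl, rfl⟩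
        · obtain ⟨u, h1, h2, hh3, hh4, h5, h6, h7⟩ := ih h3
          refine ⟨u, by omega, h2, hh3, hh4, h5, ?_, ?_⟩
          · intro n hn1 hn2
            rcases Nat.lt_or_ge n (t+1) with hn | hn
            · exact h6 n hn1 (by omega)
            · have : n = t + 1 := by omega
              rw [this, h]; exact ⟨rfl, rfl⟩
          · intro hacc
            by_cases hcond : ((e.state t).token ⟨j₀, hj⟩).color = some c ∧
                ((e.state t).token ⟨j₀, hj⟩).session ≠ 0 ∧
                ((e.state t).token ⟨j₀, hj⟩).session ≠ s
            · subst hacc'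
              rw [if_pos hcond]
              refine ⟨t, by omega, by omega, hs, j₀, acc₀, hj, h3,
                ((e.state t).token ⟨j₀, hj⟩).session,
                ((e.state t).token ⟨j₀, hj⟩).number, ?_, hcond.2.1, hcond.2.2, by omega⟩
              have hc := hcond.1
              cases htok : (e.state t).token ⟨j₀, hj⟩ with
              | mk ts tc tn => rw [htok] at hc; simp at hc; rw [hc]
            · subst hacc'
              rw [if_neg hcond] at hacc ⊢
              obtain ⟨σ, hh1, hh2, rest⟩ := h7 hacc
              exact ⟨σ, hh1, by omega, rest⟩

/-- Doorway stages carrying `(s, c)` from `d3` up to `d4`. -/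
def isDoor (s : ℕ) (c : Color) (m : ℕ) : BWPc → Prop
  | .d3 s' => s' = s
  | .scan s' c' _ _ => s' = s ∧ c' = c
  | .d4 s' c' m' => s' = s ∧ c' = c ∧ m' = m
  | _ => False

lemma d4_origin : ∀ {t : ℕ} {s : ℕ} {c : Color} {m : ℕ},
    (e.state t).pc R = .d4 s c m →
    1 ≤ m ∧ ∃ u, u < t ∧ e.sched u = R ∧ (e.state u).pc R = .d3 s ∧
      (e.state u).gcolor = c ∧ (e.state (u+1)).pc R = .scan s c 0 0 ∧
      (∀ n, u ≤ n → n ≤ t → isDoor s c m ((e.state n).pc R)) ∧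
      (2 ≤ m → ∃ σ, u < σ ∧ σ < t ∧ e.sched σ = R ∧ ∃ j₀ acc₀, ∃ hj : j₀ < N,
        (e.state σ).pc R = .scan s c j₀ acc₀ ∧
        ∃ s' n', (e.state σ).token ⟨j₀, hj⟩ = ⟨s', some c, n'⟩ ∧
          s' ≠ 0 ∧ s' ≠ s ∧ n' < m) := by
  intro t
  induction t with
  | zero => intro s c m h; rw [pc_at_zero] at h; cases h
  | succ t ih =>
      intro s c m h
      rcases back_d4 h with hsame | ⟨hs, j, acc, hjN, h3, rfl⟩
      · obtain ⟨hm, u, h1, h2, hh3, hh4, h5, h6, h7⟩ := ih hsame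
        refine ⟨hm, u, by omega, h2, hh3, hh4, h5, ?_, ?_⟩
        · intro n hn1 hn2
          rcases Nat.lt_or_ge n (t+1) with hn | hn
          · exact h6 n hn1 (by omega)
          · have : n = t + 1 := by omega
            rw [this, h]; exact ⟨rfl, rfl, rfl⟩
        · intro hm2
          obtain ⟨σ, hh1, hh2, rest⟩ := h7 hm2
          exact ⟨σ, hh1, by omega, rest⟩
      · obtain ⟨u, h1, h2, hh3, hh4, h5, h6, h7⟩ := scan_origin h3
        refine ⟨by omega, u, by omega, h2, hh3, hh4, h5, ?_, ?_⟩
        · intro n hn1 hn2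
          rcases Nat.lt_or_ge n (t+1) with hn | hn
          · rcases Nat.eq_or_lt_of_le hn1 with rfl | hlt
            · rw [hh3]; exact rfl
            · have hsc := h6 n hlt (by omega)
              cases hpc : (e.state n).pc R <;> rw [hpc] at hsc <;>
                first
                  | exact hsc.elim
                  | exact ⟨hsc.1, hsc.2⟩
          · have : n = t + 1 := by omega
            rw [this, h]; exact ⟨rfl, rfl, rfl⟩
        · intro hm2
          obtain ⟨σ, hs1, hs2, hs3, j₀, acc₀, hj, hpcσ, s', n', htok, hz, hss, hle⟩ :=
            h7 (by omega)
          exact ⟨σ, hs1, by omega, hs3, j₀, acc₀, hj, hpcσ, s', n', htok, hz, hss, by omega⟩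

/-- d5 origin: the `d4` step. -/
lemma d5_origin : ∀ {t : ℕ} {s : ℕ} {c : Color} {m : ℕ},
    (e.state t).pc R = .d5 s c m →
    ∃ a, a < t ∧ e.sched a = R ∧ (e.state a).pc R = .d4 s c m ∧
      (∀ n, a < n → n ≤ t → (e.state n).pc R = .d5 s c m) := by
  intro t
  induction t with
  | zero => intro s c m h; rw [pc_at_zero] at h; cases h
  | succ t ih =>
      intro s c m h
      rcases back_d5 h with hsame | ⟨hs, h3⟩
      · obtain ⟨a, h1, h2, hh3, h4⟩ := ih hsame
        refine ⟨a, by omega, h2, hh3, ?_⟩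
        intro n hn1 hn2
        rcases Nat.lt_or_ge n (t+1) with hn | hn
        · exact h4 n hn1 (by omega)
        · have : n = t + 1 := by omega
          rw [this]; exact h
      · refine ⟨t, by omega, hs, h3, ?_⟩
        intro n hn1 hn2
        have : n = t + 1 := by omega
        rw [this]; exact h


end BW
end BWsecD8

section BWsecD9
namespace BW







variable {N : ℕ}

def isWait (s : ℕ) (c : Color) (m : ℕ) : BWPc → Prop
  | .w1 s' c' m' _ => s' = s ∧ c' = c ∧ m' = m
  | .wB s' c' m' _ => s' = s ∧ c' = c ∧ m' = m
  | .wSame s' c' m' _ => s' = s ∧ c' = c ∧ m' = m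
  | .wDiff s' c' m' _ => s' = s ∧ c' = c ∧ m' = m
  | _ => False

def w1cond (e : BWExec N) (s : ℕ) (ω : ℕ) (q : Fin N) : Prop :=
  (e.state ω).choosing q = false ∨ ((e.state ω).token q).session = s

def sameCond (e : BWExec N) (R : Fin N) (s : ℕ) (c : Color) (m : ℕ) (ω : ℕ) (q : Fin N) :
    Prop :=
  (m < ((e.state ω).token q).number ∨ (m = ((e.state ω).token q).number ∧ R.val < q.val)) ∨
  ((e.state ω).token q).color ≠ some c ∨ ((e.state ω).token q).session = 0 ∨
  ((e.state ω).token q).session = s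

def PART1 (e : BWExec N) (R : Fin N) (s : ℕ) (c : Color) (m : ℕ) (eD t : ℕ) (q : Fin N) :
    Prop :=
  ∃ ω, eD < ω ∧ ω < t ∧ e.sched ω = R ∧ (e.state ω).pc R = .w1 s c m q.val ∧
    w1cond e s ω q

def PART2 (e : BWExec N) (R : Fin N) (s : ℕ) (c : Color) (m : ℕ) (eD t : ℕ) (q : Fin N) :
    Prop :=
  ∃ ω, eD < ω ∧ ω < t ∧ e.sched ω = R ∧ (e.state ω).pc R = .w1 s c m q.val ∧
    w1cond e s ω q ∧
    ∃ ω2, ω < ω2 ∧ ω2 < t ∧ e.sched ω2 = R ∧ (e.state ω2).pc R = .wB s c m q.val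

def PASS (e : BWExec N) (R : Fin N) (s : ℕ) (c : Color) (m : ℕ) (eD t : ℕ) (q : Fin N) :
    Prop :=
  ∃ ω, eD < ω ∧ ω < t ∧ e.sched ω = R ∧ (e.state ω).pc R = .w1 s c m q.val ∧
    w1cond e s ω q ∧
    ∃ ω2, ω < ω2 ∧ ω2 < t ∧ e.sched ω2 = R ∧ (e.state ω2).pc R = .wB s c m q.val ∧
      (((e.state ω2).token q).color = some c →
        ∃ ω3, ω2 < ω3 ∧ ω3 < t ∧ e.sched ω3 = R ∧ (e.state ω3).pc R = .wSame s c m q.val ∧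
          sameCond e R s c m ω3 q)

variable {e : BWExec N} {R : Fin N}

lemma PASS_mono {s c m eD t t' q} (h : PASS e R s c m eD t q) (ht : t ≤ t') :
    PASS e R s c m eD t' q := by
  obtain ⟨ω, h1, h2, h3, h4, h5, ω2, g1, g2, g3, g4, g5⟩ := h
  exact ⟨ω, h1, by omega, h3, h4, h5, ω2, g1, by omega, g3, g4, fun hcol => by
    obtain ⟨ω3, f1, f2, f3, f4, f5⟩ := g5 hcol
    exact ⟨ω3, f1, by omega, f3, f4, f5⟩⟩

lemma wait_origin : ∀ {t : ℕ} {s : ℕ} {c : Color} {m j : ℕ},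
    ((e.state t).pc R = .w1 s c m j ∨ (e.state t).pc R = .wB s c m j ∨
     (e.state t).pc R = .wSame s c m j ∨ (e.state t).pc R = .wDiff s c m j) →
    ∃ eD, eD < t ∧ e.sched eD = R ∧ (e.state eD).pc R = .d5 s c m ∧
      (e.state (eD+1)).pc R = .w1 s c m 0 ∧
      (∀ n, eD < n → n ≤ t → isWait s c m ((e.state n).pc R)) ∧
      (∀ j', j' < j → ∀ hj : j' < N, PASS e R s c m eD t ⟨j', hj⟩) ∧
      ((e.state t).pc R = .wB s c m j → ∃ hj : j < N, PART1 e R s c m eD t ⟨j, hj⟩) ∧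
      ((e.state t).pc R = .wSame s c m j → ∃ hj : j < N,
        ∃ ω, eD < ω ∧ ω < t ∧ e.sched ω = R ∧ (e.state ω).pc R = .w1 s c m j ∧
          w1cond e s ω ⟨j, hj⟩ ∧
          ∃ ω2, ω < ω2 ∧ ω2 < t ∧ e.sched ω2 = R ∧ (e.state ω2).pc R = .wB s c m j ∧
            ((e.state ω2).token ⟨j, hj⟩).color = some c) ∧
      ((e.state t).pc R = .wDiff s c m j → ∃ hj : j < N,
        ∃ ω, eD < ω ∧ ω < t ∧ e.sched ω = R ∧ (e.state ω).pc R = .w1 s c m j ∧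
          w1cond e s ω ⟨j, hj⟩ ∧
          ∃ ω2, ω < ω2 ∧ ω2 < t ∧ e.sched ω2 = R ∧ (e.state ω2).pc R = .wB s c m j ∧
            ¬ ((e.state ω2).token ⟨j, hj⟩).color = some c) := by
  intro t
  induction t with
  | zero =>
      intro s c m j h
      rcases h with h|h|h|h <;> (rw [pc_at_zero] at h; cases h)
  | succ t ih =>
      intro s c m j h
      rcases h with h|h|h|h
      · -- target w1
        rcases back_w1 h with hsame | ⟨hs, hcase⟩
        · obtain ⟨eD, e1, e2, e3, e4, e5, e6, e7, e8, e9⟩ := ih (Or.inl hsame)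
          refine ⟨eD, by omega, e2, e3, e4, ?_, ?_, ?_, ?_, ?_⟩
          · intro n h1 h2
            rcases Nat.lt_or_ge n (t+1) with hn|hn
            · exact e5 n h1 (by omega)
            · have hn' : n = t+1 := by omega
              rw [hn', h]; exact ⟨rfl, rfl, rfl⟩
          · intro j' hj' hjN; exact PASS_mono (e6 j' hj' hjN) (by omega)
          · intro hc; rw [h] at hc; cases hc
          · intro hc; rw [h] at hc; cases hc
          · intro hc; rw [h] at hc; cases hc
        · rcases hcase with ⟨rfl, hd5⟩ | ⟨j₀, hj₀, rfl, hbr⟩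
          · refine ⟨t, by omega, hs, hd5, h, ?_, ?_, ?_, ?_, ?_⟩
            · intro n h1 h2
              have hn' : n = t+1 := by omega
              rw [hn', h]; exact ⟨rfl, rfl, rfl⟩
            · intro j' hj' _; omega
            · intro hc; rw [h] at hc; cases hc
            · intro hc; rw [h] at hc; cases hc
            · intro hc; rw [h] at hc; cases hc
          · rcases hbr with ⟨hws, hcond⟩ | ⟨hwd, hcond⟩
            · obtain ⟨eD, e1, e2, e3, e4, e5, e6, e7, e8, e9⟩ :=
                ih (Or.inr (Or.inr (Or.inl hws)))
              obtain ⟨hj, ω, f1, f2, f3, f4, f5, ω2, g1, g2, g3, g4, g5⟩ := e8 hws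
              have hpass : PASS e R s c m eD (t+1) ⟨j₀, hj⟩ :=
                ⟨ω, f1, by omega, f3, f4, f5, ω2, g1, by omega, g3, g4,
                  fun _ => ⟨t, g2, by omega, hs, hws, hcond⟩⟩
              refine ⟨eD, by omega, e2, e3, e4, ?_, ?_, ?_, ?_, ?_⟩
              · intro n h1 h2
                rcases Nat.lt_or_ge n (t+1) with hn|hn
                · exact e5 n h1 (by omega)
                · have hn' : n = t+1 := by omega
                  rw [hn', h]; exact ⟨rfl, rfl, rfl⟩
              · intro j' hj' hjN
                rcases Nat.lt_or_ge j' j₀ with hlt | hge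
                · exact PASS_mono (e6 j' hlt hjN) (by omega)
                · have hj'' : j' = j₀ := by omega
                  subst hj''; exact hpass
              · intro hc; rw [h] at hc; cases hc
              · intro hc; rw [h] at hc; cases hc
              · intro hc; rw [h] at hc; cases hc
            · obtain ⟨eD, e1, e2, e3, e4, e5, e6, e7, e8, e9⟩ :=
                ih (Or.inr (Or.inr (Or.inr hwd)))
              obtain ⟨hj, ω, f1, f2, f3, f4, f5, ω2, g1, g2, g3, g4, g5⟩ := e9 hwd
              have hpass : PASS e R s c m eD (t+1) ⟨j₀, hj⟩ :=
                ⟨ω, f1, by omega, f3, f4, f5, ω2, g1, by omega, g3, g4,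
                  fun hcol => absurd hcol g5⟩
              refine ⟨eD, by omega, e2, e3, e4, ?_, ?_, ?_, ?_, ?_⟩
              · intro n h1 h2
                rcases Nat.lt_or_ge n (t+1) with hn|hn
                · exact e5 n h1 (by omega)
                · have hn' : n = t+1 := by omega
                  rw [hn', h]; exact ⟨rfl, rfl, rfl⟩
              · intro j' hj' hjN
                rcases Nat.lt_or_ge j' j₀ with hlt | hge
                · exact PASS_mono (e6 j' hlt hjN) (by omega)
                · have hj'' : j' = j₀ := by omega
                  subst hj''; exact hpass
              · intro hc; rw [h] at hc; cases hc
              · intro hc; rw [h] at hc; cases hc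
              · intro hc; rw [h] at hc; cases hc
      · -- target wB
        rcases back_wB h with hsame | ⟨hs, hj, hw1, hcond⟩
        · obtain ⟨eD, e1, e2, e3, e4, e5, e6, e7, e8, e9⟩ := ih (Or.inr (Or.inl hsame))
          refine ⟨eD, by omega, e2, e3, e4, ?_, ?_, ?_, ?_, ?_⟩
          · intro n h1 h2
            rcases Nat.lt_or_ge n (t+1) with hn|hn
            · exact e5 n h1 (by omega)
            · have hn' : n = t+1 := by omega
              rw [hn', h]; exact ⟨rfl, rfl, rfl⟩
          · intro j' hj' hjN; exact PASS_mono (e6 j' hj' hjN) (by omega)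
          · intro _
            obtain ⟨hj, ω, f1, f2, f3, f4, f5⟩ := e7 hsame
            exact ⟨hj, ω, f1, by omega, f3, f4, f5⟩
          · intro hc; rw [h] at hc; cases hc
          · intro hc; rw [h] at hc; cases hc
        · obtain ⟨eD, e1, e2, e3, e4, e5, e6, e7, e8, e9⟩ := ih (Or.inl hw1)
          refine ⟨eD, by omega, e2, e3, e4, ?_, ?_, ?_, ?_, ?_⟩
          · intro n h1 h2
            rcases Nat.lt_or_ge n (t+1) with hn|hn
            · exact e5 n h1 (by omega)
            · have hn' : n = t+1 := by omega
              rw [hn', h]; exact ⟨rfl, rfl, rfl⟩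
          · intro j' hj' hjN; exact PASS_mono (e6 j' hj' hjN) (by omega)
          · intro _
            exact ⟨hj, t, e1, by omega, hs, hw1, hcond⟩
          · intro hc; rw [h] at hc; cases hc
          · intro hc; rw [h] at hc; cases hc
      · -- target wSame
        rcases back_wSame h with hsame | ⟨hs, hj, hwB, hcol⟩
        · obtain ⟨eD, e1, e2, e3, e4, e5, e6, e7, e8, e9⟩ :=
            ih (Or.inr (Or.inr (Or.inl hsame)))
          refine ⟨eD, by omega, e2, e3, e4, ?_, ?_, ?_, ?_, ?_⟩
          · intro n h1 h2
            rcases Nat.lt_or_ge n (t+1) with hn|hn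
            · exact e5 n h1 (by omega)
            · have hn' : n = t+1 := by omega
              rw [hn', h]; exact ⟨rfl, rfl, rfl⟩
          · intro j' hj' hjN; exact PASS_mono (e6 j' hj' hjN) (by omega)
          · intro hc; rw [h] at hc; cases hc
          · intro _
            obtain ⟨hj, ω, f1, f2, f3, f4, f5, ω2, g1, g2, g3, g4, g5⟩ := e8 hsame
            exact ⟨hj, ω, f1, by omega, f3, f4, f5, ω2, g1, by omega, g3, g4, g5⟩
          · intro hc; rw [h] at hc; cases hc
        · obtain ⟨eD, e1, e2, e3, e4, e5, e6, e7, e8, e9⟩ := ih (Or.inr (Or.inl hwB))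
          obtain ⟨hj', ω, f1, f2, f3, f4, f5⟩ := e7 hwB
          refine ⟨eD, by omega, e2, e3, e4, ?_, ?_, ?_, ?_, ?_⟩
          · intro n h1 h2
            rcases Nat.lt_or_ge n (t+1) with hn|hn
            · exact e5 n h1 (by omega)
            · have hn' : n = t+1 := by omega
              rw [hn', h]; exact ⟨rfl, rfl, rfl⟩
          · intro j' hj' hjN; exact PASS_mono (e6 j' hj' hjN) (by omega)
          · intro hc; rw [h] at hc; cases hc
          · intro _
            exact ⟨hj, ω, f1, by omega, f3, f4, f5, t, f2, by omega, hs, hwB, hcol⟩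
          · intro hc; rw [h] at hc; cases hc
      · -- target wDiff
        rcases back_wDiff h with hsame | ⟨hs, hj, hwB, hcol⟩
        · obtain ⟨eD, e1, e2, e3, e4, e5, e6, e7, e8, e9⟩ :=
            ih (Or.inr (Or.inr (Or.inr hsame)))
          refine ⟨eD, by omega, e2, e3, e4, ?_, ?_, ?_, ?_, ?_⟩
          · intro n h1 h2
            rcases Nat.lt_or_ge n (t+1) with hn|hn
            · exact e5 n h1 (by omega)
            · have hn' : n = t+1 := by omega
              rw [hn', h]; exact ⟨rfl, rfl, rfl⟩
          · intro j' hj' hjN; exact PASS_mono (e6 j' hj' hjN) (by omega)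
          · intro hc; rw [h] at hc; cases hc
          · intro hc; rw [h] at hc; cases hc
          · intro _
            obtain ⟨hj, ω, f1, f2, f3, f4, f5, ω2, g1, g2, g3, g4, g5⟩ := e9 hsame
            exact ⟨hj, ω, f1, by omega, f3, f4, f5, ω2, g1, by omega, g3, g4, g5⟩
        · obtain ⟨eD, e1, e2, e3, e4, e5, e6, e7, e8, e9⟩ := ih (Or.inr (Or.inl hwB))
          obtain ⟨hj', ω, f1, f2, f3, f4, f5⟩ := e7 hwB
          refine ⟨eD, by omega, e2, e3, e4, ?_, ?_, ?_, ?_, ?_⟩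
          · intro n h1 h2
            rcases Nat.lt_or_ge n (t+1) with hn|hn
            · exact e5 n h1 (by omega)
            · have hn' : n = t+1 := by omega
              rw [hn', h]; exact ⟨rfl, rfl, rfl⟩
          · intro j' hj' hjN; exact PASS_mono (e6 j' hj' hjN) (by omega)
          · intro hc; rw [h] at hc; cases hc
          · intro hc; rw [h] at hc; cases hc
          · intro _
            exact ⟨hj, ω, f1, by omega, f3, f4, f5, t, f2, by omega, hs, hwB, hcol⟩


end BW
end BWsecD9

section BWsecD10a
namespace BW








variable {N : ℕ} {e : BWExec N} {R : Fin N}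

lemma d4_fwd {a : ℕ} {s : ℕ} {c : Color} {m : ℕ}
    (hs : e.sched a = R) (hpc : (e.state a).pc R = .d4 s c m) :
    (e.state (a+1)).token R = ⟨s, some c, m⟩ ∧ (e.state (a+1)).pc R = .d5 s c m := by
  have hstep := e.step a
  rw [hs] at hstep
  unfold bwStep at hstep
  split at hstep <;> rename_i hpc' <;> rw [hpc] at hpc' <;>
    first
      | (simp at hpc'; done)
      | (obtain ⟨rfl, rfl, rfl⟩ := by simpa using hpc'
         rw [hstep]; simp)

lemma x2_fwd {n : ℕ} (hs : e.sched n = R) (hpc : (e.state n).pc R = .x2) :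
    (e.state (n+1)).pc R = .remainder := by
  have hstep := e.step n
  rw [hs] at hstep
  unfold bwStep at hstep
  split at hstep <;> rename_i hpc' <;> rw [hpc] at hpc' <;>
    first
      | (simp at hpc'; done)
      | (rw [hstep]; simp)

/-- A colored token persists as long as the process avoids remainder, d1 and d4. -/
lemma token_const {a : ℕ} {s : ℕ} {c : Color} {m : ℕ} {T : ℕ}
    (h0 : (e.state (a+1)).token R = ⟨s, some c, m⟩)
    (hprof : ∀ n, a < n → n ≤ T → (e.state n).pc R ≠ .remainder ∧
      (∀ s', (e.state n).pc R ≠ .d1 s') ∧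
      (∀ s' c' m', (e.state n).pc R ≠ .d4 s' c' m')) :
    ∀ n, a < n → n ≤ T → (e.state n).token R = ⟨s, some c, m⟩ := by
  intro n
  induction n with
  | zero => omega
  | succ n ih =>
      intro h1 h2
      rcases Nat.lt_or_ge a n with han | han
      · have hn := ih han (by omega)
        rcases @token_step N e R n with heq | ⟨hsch, hw⟩
        · rw [heq]; exact hn
        · rcases hw with ⟨s', hpc, -⟩ | ⟨s', c', m', hpc, -⟩ | ⟨hpc, -⟩
          · exact absurd hpc ((hprof n han (by omega)).2.1 s')
          · exact absurd hpc ((hprof n han (by omega)).2.2 s' c' m')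
          · have := x2_fwd hsch hpc
            exact absurd this (hprof (n+1) (by omega) h2).1
      · have : n = a := by omega
        rw [this]; exact h0

/-- cs origin: the loop-exit step. -/
lemma cs_origin : ∀ {t : ℕ} {s : ℕ} {c : Color} {m : ℕ},
    (e.state t).pc R = .cs s c m →
    ∃ γ, γ < t ∧ e.sched γ = R ∧ (∃ jN, ¬ jN < N ∧ (e.state γ).pc R = .w1 s c m jN) ∧
      (∀ n, γ < n → n ≤ t → (e.state n).pc R = .cs s c m) := by
  intro t
  induction t with
  | zero => intro s c m h; rw [pc_at_zero] at h; cases h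
  | succ t ih =>
      intro s c m h
      rcases back_cs h with hsame | ⟨hs, jN, hjN, hw⟩
      · obtain ⟨γ, h1, h2, h3, h4⟩ := ih hsame
        refine ⟨γ, by omega, h2, h3, ?_⟩
        intro n hn1 hn2
        rcases Nat.lt_or_ge n (t+1) with hn | hn
        · exact h4 n hn1 (by omega)
        · have : n = t + 1 := by omega
          rw [this]; exact h
      · refine ⟨t, by omega, hs, ⟨jN, hjN, hw⟩, ?_⟩
        intro n hn1 hn2
        have : n = t + 1 := by omega
        rw [this]; exact h

def isX1 (s : ℕ) (c : Color) (m : ℕ) : BWPc → Prop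
  | .x1 s' c' m' _ => s' = s ∧ c' = c ∧ m' = m
  | _ => False

lemma x1_origin : ∀ {t : ℕ} {s : ℕ} {c : Color} {m j : ℕ},
    (e.state t).pc R = .x1 s c m j →
    m ≠ 1 ∧
    ∃ γ2, γ2 < t ∧ e.sched γ2 = R ∧ (e.state γ2).pc R = .cs s c m ∧
      (e.state (γ2+1)).pc R = .x1 s c m 0 ∧
      (∀ n, γ2 < n → n ≤ t → isX1 s c m ((e.state n).pc R)) ∧
      (∀ j', j' < j → ∀ hj : j' < N, ∃ σ, γ2 < σ ∧ σ < t ∧ e.sched σ = R ∧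
        (e.state σ).pc R = .x1 s c m j' ∧
        ¬(((e.state σ).token ⟨j', hj⟩).session ≠ 0 ∧
          ((e.state σ).token ⟨j', hj⟩).color = some c.opp)) := by
  intro t
  induction t with
  | zero => intro s c m j h; rw [pc_at_zero] at h; cases h
  | succ t ih =>
      intro s c m j h
      rcases back_x1 h with hsame | ⟨hs, hcase⟩
      · obtain ⟨hm, γ2, h1, h2, h3, h4, h5, h6⟩ := ih hsame
        refine ⟨hm, γ2, by omega, h2, h3, h4, ?_, ?_⟩
        · intro n hn1 hn2
          rcases Nat.lt_or_ge n (t+1) with hn | hn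
          · exact h5 n hn1 (by omega)
          · have : n = t + 1 := by omega
            rw [this, h]; exact ⟨rfl, rfl, rfl⟩
        · intro j' hj' hjN
          obtain ⟨σ, f1, f2, f3, f4, f5⟩ := h6 j' hj' hjN
          exact ⟨σ, f1, by omega, f3, f4, f5⟩
      · rcases hcase with ⟨rfl, hcs, hm⟩ | ⟨j₀, hj₀, rfl, hx1, hcond⟩
        · refine ⟨hm, t, by omega, hs, hcs, h, ?_, ?_⟩
          · intro n hn1 hn2
            have : n = t + 1 := by omega
            rw [this, h]; exact ⟨rfl, rfl, rfl⟩
          · intro j' hj' _; omega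
        · obtain ⟨hm, γ2, h1, h2, h3, h4, h5, h6⟩ := ih hx1
          refine ⟨hm, γ2, by omega, h2, h3, h4, ?_, ?_⟩
          · intro n hn1 hn2
            rcases Nat.lt_or_ge n (t+1) with hn | hn
            · exact h5 n hn1 (by omega)
            · have : n = t + 1 := by omega
              rw [this, h]; exact ⟨rfl, rfl, rfl⟩
          · intro j' hj' hjN
            rcases Nat.lt_or_ge j' j₀ with hlt | hge
            · obtain ⟨σ, f1, f2, f3, f4, f5⟩ := h6 j' hlt hjN
              exact ⟨σ, f1, by omega, f3, f4, f5⟩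
            · have hj'' : j' = j₀ := by omega
              subst hj''
              exact ⟨t, h1, by omega, hs, hx1, hcond⟩

lemma xFlip_origin : ∀ {t : ℕ} {s : ℕ} {c : Color} {m : ℕ},
    (e.state t).pc R = .xFlip s c m →
    ∃ γ3, γ3 < t ∧ e.sched γ3 = R ∧ (∃ jN, ¬ jN < N ∧ (e.state γ3).pc R = .x1 s c m jN) ∧
      (∀ n, γ3 < n → n ≤ t → (e.state n).pc R = .xFlip s c m) := by
  intro t
  induction t with
  | zero => intro s c m h; rw [pc_at_zero] at h; cases h
  | succ t ih =>
      intro s c m h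
      rcases back_xFlip h with hsame | ⟨hs, jN, hjN, hx⟩
      · obtain ⟨γ3, h1, h2, h3, h4⟩ := ih hsame
        refine ⟨γ3, by omega, h2, h3, ?_⟩
        intro n hn1 hn2
        rcases Nat.lt_or_ge n (t+1) with hn | hn
        · exact h4 n hn1 (by omega)
        · have : n = t + 1 := by omega
          rw [this]; exact h
      · refine ⟨t, by omega, hs, ⟨jN, hjN, hx⟩, ?_⟩
        intro n hn1 hn2
        have : n = t + 1 := by omega
        rw [this]; exact h

lemma x2_origin : ∀ {t : ℕ},
    (e.state t).pc R = .x2 →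
    ∃ w, w < t ∧ e.sched w = R ∧
      (∀ n, w < n → n ≤ t → (e.state n).pc R = .x2) ∧
      ∃ s c m,
        (((e.state w).pc R = .cs s c m ∧ m = 1) ∨
         (∃ j, ∃ hj : j < N, (e.state w).pc R = .x1 s c m j ∧
            ((e.state w).token ⟨j, hj⟩).session ≠ 0 ∧
            ((e.state w).token ⟨j, hj⟩).color = some c.opp) ∨
         (e.state w).pc R = .xFlip s c m) := by
  intro t
  induction t with
  | zero => intro h; rw [pc_at_zero] at h; cases h
  | succ t ih =>
      intro h
      rcases back_x2 h with hsame | ⟨hs, s, c, m, hcase⟩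
      · obtain ⟨w, h1, h2, h3, h4⟩ := ih hsame
        refine ⟨w, by omega, h2, ?_, h4⟩
        intro n hn1 hn2
        rcases Nat.lt_or_ge n (t+1) with hn | hn
        · exact h3 n hn1 (by omega)
        · have : n = t + 1 := by omega
          rw [this]; exact h
      · refine ⟨t, by omega, hs, ?_, s, c, m, hcase⟩
        intro n hn1 hn2
        have : n = t + 1 := by omega
        rw [this]; exact h


end BW
end BWsecD10a

section BWsecD10b
namespace BW









variable {N : ℕ}

lemma isDoor_excl {s c m p} (h : isDoor s c m p) :
    p ≠ BWPc.remainder := by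
  cases p <;> simp_all [isDoor]

lemma isWait_excl {s c m p} (h : isWait s c m p) :
    p ≠ BWPc.remainder ∧ (∀ s', p ≠ BWPc.d1 s') ∧
      (∀ s' c' m', p ≠ BWPc.d4 s' c' m') := by
  cases p <;> simp_all [isWait]

lemma isX1_excl {s c m p} (h : isX1 s c m p) :
    p ≠ BWPc.remainder ∧ (∀ s', p ≠ BWPc.d1 s') ∧
      (∀ s' c' m', p ≠ BWPc.d4 s' c' m') := by
  cases p <;> simp_all [isX1]

/-- Core facts about one invocation of `R` with parameters `(s,c,m)`, valid up to
time `T`, with `u` the line-5 step, `a` the `d4` step, `eD` the `d5` step and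
`γ` an upper bound for the waiting-room pass steps. -/
def PkgCore (e : BWExec N) (R : Fin N) (T : ℕ) (s : ℕ) (c : Color) (m : ℕ)
    (u a eD γ : ℕ) : Prop :=
  e.sched u = R ∧ (e.state u).pc R = .d3 s ∧ (e.state u).gcolor = c ∧
  (e.state (u+1)).pc R = .scan s c 0 0 ∧
  e.sched a = R ∧ (e.state a).pc R = .d4 s c m ∧
  (∀ n, u ≤ n → n ≤ a → isDoor s c m ((e.state n).pc R)) ∧
  (∀ n, a < n → n ≤ T → (e.state n).token R = ⟨s, some c, m⟩) ∧
  (∀ j', ∀ hj : j' < N, PASS e R s c m eD γ ⟨j', hj⟩) ∧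
  (∀ n, u < n → n ≤ T → (e.state n).pc R ≠ .remainder) ∧
  (∀ n, a < n → n ≤ T → (e.state n).pc R ≠ .remainder ∧
    (∀ s', (e.state n).pc R ≠ .d1 s') ∧
    (∀ s' c' m', (e.state n).pc R ≠ .d4 s' c' m')) ∧
  (2 ≤ m → ∃ σ, u < σ ∧ σ < a ∧ e.sched σ = R ∧ ∃ j₀ acc₀, ∃ hj : j₀ < N,
    (e.state σ).pc R = .scan s c j₀ acc₀ ∧
    ∃ s' n', (e.state σ).token ⟨j₀, hj⟩ = ⟨s', some c, n'⟩ ∧ s' ≠ 0 ∧ s' ≠ s ∧ n' < m)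

variable {e : BWExec N} {R : Fin N}

lemma core_extend {T T' s c m u a eD γ} (hc : PkgCore e R T s c m u a eD γ)
    (hTT : T ≤ T')
    (hext : ∀ n, T < n → n ≤ T' → (e.state n).pc R ≠ .remainder ∧
      (∀ s', (e.state n).pc R ≠ .d1 s') ∧
      (∀ s' c' m', (e.state n).pc R ≠ .d4 s' c' m'))
    (hua : u < a) :
    PkgCore e R T' s c m u a eD γ := by
  obtain ⟨c1, c2, c3, c4, c5, c6, c7, c8, c9, c10, c11, c12⟩ := hc
  have hexcl : ∀ n, a < n → n ≤ T' → (e.state n).pc R ≠ .remainder ∧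
      (∀ s', (e.state n).pc R ≠ .d1 s') ∧
      (∀ s' c' m', (e.state n).pc R ≠ .d4 s' c' m') := by
    intro n h1 h2
    rcases Nat.lt_or_ge T n with hn | hn
    · exact hext n hn h2
    · exact c11 n h1 hn
  have htok : ∀ n, a < n → n ≤ T' → (e.state n).token R = ⟨s, some c, m⟩ :=
    token_const (d4_fwd c5 c6).1 hexcl
  refine ⟨c1, c2, c3, c4, c5, c6, c7, htok, c9, ?_, hexcl, c12⟩
  intro n h1 h2
  rcases Nat.lt_or_ge a n with hn | hn
  · exact (hexcl n hn h2).1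
  · exact isDoor_excl (c7 n (by omega) hn)

lemma cs_core {T : ℕ} {s : ℕ} {c : Color} {m : ℕ} (h : (e.state T).pc R = .cs s c m) :
    1 ≤ m ∧ ∃ u a eD γ, u < a ∧ a < eD ∧ eD < γ ∧ γ < T ∧
      PkgCore e R T s c m u a eD γ := by
  obtain ⟨γ, hγT, hγs, ⟨jN, hjN, hw⟩, hcsprof⟩ := cs_origin h
  obtain ⟨eD, g1, g2, g3, g4, g5, g6, -, -, -⟩ := wait_origin (Or.inl hw)
  obtain ⟨a, f1, f2, f3, f4⟩ := d5_origin g3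
  obtain ⟨hm, u, d1, d2, d3c, d4c, d5c, d6, d7⟩ := d4_origin f3
  have htok1 := (d4_fwd f2 f3).1
  have hexcl : ∀ n, a < n → n ≤ T → (e.state n).pc R ≠ .remainder ∧
      (∀ s', (e.state n).pc R ≠ .d1 s') ∧
      (∀ s' c' m', (e.state n).pc R ≠ .d4 s' c' m') := by
    intro n h1 h2
    rcases Nat.lt_or_ge eD n with hn | hn
    · rcases Nat.lt_or_ge γ n with hn2 | hn2
      · rw [hcsprof n hn2 h2]; refine ⟨by simp, by simp, by simp⟩
      · exact isWait_excl (g5 n hn hn2)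
    · rw [f4 n h1 hn]; refine ⟨by simp, by simp, by simp⟩
  have htok := token_const htok1 hexcl
  refine ⟨hm, u, a, eD, γ, d1, f1, g1, hγT,
    d2, d3c, d4c, d5c, f2, f3, d6, htok, ?_, ?_, hexcl, d7⟩
  · intro j' hj
    exact g6 j' (by omega) hj
  · intro n h1 h2
    rcases Nat.lt_or_ge a n with hn | hn
    · exact (hexcl n hn h2).1
    · exact isDoor_excl (d6 n (by omega) hn)

lemma x1_core {T : ℕ} {s : ℕ} {c : Color} {m j : ℕ}
    (h : (e.state T).pc R = .x1 s c m j) :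
    2 ≤ m ∧ ∃ u a eD γ, u < a ∧ a < eD ∧ eD < γ ∧ γ < T ∧
      PkgCore e R T s c m u a eD γ := by
  obtain ⟨hm1, γ2, k1, k2, k3, k4, k5, k6⟩ := x1_origin h
  obtain ⟨hm, u, a, eD, γ, o1, o2, o3, o4, hcore⟩ := cs_core k3
  have hext : ∀ n, γ2 < n → n ≤ T → (e.state n).pc R ≠ .remainder ∧
      (∀ s', (e.state n).pc R ≠ .d1 s') ∧
      (∀ s' c' m', (e.state n).pc R ≠ .d4 s' c' m') := by
    intro n hn1 hn2
    exact isX1_excl (k5 n hn1 hn2)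
  exact ⟨by omega, u, a, eD, γ, o1, o2, o3, by omega,
    core_extend hcore (by omega) hext o1⟩

def XPkg (e : BWExec N) (R : Fin N) (T : ℕ) (s : ℕ) (c : Color) (m : ℕ) : Prop :=
  2 ≤ m ∧ ∃ u a eD γ γ2, u < a ∧ a < eD ∧ eD < γ ∧ γ < γ2 ∧ γ2 < T ∧
    PkgCore e R T s c m u a eD γ ∧
    ∀ j', ∀ hj : j' < N, ∃ σ', γ2 < σ' ∧ σ' < T ∧ e.sched σ' = R ∧
      (e.state σ').pc R = .x1 s c m j' ∧
      ¬(((e.state σ').token ⟨j', hj⟩).session ≠ 0 ∧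
        ((e.state σ').token ⟨j', hj⟩).color = some c.opp)

lemma xflip_pkg {T : ℕ} {s : ℕ} {c : Color} {m : ℕ}
    (h : (e.state T).pc R = .xFlip s c m) : XPkg e R T s c m := by
  obtain ⟨γ3, h1, h2, ⟨jN, hjN, hx⟩, hxfprof⟩ := xFlip_origin h
  obtain ⟨hm1, γ2, k1, k2, k3, k4, k5, k6⟩ := x1_origin hx
  obtain ⟨hm, u, a, eD, γ, o1, o2, o3, o4, hcore⟩ := cs_core k3
  have hext : ∀ n, γ2 < n → n ≤ T → (e.state n).pc R ≠ .remainder ∧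
      (∀ s', (e.state n).pc R ≠ .d1 s') ∧
      (∀ s' c' m', (e.state n).pc R ≠ .d4 s' c' m') := by
    intro n hn1 hn2
    rcases Nat.lt_or_ge γ3 n with hn | hn
    · rw [hxfprof n hn hn2]
      refine ⟨by simp, fun _ => by simp, fun _ _ _ => by simp⟩
    · exact isX1_excl (k5 n hn1 hn)
  refine ⟨by omega, u, a, eD, γ, γ2, o1, o2, o3, by omega, by omega,
    core_extend hcore (by omega) hext o1, ?_⟩
  intro j' hj
  obtain ⟨σ', f1, f2, f3, f4, f5⟩ := k6 j' (by omega) hj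
  exact ⟨σ', f1, by omega, f3, f4, f5⟩

lemma x2_pkg {x : ℕ} {s : ℕ} {c : Color} {m : ℕ}
    (hpc : (e.state x).pc R = .x2)
    (htok : (e.state x).token R = ⟨s, some c, m⟩) :
    1 ≤ m ∧ ∃ u a eD γ, u < a ∧ a < eD ∧ eD < γ ∧ γ < x ∧
      PkgCore e R x s c m u a eD γ := by
  obtain ⟨w, h1, h2, hprof, s₁, c₁, m₁, hcase⟩ := x2_origin hpc
  have hcw : 1 ≤ m₁ ∧ ∃ u a eD γ, u < a ∧ a < eD ∧ eD < γ ∧ γ < w ∧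
      PkgCore e R w s₁ c₁ m₁ u a eD γ := by
    rcases hcase with ⟨hcs, -⟩ | ⟨j, hj, hx1, -⟩ | hxf
    · exact cs_core hcs
    · obtain ⟨hm2, rest⟩ := x1_core hx1
      exact ⟨by omega, rest⟩
    · obtain ⟨hm2, u, a, eD, γ, γ2, o1, o2, o3, o4, o5, hcore, -⟩ := xflip_pkg hxf
      exact ⟨by omega, u, a, eD, γ, o1, o2, o3, by omega, hcore⟩
  obtain ⟨hm, u, a, eD, γ, o1, o2, o3, o4, hcore⟩ := hcw
  have hext : ∀ n, w < n → n ≤ x → (e.state n).pc R ≠ .remainder ∧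
      (∀ s', (e.state n).pc R ≠ .d1 s') ∧
      (∀ s' c' m', (e.state n).pc R ≠ .d4 s' c' m') := by
    intro n hn1 hn2
    rw [hprof n hn1 hn2]
    refine ⟨by simp, fun _ => by simp, fun _ _ _ => by simp⟩
  have hcore' := core_extend hcore (by omega) hext o1
  have htk : (e.state x).token R = ⟨s₁, some c₁, m₁⟩ := by
    obtain ⟨-, -, -, -, c5, c6, -, c8, -⟩ := hcore'
    exact c8 x (by omega) (le_refl x)
  have heq : (⟨s, some c, m⟩ : BWTok) = ⟨s₁, some c₁, m₁⟩ := htok.symm.trans htk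
  simp only [BWTok.mk.injEq, Option.some.injEq] at heq
  obtain ⟨hq1, hq2, hq3⟩ := heq
  subst hq1; subst hq2; subst hq3
  exact ⟨hm, u, a, eD, γ, o1, o2, o3, by omega, hcore'⟩



end BW
end BWsecD10b

section BWsecD11
namespace BW












variable {N : ℕ} {e : BWExec N}

/-- Loose doorway stages (any token number at `d4`). -/
def isDoorA (s : ℕ) (c : Color) : BWPc → Prop
  | .d3 s' => s' = s
  | .scan s' c' _ _ => s' = s ∧ c' = c
  | .d4 s' c' _ => s' = s ∧ c' = c
  | _ => False

lemma isDoor_isDoorA {s c m p} (h : isDoor s c m p) : isDoorA s c p := by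
  cases p <;> simp_all [isDoor, isDoorA]

lemma isDoorA_inv {st : BWState N} {i : Fin N} {s c} (hI : Inv st)
    (h : isDoorA s c (st.pc i)) : st.choosing i = true ∧ st.token i = ⟨s, none, 0⟩ := by
  have hIi := hI i
  cases hpc : st.pc i <;> rw [hpc] at h hIi <;>
    first
      | exact h.elim
      | (obtain rfl := h; exact ⟨hIi.2.2, hIi.2.1⟩)
      | (obtain ⟨rfl, -⟩ := h; exact ⟨hIi.2.2, hIi.2.1⟩)
      | (obtain ⟨rfl, -⟩ := h; exact ⟨hIi.2.2.1, hIi.2.1⟩)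

lemma line5_gcolor {Q : Fin N} {u : ℕ} {s : ℕ} {c : Color}
    (h1 : (e.state u).pc Q = .d3 s)
    (h2 : (e.state (u+1)).pc Q = .scan s c 0 0) :
    (e.state u).gcolor = c ∧ e.sched u = Q := by
  rcases back_scan h2 with hsame | ⟨hs, hcase⟩
  · rw [h1] at hsame; cases hsame
  · rcases hcase with ⟨-, hg, -, -⟩ | ⟨j₀, acc₀, hj, hpc, -, -⟩
    · exact ⟨hg, hs⟩
    · rw [h1] at hpc; cases hpc

/-- The main inductive lemma: if GlobalColor is flipped at `k` (from color `d` to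
`d.opp`), then no process `Q` that read `d.opp` at its line 5 before `k` can still be
inside that invocation at time `k`. -/
theorem AUX : ∀ k : ℕ, bwFlipAt e k →
    ∀ (d : Color), (e.state k).gcolor = d →
    ∀ (Q : Fin N) (sQ uQ b y : ℕ),
      (e.state uQ).pc Q = .d3 sQ →
      (e.state (uQ+1)).pc Q = .scan sQ d.opp 0 0 →
      uQ < k → k ≤ y → uQ < b →
      (∀ n, uQ ≤ n → n ≤ min b y → isDoorA sQ d.opp ((e.state n).pc Q)) →
      (∀ n, b < n → n ≤ y → ((e.state n).token Q).session = sQ ∧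
        ((e.state n).token Q).color = some d.opp) →
      False := by
  intro k
  induction k using Nat.strong_induction_on with
  | _ k IH =>
    intro hflip d hgk Q sQ uQ b y hQ5a hQ5b huQk hky huQb hQdoor hQalive
    set R := e.sched k with hR
    obtain ⟨sR, d', mR, hpcR, hgk', hgk1⟩ := flip_flipper hflip
    rw [hgk] at hgk'
    subst hgk'
    -- R's full exit package
    obtain ⟨hm2, u, a, eD, γ, γ2, o1, o2, o3, o4, o5,
      ⟨c1, c2, c3, c4, c5, c6, c7, c8, c9, c10, c11, c12⟩, hx1p⟩ := xflip_pkg hpcR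
    -- gcolor at u is d
    have hgu : (e.state u).gcolor = d := c3
    -- u < k
    have huk : u < k := by omega
    -- no flip at u
    have hnfu : ¬ bwFlipAt e u := by
      intro hf
      obtain ⟨s', c', m', hp, -, -⟩ := flip_flipper hf
      rw [c1] at hp
      rw [c2] at hp
      cases hp
    -- Step ML: no flip in (u, k)
    have hML : ∀ k', u < k' → k' < k → ¬ bwFlipAt e k' := by
      by_contra hcon
      push_neg at hcon
      obtain ⟨k', hk1, hk2, hk3⟩ := hcon
      obtain ⟨kh, hh1, hh2, hh3, hh4⟩ := exists_last_flip (a := u+1) (by omega) hk2 hk3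
      -- gcolor (kh+1) = d
      have hgkh1 : (e.state (kh+1)).gcolor = d := by
        have := gcolor_const (a := kh+1) (b := k) (by omega)
          (fun j hj1 hj2 => hh4 j (by omega) hj2)
        rw [this] at hgk; exact hgk
      obtain ⟨s2, d2, m2, hp2, hg2, hg21⟩ := flip_flipper hh3
      have hd2 : d2 = d.opp := by
        have : d2.opp = d := by rw [← hg21, hgkh1]
        rw [← this, opp_opp]
      -- apply IH at kh with Q := R
      refine IH kh (by omega) hh3 d2 hg2 R sR u a k c2 ?_ (by omega) (by omega) (by omega)
        ?_ ?_
      · rw [hd2, opp_opp]; exact c4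
      · intro n h1 h2
        rw [hd2, opp_opp]
        have hmin : min a k = a := by omega
        rw [hmin] at h2
        exact isDoor_isDoorA (c7 n h1 h2)
      · intro n h1 h2
        rw [hd2, opp_opp]
        have := c8 n h1 (by omega)
        rw [this]
        exact ⟨rfl, rfl⟩
    -- gcolor constant d on [u, k]
    have hgconst : ∀ n, u ≤ n → n ≤ k → (e.state n).gcolor = d := by
      intro n h1 h2
      have := gcolor_const (a := u) (b := n) h1 (fun j hj1 hj2 => by
        rcases Nat.eq_or_lt_of_le hj1 with rfl | hlt
        · exact hnfu
        · exact hML j hlt (by omega))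
      rw [this]; exact hgu
    -- gcolor at uQ
    obtain ⟨hguQ, hsQ5⟩ := line5_gcolor hQ5a hQ5b
    -- uQ < u
    have huQu : uQ < u := by
      by_contra hcon
      push_neg at hcon
      have hdd := hgconst uQ hcon (by omega)
      rw [hdd] at hguQ
      exact opp_ne d hguQ.symm
    -- R's x1 pass over Q
    obtain ⟨σ', f1, f2, f3, f4, f5⟩ := hx1p Q.val Q.isLt
    have hQeta : (⟨Q.val, Q.isLt⟩ : Fin N) = Q := rfl
    rw [hQeta] at f5
    rcases Nat.lt_or_ge b σ' with hbσ | hσb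
    · -- Case A : Q's token is alive and (d.opp)-colored at σ'
      have hal := hQalive σ' hbσ (by omega)
      apply f5
      constructor
      · cases htok : (e.state σ').token Q with
        | mk ts tc tn =>
            have h1 := hal.1
            have h2 := hal.2
            rw [htok] at h1 h2
            simp at h1 h2
            subst h1; subst h2
            exact colored_session_pos htok
      · exact hal.2
    · -- Case B : R read Q before Q's d4 write
      -- R's w1 pass over Q forces sQ = sR
      obtain ⟨ω, p1, p2, p3, p4, p5, ω2, q1, q2, q3, q4, q5⟩ := c9 Q.val Q.isLt
      rw [hQeta] at p5
      have hωdoor : isDoorA sQ d.opp ((e.state ω).pc Q) := by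
        apply hQdoor ω (by omega)
        have : ω ≤ b := by omega
        omega
      obtain ⟨hch, htokQ⟩ := isDoorA_inv (invAt e ω) hωdoor
      have hsQR : sQ = sR := by
        rcases p5 with hc | hs
        · rw [hch] at hc; cases hc
        · rw [htokQ] at hs; simpa using hs
      -- the donor of R
      obtain ⟨σd, e1, e2, e3, j₀, acc₀, hj₀, e4, sd, nd, e5, e6, e7, e8⟩ := c12 hm2
      set qd : Fin N := ⟨j₀, hj₀⟩ with hqd
      -- donor dies before γ
      have hdeath : ∃ xd, σd ≤ xd ∧ xd < γ ∧ e.sched xd = qd ∧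
          (e.state xd).pc qd = .x2 ∧
          ∀ n, σd ≤ n → n ≤ xd → (e.state n).token qd = ⟨sd, some d, nd⟩ := by
        rcases token_persist (T := ⟨sd, some d, nd⟩) rfl γ σd (by omega) e5 with hconst | hdie
        · exfalso
          obtain ⟨ωd, r1, r2, r3, r4, r5, ωd2, t1, t2, t3, t4, t5⟩ := c9 j₀ hj₀
          have htok2 : (e.state ωd2).token qd = ⟨sd, some d, nd⟩ :=
            hconst ωd2 (by omega) (by omega)
          obtain ⟨ω3, v1, v2, v3, v4, v5⟩ := t5 (by rw [htok2])
          have htok3 : (e.state ω3).token qd = ⟨sd, some d, nd⟩ :=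
            hconst ω3 (by omega) (by omega)
          rcases v5 with hnum | hcol | hses | hses
          · rw [htok3] at hnum
            simp at hnum
            omega
          · rw [htok3] at hcol
            simp at hcol
          · rw [htok3] at hses
            exact e6 hses
          · rw [htok3] at hses
            exact e7 hses
        · obtain ⟨xd, r1, r2, r3, r4, r5⟩ := hdie
          exact ⟨xd, r1, r2, r3, r4, r5⟩
      obtain ⟨xd, w1, w2, w3, w4, w5⟩ := hdeath
      -- qd's own invocation package
      obtain ⟨hmd, ud, ad, eDd, γd, z1, z2, z3, z4,
        ⟨k1, k2, k3, k4, k5, k6, k7, k8, k9, k10, k11, k12⟩⟩ :=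
        x2_pkg w4 (w5 xd w1 (le_refl xd))
      -- qd's w1 pass over Q
      obtain ⟨ρd, g1, g2, g3, g4, g5, -⟩ := k9 Q.val Q.isLt
      rw [hQeta] at g5
      rcases Nat.lt_or_ge ρd uQ with hρuQ | hρuQ
      · -- Case B2 : qd completed its doorway before uQ; feed it to IH at flip k2
        -- qd alive over [uQ, σd]
        have halived : ∀ n, ad < n → n ≤ σd → (e.state n).token qd = ⟨sd, some d, nd⟩ := by
          intro n h1 h2
          exact k8 n h1 (by omega)
        -- a flip k2 in [uQ, u)
        obtain ⟨k0, y1, y2, y3⟩ := exists_flip (a := uQ) (b := u) (by omega)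
          (by rw [hgu, hguQ]; exact (opp_ne d).symm)
        obtain ⟨k2', x1, x2, x3, x4⟩ := exists_last_flip y1 y2 y3
        have hgk2' : (e.state (k2'+1)).gcolor = d := by
          have hcc := gcolor_const (a := k2'+1) (b := u) (by omega)
            (fun j hj1 hj2 => x4 j (by omega) hj2)
          rw [← hcc]; exact c3
        obtain ⟨s3, d3, m3, hp3, hg3, hg31⟩ := flip_flipper x3
        have hd3 : d3 = d.opp := by
          have : d3.opp = d := by rw [← hg31, hgk2']
          rw [← this, opp_opp]
        -- IH at k2' with Q := qd
        refine IH k2' (by omega) x3 d3 hg3 qd sd ud ad σd k2 ?_ (by omega) (by omega)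
          (by omega) ?_ ?_
        · rw [hd3, opp_opp]; exact k4
        · intro n h1 h2
          rw [hd3, opp_opp]
          have hmin : min ad σd = ad := by omega
          rw [hmin] at h2
          exact isDoor_isDoorA (k7 n h1 h2)
        · intro n h1 h2
          rw [hd3, opp_opp]
          rw [halived n h1 h2]
          exact ⟨rfl, rfl⟩
      · -- Case B1 : qd's w1 read of Q lands in Q's doorway, forcing sd = sQ
        have hρdoor : isDoorA sQ d.opp ((e.state ρd).pc Q) := by
          apply hQdoor ρd hρuQ
          have hρb : ρd ≤ b := by omega
          omega
        obtain ⟨hch2, htokQ2⟩ := isDoorA_inv (invAt e ρd) hρdoor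
        rcases g5 with hc | hs
        · rw [hch2] at hc; cases hc
        · rw [htokQ2] at hs
          simp at hs
          rw [hsQR] at hs
          exact e7 hs.symm


end BW
end BWsecD11

section BWsecD12
namespace BW













variable {N : ℕ} {e : BWExec N}

lemma token_birth {q : Fin N} {T : BWTok} {sq : ℕ} {cq : Color} {nq : ℕ}
    (hT : T = ⟨sq, some cq, nq⟩) :
    ∀ {σ : ℕ}, (e.state σ).token q = T →
    ∃ bq, bq < σ ∧ e.sched bq = q ∧ (e.state bq).pc q = .d4 sq cq nq ∧
      ∀ n, bq < n → n ≤ σ → (e.state n).token q = T := by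
  intro σ
  induction σ with
  | zero =>
      intro h
      obtain ⟨c0, h0⟩ := e.init
      rw [h0] at h
      rw [hT] at h
      simp [bwInit, BWTok.init] at h
  | succ σ ih =>
      intro h
      rcases @token_step N e q σ with heq | ⟨hsch, hw⟩
      · obtain ⟨bq, h1, h2, h3, h4⟩ := ih (heq ▸ h)
        refine ⟨bq, by omega, h2, h3, ?_⟩
        intro n hn1 hn2
        rcases Nat.lt_or_ge n (σ+1) with hn | hn
        · exact h4 n hn1 (by omega)
        · have : n = σ + 1 := by omega
          rw [this]; exact h
      · rcases hw with ⟨s', hpc, hval⟩ | ⟨s', c', m', hpc, hval⟩ | ⟨hpc, hval⟩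
        · rw [h, hT] at hval; simp at hval
        · rw [h, hT] at hval
          simp only [BWTok.mk.injEq, Option.some.injEq] at hval
          obtain ⟨rfl, rfl, rfl⟩ := hval
          refine ⟨σ, by omega, hsch, hpc, ?_⟩
          intro n hn1 hn2
          have : n = σ + 1 := by omega
          rw [this]; exact h
        · rw [h, hT] at hval; simp [BWTok.init] at hval

lemma postD3_run {i : Fin N} {u0 t : ℕ}
    (h0 : postD3 ((e.state (u0+1)).pc i))
    (hnr : ∀ n, u0 < n → n ≤ t → (e.state n).pc i ≠ .remainder) :
    ∀ n, u0 + 1 ≤ n → n ≤ t → postD3 ((e.state n).pc i) := by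
  intro n
  induction n with
  | zero => omega
  | succ n ih =>
      intro h1 h2
      rcases Nat.lt_or_ge n (u0+1) with hn | hn
      · have : n = u0 := by omega
        rw [this]; exact h0
      · have hp := ih hn (by omega)
        rcases fwd_postD3 hp with hgood | hbad
        · exact hgood
        · exact absurd hbad (hnr (n+1) (by omega) h2)

theorem bw_flip_witness' {N : ℕ} (e : BWExec N) (p : Fin N) (s : ℕ) (c : Color) (m : ℕ)
    (t u : ℕ)
    (hline5 : bwLine5 e p s c u) (hut : u < t)
    (hactive : bwActiveThrough e p u t)
    (hpc : (e.state t).pc p = BWPc.xFlip s c m)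
    (hflip : bwFlipAt e t) :
    (∀ k, u ≤ k → k < t → ¬ bwFlipAt e k) ∧
    ∃ (q : Fin N) (sq nq uq r acc : ℕ), q ≠ p ∧ sq ≠ 0 ∧ sq ≠ s ∧ nq < m ∧
      bwLine5 e q sq c uq ∧ uq < t ∧ (∀ k, uq ≤ k → k < t → ¬ bwFlipAt e k) ∧
      u < r ∧ r < t ∧ (e.state r).pc p = BWPc.scan s c q.val acc ∧
      (e.state r).token q = ⟨sq, some c, nq⟩ ∧
      (∀ k, uq < k → k ≤ r → (e.state k).pc q ≠ BWPc.remainder) := by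
  obtain ⟨h5a, h5b⟩ := hline5
  -- p's exit package
  obtain ⟨hm2, u₀, a, eD, γ, γ2, o1, o2, o3, o4, o5,
    ⟨c1, c2, c3, c4, c5, c6, c7, c8, c9, c10, c11, c12⟩, hx1p⟩ := xflip_pkg hpc
  -- reconcile u₀ = u
  have huu : u = u₀ := by
    symm
    rcases Nat.lt_trichotomy u₀ u with hlt | heq | hgt
    · exfalso
      have hrun := postD3_run (i := p) (u0 := u₀) (t := t) (by rw [c4]; trivial) c10
      have := hrun u (by omega) (by omega)
      rw [h5a] at this
      exact this
    · exact heq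
    · exfalso
      have hrun := postD3_run (i := p) (u0 := u) (t := t) (by rw [h5b]; trivial)
        (fun n h1 h2 => hactive n h1 h2)
      have := hrun u₀ (by omega) (by omega)
      rw [c2] at this
      exact this
  subst huu
  -- the flipper at t
  obtain ⟨sF, dF, mF, hpcF, hgt, hgt1⟩ := flip_flipper hflip
  set F := e.sched t with hF
  -- dF = c
  have hdFc : dF = c := by
    by_contra hne
    have hdF : dF = c.opp := by
      cases dF <;> cases c <;> simp_all [Color.opp]
    subst hdF
    have hFp : F ≠ p := by
      intro heq
      rw [heq] at hpcF
      rw [hpc] at hpcF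
      injection hpcF with _ h2 _
      exact opp_ne c h2.symm
    -- F's package
    obtain ⟨hm2F, uF, aF, eDF, γF, γ2F, b1, b2, b3, b4, b5,
      ⟨d1, d2, d3, d4, d5, d6, d7, d8, d9, d10, d11, d12⟩, hx1pF⟩ := xflip_pkg hpcF
    -- F's x1 pass over p
    obtain ⟨σ₁, g1, g2, g3, g4, g5⟩ := hx1pF p.val p.isLt
    have hpeta : (⟨p.val, p.isLt⟩ : Fin N) = p := rfl
    rw [hpeta] at g5
    have hσ₁ : σ₁ ≤ a := by
      by_contra hcon
      push_neg at hcon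
      have htokp := c8 σ₁ hcon (by omega)
      apply g5
      rw [htokp]
      rw [opp_opp]
      exact ⟨colored_session_pos htokp, rfl⟩
    -- p's x1 pass over F
    obtain ⟨σ₂, f1, f2, f3, f4, f5⟩ := hx1p F.val F.isLt
    have hFeta : (⟨F.val, F.isLt⟩ : Fin N) = F := rfl
    rw [hFeta] at f5
    have hσ₂ : σ₂ ≤ aF := by
      by_contra hcon
      push_neg at hcon
      have htokF := d8 σ₂ hcon (by omega)
      apply f5
      rw [htokF]
      exact ⟨colored_session_pos htokF, rfl⟩
    omega
  rw [hdFc] at hgt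
  -- no flip at u
  have hsu : e.sched u = p := (line5_gcolor h5a h5b).2
  have hnfu : ¬ bwFlipAt e u := by
    intro hf
    obtain ⟨s', c', m', hp', -, -⟩ := flip_flipper hf
    rw [hsu, h5a] at hp'
    cases hp'
  -- Part 1 : no flip in [u, t)
  have hpart1 : ∀ k, u ≤ k → k < t → ¬ bwFlipAt e k := by
    intro k hk1 hk2 hfk
    rcases Nat.eq_or_lt_of_le hk1 with rfl | hlt
    · exact hnfu hfk
    · obtain ⟨kh, x1, x2, x3, x4⟩ := exists_last_flip (a := u+1) (by omega) hk2 hfk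
      have hgkh1 : (e.state (kh+1)).gcolor = c := by
        have hcc := gcolor_const (a := kh+1) (b := t) (by omega)
          (fun j hj1 hj2 => x4 j (by omega) hj2)
        rw [← hcc]; exact hgt
      obtain ⟨s2, d2, m2, hp2, hg2, hg21⟩ := flip_flipper x3
      have hd2 : d2 = c.opp := by
        have : d2.opp = c := by rw [← hg21, hgkh1]
        rw [← this, opp_opp]
      refine AUX kh x3 d2 hg2 p s u a t h5a ?_ (by omega) (by omega) (by omega) ?_ ?_
      · rw [hd2, opp_opp]; exact h5b
      · intro n h1 h2
        rw [hd2, opp_opp]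
        have hmin : min a t = a := by omega
        rw [hmin] at h2
        exact isDoor_isDoorA (c7 n h1 h2)
      · intro n h1 h2
        rw [hd2, opp_opp]
        rw [c8 n h1 (by omega)]
        exact ⟨rfl, rfl⟩
  refine ⟨hpart1, ?_⟩
  -- Part 2 : the donor
  obtain ⟨r, e1, e2, e3, j₀, acc₀, hj₀, e4, sq, nq, e5, e6, e7, e8⟩ := c12 hm2
  set q : Fin N := ⟨j₀, hj₀⟩ with hq
  -- q's birth
  obtain ⟨bq, w1, w2, w3, w4⟩ := token_birth rfl e5
  obtain ⟨hnq1, uq, v1, v2, v3, v4, v5, v6, -⟩ := d4_origin w3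
  -- v1 : uq < bq, v2 : sched, v3 : pc d3, v4 : gcolor, v5 : pc scan, v6 : doorway
  -- q ≠ p
  have hqp : q ≠ p := by
    intro heq
    have hdoor := c7 r (by omega) (by omega)
    obtain ⟨-, htokp⟩ := isDoorA_inv (invAt e r) (isDoor_isDoorA hdoor)
    rw [← heq] at htokp
    rw [e5] at htokp
    simp at htokp
  -- no flip in [uq, t)
  have hpart2 : ∀ k, uq ≤ k → k < t → ¬ bwFlipAt e k := by
    intro k hk1 hk2 hfk
    rcases Nat.lt_or_ge k u with hku | hku
    · -- a flip in [uq, u) ; take the last one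
      obtain ⟨kh, x1, x2, x3, x4⟩ := exists_last_flip hk1 hku hfk
      have hgkh1 : (e.state (kh+1)).gcolor = c := by
        have hcc := gcolor_const (a := kh+1) (b := u) (by omega)
          (fun j hj1 hj2 => x4 j (by omega) hj2)
        rw [← hcc]; exact c3
      obtain ⟨s2, d2, m2, hp2, hg2, hg21⟩ := flip_flipper x3
      have hd2 : d2 = c.opp := by
        have : d2.opp = c := by rw [← hg21, hgkh1]
        rw [← this, opp_opp]
      have hkuq : uq < kh := by
        rcases Nat.eq_or_lt_of_le x1 with rfl | hlt2
        · exfalso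
          have hsq : e.sched uq = q := (line5_gcolor v3 v5).2
          obtain ⟨s', c', m', hp', -, -⟩ := flip_flipper x3
          rw [hsq, v3] at hp'
          cases hp'
        · exact hlt2
      refine AUX kh x3 d2 hg2 q sq uq bq r v3 ?_ (by omega) (by omega) (by omega) ?_ ?_
      · rw [hd2, opp_opp]; exact v5
      · intro n h1 h2
        rw [hd2, opp_opp]
        have hmin : min bq r = bq := by omega
        rw [hmin] at h2
        exact isDoor_isDoorA (v6 n h1 h2)
      · intro n h1 h2
        rw [hd2, opp_opp]
        rw [w4 n h1 h2]
        exact ⟨rfl, rfl⟩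
    · exact hpart1 k hku hk2 hfk
  refine ⟨q, sq, nq, uq, r, acc₀, hqp, e6, e7, e8, ⟨v3, v5⟩, by omega, hpart2,
    e1, by omega, e4, e5, ?_⟩
  intro k hk1 hk2
  rcases Nat.lt_or_ge bq k with hkb | hkb
  · exact colored_not_remainder (w4 k hkb hk2)
  · exact isDoor_excl (v6 k (by omega) hkb)


end BW
end BWsecD12

/-- **Lemma 2 for the BWBGME algorithm.**  Suppose process `p` flips GlobalColor at the
time point `t` (ending the interval `I` of constancy of GlobalColor; a time `k` belongs
to `I` iff no flip occurs in `[k, t)`), in the invocation whose line-5 read happened at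
step `u` and yielded color `c`.  Then `p` performed its line-5 read inside `I`, and while
`p` was computing its token number there existed a conflicting process `q` (session
`sq ∉ {0, s}`) with the same token color `c` and a strictly smaller token number
`nq < m`, which also performed its line-5 read inside `I`. -/
theorem bw_flip_witness {N : ℕ} (e : BWExec N) (p : Fin N) (s : ℕ) (c : Color) (m : ℕ)
    (t u : ℕ)
    (hline5 : bwLine5 e p s c u) (hut : u < t)
    (hactive : bwActiveThrough e p u t)
    (hpc : (e.state t).pc p = BWPc.xFlip s c m)
    (hflip : bwFlipAt e t) :
    (∀ k, u ≤ k → k < t → ¬ bwFlipAt e k) ∧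
    ∃ (q : Fin N) (sq nq uq r acc : ℕ), q ≠ p ∧ sq ≠ 0 ∧ sq ≠ s ∧ nq < m ∧
      bwLine5 e q sq c uq ∧ uq < t ∧ (∀ k, uq ≤ k → k < t → ¬ bwFlipAt e k) ∧
      u < r ∧ r < t ∧ (e.state r).pc p = BWPc.scan s c q.val acc ∧
      (e.state r).token q = ⟨sq, some c, nq⟩ ∧
      (∀ k, uq < k → k ≤ r → (e.state k).pc q ≠ BWPc.remainder) :=
  BW.bw_flip_witness' e p s c m t u hline5 hut hactive hpc hflip
end

section
/- In every execution of the BWBGME algorithm, after a process P_i performs its read of GlobalColor (line 5), GlobalColor cannot be flipped more than once before P_i completes its exit section (resetting Token[i] to (0,⊥,0)). -/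
set_option maxHeartbeats 1000000 in
theorem bw_frame {N : ℕ} {st st' : BWState N} {r : Fin N} (h : bwStep st r st')
    {j : Fin N} (hj : j ≠ r) :
    st'.pc j = st.pc j ∧ st'.token j = st.token j ∧ st'.choosing j = st.choosing j := by
  unfold bwStep at h
  split at h <;> (try split at h) <;> (try split at h) <;>
  first
  | (subst h; simp [Function.update_of_ne hj])
  | (rcases h with rfl | ⟨s', hs', rfl⟩ <;> simp [Function.update_of_ne hj])
  | (rcases h with rfl | rfl <;> simp [Function.update_of_ne hj])
namespace BWProof

theorem Color.opp_opp (c : Color) : c.opp.opp = c := by cases c <;> rfl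
theorem Color.ne_opp (c : Color) : c ≠ c.opp := by cases c <;> simp [_root_.Color.opp]
theorem Color.eq_of_ne_opp {a b : Color} (h : a ≠ b.opp) : a = b := by
  cases a <;> cases b <;> simp_all [_root_.Color.opp]

section Inv
variable {N : ℕ} {st st' : BWState N} {r : Fin N}

theorem inv_token_change (h : bwStep st r st') (hne : st'.token r ≠ st.token r) :
    (∃ s, st.pc r = .d1 s) ∨ (∃ s c m, st.pc r = .d4 s c m) ∨ st.pc r = .x2 := by
  unfold bwStep at h
  split at h <;> (try split at h) <;> (try split at h) <;>
  first
  | (subst h; first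
      | (exact Or.inl ⟨_, by assumption⟩)
      | (exact Or.inr (Or.inl ⟨_, _, _, by assumption⟩))
      | (exact Or.inr (Or.inr (by assumption)))
      | (exact absurd rfl hne))
  | (rcases h with rfl | ⟨s', hs', rfl⟩ <;> exact absurd rfl hne)
  | (rcases h with rfl | rfl <;> exact absurd rfl hne)

theorem inv_gcolor_change (h : bwStep st r st') (hne : st'.gcolor ≠ st.gcolor) :
    ∃ s m, st.pc r = .xFlip s st.gcolor m ∧ st'.gcolor = st.gcolor.opp ∧
      st'.pc r = .x2 ∧ st'.token r = st.token r := by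
  unfold bwStep at h
  split at h <;> (try split at h) <;> (try split at h) <;>
  first
  | (rcases h with rfl | ⟨s', hs', rfl⟩ <;> exact absurd rfl hne)
  | (rcases h with rfl | rfl <;> exact absurd rfl hne)
  | (subst h; first
      | (exact absurd rfl hne)
      | (rename_i s c m heq
         have hc : st.gcolor = c :=
           Color.eq_of_ne_opp (fun hh => hne (by simp [hh]))
         exact ⟨s, m, by rw [hc]; exact heq, by simp [hc], by simp, rfl⟩))

end Inv
end BWProof
namespace BWProof
section Inv2
variable {N : ℕ} {st st' : BWState N} {r : Fin N}

set_option linter.unreachableTactic false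
set_option linter.unusedTactic false

theorem inv_to_xFlip (h : bwStep st r st') {s : ℕ} {c : Color} {m : ℕ}
    (hpc' : st'.pc r = .xFlip s c m) (hne : st.pc r ≠ .xFlip s c m) :
    ∃ j, N ≤ j ∧ st.pc r = .x1 s c m j := by
  unfold bwStep at h
  split at h <;> (try split at h) <;> (try split at h) <;>
    (try rcases h with rfl | ⟨_, _, rfl⟩) <;> (try rcases h with rfl | rfl) <;>
    (try subst h) <;>
    (try exact absurd hpc' hne) <;>
    (simp only [Function.update_self] at hpc') <;>
    (try cases hpc') <;>
    first
    | (rename_i j hj heq; exact ⟨j, Nat.le_of_not_lt hj, heq⟩)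
    | skip

theorem inv_to_x1 (h : bwStep st r st') {s : ℕ} {c : Color} {m j : ℕ}
    (hpc' : st'.pc r = .x1 s c m j) (hne : st.pc r ≠ .x1 s c m j) :
    (j = 0 ∧ m ≠ 1 ∧ st.pc r = .cs s c m) ∨
    (∃ (j' : ℕ) (hj : j' < N), j = j' + 1 ∧ st.pc r = .x1 s c m j' ∧
      ¬((st.token ⟨j', hj⟩).session ≠ 0 ∧ (st.token ⟨j', hj⟩).color = some c.opp)) := by
  unfold bwStep at h
  split at h <;> (try split at h) <;> (try split at h) <;>
    (try rcases h with rfl | ⟨_, _, rfl⟩) <;> (try rcases h with rfl | rfl) <;>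
    (try subst h) <;>
    (try exact absurd hpc' hne) <;>
    (simp only [Function.update_self] at hpc') <;>
    (try cases hpc') <;>
    first
    | (rename_i hm1 heq; exact Or.inl ⟨rfl, hm1, heq⟩)
    | (rename_i j' hj hcond heq; exact Or.inr ⟨j', hj, rfl, heq, hcond⟩)
    | skip

theorem inv_to_cs (h : bwStep st r st') {s : ℕ} {c : Color} {m : ℕ}
    (hpc' : st'.pc r = .cs s c m) (hne : st.pc r ≠ .cs s c m) :
    ∃ jn, N ≤ jn ∧ st.pc r = .w1 s c m jn := by
  unfold bwStep at h
  split at h <;> (try split at h) <;> (try split at h) <;>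
    (try rcases h with rfl | ⟨_, _, rfl⟩) <;> (try rcases h with rfl | rfl) <;>
    (try subst h) <;>
    (try exact absurd hpc' hne) <;>
    (simp only [Function.update_self] at hpc') <;>
    (try cases hpc') <;>
    first
    | (rename_i j hj heq; exact ⟨j, Nat.le_of_not_lt hj, heq⟩)
    | skip

theorem inv_to_w1 (h : bwStep st r st') {s : ℕ} {c : Color} {m j : ℕ}
    (hpc' : st'.pc r = .w1 s c m j) (hne : st.pc r ≠ .w1 s c m j) :
    (j = 0 ∧ st.pc r = .d5 s c m) ∨
    (∃ (j' : ℕ) (hj : j' < N), j = j' + 1 ∧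
      ((st.pc r = .wSame s c m j' ∧
        ((m < (st.token ⟨j', hj⟩).number ∨ (m = (st.token ⟨j', hj⟩).number ∧ r.val < j')) ∨
          (st.token ⟨j', hj⟩).color ≠ some c ∨ (st.token ⟨j', hj⟩).session = 0 ∨
          (st.token ⟨j', hj⟩).session = s)) ∨
       (st.pc r = .wDiff s c m j' ∧
        (st.gcolor ≠ c ∨ (st.token ⟨j', hj⟩).color = some c ∨
          (st.token ⟨j', hj⟩).session = 0 ∨ (st.token ⟨j', hj⟩).session = s)))) := by
  unfold bwStep at h
  split at h <;> (try split at h) <;> (try split at h) <;>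
    (try rcases h with rfl | ⟨_, _, rfl⟩) <;> (try rcases h with rfl | rfl) <;>
    (try subst h) <;>
    (try exact absurd hpc' hne) <;>
    (simp only [Function.update_self] at hpc') <;>
    (try cases hpc') <;>
    first
    | (rename_i heq; exact Or.inl ⟨rfl, heq⟩)
    | (rename_i hj hcond heq; exact Or.inr ⟨_, hj, rfl, Or.inl ⟨heq, hcond⟩⟩)
    | (rename_i hj heq hcond; exact Or.inr ⟨_, hj, rfl, Or.inl ⟨heq, hcond⟩⟩)
    | (rename_i hj hcond heq; exact Or.inr ⟨_, hj, rfl, Or.inr ⟨heq, hcond⟩⟩)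
    | (rename_i hj heq hcond; exact Or.inr ⟨_, hj, rfl, Or.inr ⟨heq, hcond⟩⟩)
    | skip

theorem inv_to_wB (h : bwStep st r st') {s : ℕ} {c : Color} {m j : ℕ}
    (hpc' : st'.pc r = .wB s c m j) (hne : st.pc r ≠ .wB s c m j) :
    ∃ (hj : j < N), st.pc r = .w1 s c m j ∧
      (st.choosing ⟨j, hj⟩ = false ∨ (st.token ⟨j, hj⟩).session = s) := by
  unfold bwStep at h
  split at h <;> (try split at h) <;> (try split at h) <;>
    (try rcases h with rfl | ⟨_, _, rfl⟩) <;> (try rcases h with rfl | rfl) <;>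
    (try subst h) <;>
    (try exact absurd hpc' hne) <;>
    (simp only [Function.update_self] at hpc') <;>
    (try cases hpc') <;>
    first
    | (rename_i hj hcond heq; exact ⟨hj, heq, hcond⟩)
    | skip

theorem inv_to_wS (h : bwStep st r st') {s : ℕ} {c : Color} {m j : ℕ}
    (hpc' : st'.pc r = .wSame s c m j) (hne : st.pc r ≠ .wSame s c m j) :
    ∃ (hj : j < N), st.pc r = .wB s c m j ∧ (st.token ⟨j, hj⟩).color = some c := by
  unfold bwStep at h
  split at h <;> (try split at h) <;> (try split at h) <;>
    (try rcases h with rfl | ⟨_, _, rfl⟩) <;> (try rcases h with rfl | rfl) <;>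
    (try subst h) <;>
    (try exact absurd hpc' hne) <;>
    (simp only [Function.update_self] at hpc') <;>
    (try cases hpc') <;>
    first
    | (rename_i hj hcond heq; exact ⟨hj, heq, hcond⟩)
    | skip

theorem inv_to_wD (h : bwStep st r st') {s : ℕ} {c : Color} {m j : ℕ}
    (hpc' : st'.pc r = .wDiff s c m j) (hne : st.pc r ≠ .wDiff s c m j) :
    ∃ (hj : j < N), st.pc r = .wB s c m j ∧ (st.token ⟨j, hj⟩).color ≠ some c := by
  unfold bwStep at h
  split at h <;> (try split at h) <;> (try split at h) <;>
    (try rcases h with rfl | ⟨_, _, rfl⟩) <;> (try rcases h with rfl | rfl) <;>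
    (try subst h) <;>
    (try exact absurd hpc' hne) <;>
    (simp only [Function.update_self] at hpc') <;>
    (try cases hpc') <;>
    first
    | (rename_i hj hcond heq; exact ⟨hj, heq, hcond⟩)
    | skip

theorem inv_to_d5 (h : bwStep st r st') {s : ℕ} {c : Color} {m : ℕ}
    (hpc' : st'.pc r = .d5 s c m) (hne : st.pc r ≠ .d5 s c m) :
    st.pc r = .d4 s c m := by
  unfold bwStep at h
  split at h <;> (try split at h) <;> (try split at h) <;>
    (try rcases h with rfl | ⟨_, _, rfl⟩) <;> (try rcases h with rfl | rfl) <;>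
    (try subst h) <;>
    (try exact absurd hpc' hne) <;>
    (simp only [Function.update_self] at hpc') <;>
    (try cases hpc') <;>
    first
    | (rename_i heq; exact heq)
    | skip

theorem inv_to_d4 (h : bwStep st r st') {s : ℕ} {c : Color} {m : ℕ}
    (hpc' : st'.pc r = .d4 s c m) (hne : st.pc r ≠ .d4 s c m) :
    ∃ jn m', N ≤ jn ∧ st.pc r = .scan s c jn m' ∧ m = m' + 1 := by
  unfold bwStep at h
  split at h <;> (try split at h) <;> (try split at h) <;>
    (try rcases h with rfl | ⟨_, _, rfl⟩) <;> (try rcases h with rfl | rfl) <;>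
    (try subst h) <;>
    (try exact absurd hpc' hne) <;>
    (simp only [Function.update_self] at hpc') <;>
    (try cases hpc') <;>
    first
    | (rename_i j m' hj heq; exact ⟨j, m', Nat.le_of_not_lt hj, heq, rfl⟩)
    | skip

theorem inv_to_scan (h : bwStep st r st') {s : ℕ} {c : Color} {j m : ℕ}
    (hpc' : st'.pc r = .scan s c j m) (hne : st.pc r ≠ .scan s c j m) :
    (m = 0 ∧ j = 0 ∧ st.pc r = .d3 s ∧ st.gcolor = c) ∨
    (∃ j' m', j = j' + 1 ∧ st.pc r = .scan s c j' m' ∧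
      (m = m' ∨ (∃ (hj : j' < N), (st.token ⟨j', hj⟩).color = some c ∧
        (st.token ⟨j', hj⟩).session ≠ 0 ∧ (st.token ⟨j', hj⟩).session ≠ s ∧
        m = max m' (st.token ⟨j', hj⟩).number))) := by
  unfold bwStep at h
  split at h <;> (try split at h) <;> (try split at h) <;>
    (try rcases h with rfl | ⟨_, _, rfl⟩) <;> (try rcases h with rfl | rfl) <;>
    (try subst h) <;>
    (try exact absurd hpc' hne) <;>
    (simp only [Function.update_self] at hpc') <;>
    (try cases hpc') <;>
    first
    | (rename_i heq; exact Or.inl ⟨rfl, rfl, heq, rfl⟩)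
    | (rename_i hj heq hcond;
       exact Or.inr ⟨_, _, rfl, heq, Or.inr ⟨hj, hcond.1, hcond.2.1, hcond.2.2, rfl⟩⟩)
    | (rename_i hj hcond heq;
       exact Or.inr ⟨_, _, rfl, heq, Or.inr ⟨hj, hcond.1, hcond.2.1, hcond.2.2, rfl⟩⟩)
    | (rename_i hj heq hcond; exact Or.inr ⟨_, _, rfl, heq, Or.inl rfl⟩)
    | (rename_i hj hcond heq; exact Or.inr ⟨_, _, rfl, heq, Or.inl rfl⟩)
    | skip

theorem inv_to_x2 (h : bwStep st r st') (hpc' : st'.pc r = .x2) (hne : st.pc r ≠ .x2) :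
    (∃ s c m, st.pc r = .xFlip s c m) ∨ (∃ s c m j, st.pc r = .x1 s c m j) ∨
    (∃ s c, st.pc r = .cs s c 1) := by
  unfold bwStep at h
  split at h <;> (try split at h) <;> (try split at h) <;>
    (try rcases h with rfl | ⟨_, _, rfl⟩) <;> (try rcases h with rfl | rfl) <;>
    (try subst h) <;>
    (try exact absurd hpc' hne) <;>
    (simp only [Function.update_self] at hpc') <;>
    (try cases hpc') <;>
    first
    | (exact Or.inl ⟨_, _, _, by assumption⟩)
    | (exact Or.inr (Or.inl ⟨_, _, _, _, by assumption⟩))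
    | (rename_i s c m heq hm; exact Or.inr (Or.inr ⟨s, c, by rw [heq, hm]⟩))
    | skip

end Inv2
end BWProof
namespace BWProof
set_option linter.unreachableTactic false
set_option linter.unusedTactic false

section Fwd
variable {N : ℕ} {st st' : BWState N} {r : Fin N}

theorem fwd_d3 (h : bwStep st r st') {s : ℕ} (hpc : st.pc r = .d3 s) :
    st' = { st with pc := Function.update st.pc r (.scan s st.gcolor 0 0) } := by
  unfold bwStep at h; rw [hpc] at h; exact h

theorem fwd_x2 (h : bwStep st r st') (hpc : st.pc r = .x2) :
    st' = { st with token := Function.update st.token r BWTok.init,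
                    pc := Function.update st.pc r .remainder } := by
  unfold bwStep at h; rw [hpc] at h; exact h

end Fwd

section Sched
variable {N : ℕ} (e : BWExec N)

theorem sched_of_pc_change {n : ℕ} {j : Fin N}
    (h : (e.state (n+1)).pc j ≠ (e.state n).pc j) : e.sched n = j := by
  by_contra hne
  exact h (bw_frame (e.step n) (fun hh => hne (hh ▸ rfl))).1

theorem sched_of_token_change {n : ℕ} {j : Fin N}
    (h : (e.state (n+1)).token j ≠ (e.state n).token j) : e.sched n = j := by
  by_contra hne
  exact h (bw_frame (e.step n) (fun hh => hne (hh ▸ rfl))).2.1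

/-- Tokens/choosing/pc of `j` are unchanged by steps of others. -/
theorem frame_at {n : ℕ} {j : Fin N} (h : e.sched n ≠ j) :
    (e.state (n+1)).pc j = (e.state n).pc j ∧
    (e.state (n+1)).token j = (e.state n).token j ∧
    (e.state (n+1)).choosing j = (e.state n).choosing j :=
  bw_frame (e.step n) (fun hh => h hh.symm)

theorem gcolor_const {a b : ℕ} (hab : a ≤ b)
    (h : ∀ t, a ≤ t → t < b → ¬ bwFlipAt e t) :
    (e.state b).gcolor = (e.state a).gcolor := by
  induction b with
  | zero => cases Nat.le_zero.mp hab; rfl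
  | succ b ih =>
    rcases Nat.lt_or_ge a (b+1) with hlt | hge
    · have hb : a ≤ b := Nat.lt_succ_iff.mp hlt
      have h1 : ¬ bwFlipAt e b := h b hb (Nat.lt_succ_self b)
      have h2 := ih hb (fun t ht ht' => h t ht (Nat.lt_succ_of_lt ht'))
      simp only [bwFlipAt, not_not] at h1
      rw [h1, h2]
    · cases Nat.le_antisymm hab hge; rfl

/-- There is a flip somewhere in [a,b) if the color differs at the endpoints. -/
theorem exists_flip {a b : ℕ} (hab : a ≤ b)
    (h : (e.state b).gcolor ≠ (e.state a).gcolor) :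
    ∃ t, a ≤ t ∧ t < b ∧ bwFlipAt e t := by
  by_contra hc
  push_neg at hc
  exact h (gcolor_const e hab (fun t ht ht' => hc t ht ht'))

theorem lastEntry {j : Fin N} {P : BWPc} (hP : P ≠ BWPc.remainder) {n : ℕ}
    (hn : (e.state n).pc j = P) :
    ∃ t, t < n ∧ (e.state t).pc j ≠ P ∧ (∀ k, t < k → k ≤ n → (e.state k).pc j = P) ∧
      e.sched t = j ∧ (e.state (t+1)).pc j = P := by
  classical
  have h0 : (e.state 0).pc j ≠ P := by
    obtain ⟨c0, hc⟩ := e.init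
    rw [hc]
    simp only [bwInit]
    exact fun hh => hP hh.symm
  set Q : ℕ → Prop := fun t => (e.state t).pc j ≠ P with hQ
  have hQ0 : Q 0 := h0
  set t := Nat.findGreatest Q n with htdef
  have htQ : Q t := Nat.findGreatest_spec (Nat.zero_le n) hQ0
  have htle : t ≤ n := Nat.findGreatest_le n
  have htgt : ∀ k, t < k → k ≤ n → (e.state k).pc j = P := by
    intro k hk1 hk2
    have := Nat.findGreatest_is_greatest (P := Q) hk1 hk2
    simpa [hQ] using this
  have htn : t < n := by
    rcases Nat.lt_or_ge t n with h | h
    · exact h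
    · have : t = n := Nat.le_antisymm htle h
      rw [this] at htQ
      exact absurd hn htQ
  have hnext : (e.state (t+1)).pc j = P := htgt (t+1) (Nat.lt_succ_self t) htn
  refine ⟨t, htn, htQ, htgt, sched_of_pc_change e ?_, hnext⟩
  rw [hnext]
  exact fun hh => htQ hh.symm

end Sched
end BWProof
namespace BWProof
set_option linter.unreachableTactic false
set_option linter.unusedTactic false

/-- Coupling between pc, token and choosing of each process. -/
def TokOf (pc : BWPc) (tk : BWTok) (ch : Bool) : Prop :=
  match pc with
  | .remainder => tk = BWTok.init ∧ ch = false
  | .d1 s => tk = BWTok.init ∧ ch = false ∧ s ≠ 0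
  | .d2 s => tk = ⟨s, none, 0⟩ ∧ ch = false ∧ s ≠ 0
  | .d3 s => tk = ⟨s, none, 0⟩ ∧ ch = true ∧ s ≠ 0
  | .scan s _ _ _ => tk = ⟨s, none, 0⟩ ∧ ch = true ∧ s ≠ 0
  | .d4 s _ _ => tk = ⟨s, none, 0⟩ ∧ ch = true ∧ s ≠ 0
  | .d5 s c m => tk = ⟨s, some c, m⟩ ∧ ch = true ∧ s ≠ 0
  | .w1 s c m _ => tk = ⟨s, some c, m⟩ ∧ ch = false ∧ s ≠ 0
  | .wB s c m _ => tk = ⟨s, some c, m⟩ ∧ ch = false ∧ s ≠ 0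
  | .wSame s c m _ => tk = ⟨s, some c, m⟩ ∧ ch = false ∧ s ≠ 0
  | .wDiff s c m _ => tk = ⟨s, some c, m⟩ ∧ ch = false ∧ s ≠ 0
  | .cs s c m => tk = ⟨s, some c, m⟩ ∧ ch = false ∧ s ≠ 0
  | .x1 s c m _ => tk = ⟨s, some c, m⟩ ∧ ch = false ∧ s ≠ 0
  | .xFlip s c m => tk = ⟨s, some c, m⟩ ∧ ch = false ∧ s ≠ 0
  | .x2 => ch = false

set_option maxHeartbeats 2000000 in
theorem coupled_step {N : ℕ} {st st' : BWState N} {j : Fin N} (h : bwStep st j st')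
    (ih : TokOf (st.pc j) (st.token j) (st.choosing j)) :
    TokOf (st'.pc j) (st'.token j) (st'.choosing j) := by
  unfold bwStep at h
  split at h <;> (try split at h) <;> (try split at h) <;>
    (try rcases h with rfl | ⟨_, _, rfl⟩) <;> (try rcases h with rfl | rfl) <;>
    (try subst h) <;>
    simp_all [TokOf, Function.update_self] <;> omega

theorem coupled {N : ℕ} (e : BWExec N) : ∀ (n : ℕ) (j : Fin N),
    TokOf ((e.state n).pc j) ((e.state n).token j) ((e.state n).choosing j) := by
  intro n
  induction n with
  | zero =>
    intro j
    obtain ⟨c0, hc⟩ := e.init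
    rw [hc]
    simp [bwInit, TokOf]
  | succ n ih =>
    intro j
    by_cases hs : e.sched n = j
    · exact coupled_step (hs ▸ e.step n) (ih j)
    · obtain ⟨h1, h2, h3⟩ := frame_at e hs
      rw [h1, h2, h3]
      exact ih j

end BWProof
namespace BWProof
set_option linter.unreachableTactic false
set_option linter.unusedTactic false

variable {N : ℕ} (e : BWExec N)

theorem active_trans {r : Fin N} {a b c : ℕ} (h1 : bwActiveThrough e r a b)
    (h2 : bwActiveThrough e r b c) : bwActiveThrough e r a c := by
  intro k hk1 hk2
  rcases le_or_gt k b with h | h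
  · exact h1 k hk1 h
  · exact h2 k h hk2

theorem active_of_const {r : Fin N} {a b : ℕ} {P : BWPc} (hP : P ≠ BWPc.remainder)
    (h : ∀ k, a < k → k ≤ b → (e.state k).pc r = P) : bwActiveThrough e r a b :=
  fun k h1 h2 => (h k h1 h2) ▸ hP

/-- Waiting-room pass record for index `k` with parameters `s c m` of process `r`,
within window `(t, n)`. -/
def WP (r : Fin N) (s : ℕ) (c : Color) (m : ℕ) (k : ℕ) (t n : ℕ) : Prop :=
  ∃ (hk : k < N) (τ₁ τ₂ τ₃ : ℕ),
    t < τ₁ ∧ τ₁ < τ₂ ∧ τ₂ < τ₃ ∧ τ₃ < n ∧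
    ((e.state τ₁).choosing ⟨k, hk⟩ = false ∨ ((e.state τ₁).token ⟨k, hk⟩).session = s) ∧
    ((((e.state τ₂).token ⟨k, hk⟩).color = some c ∧
       ((m < ((e.state τ₃).token ⟨k, hk⟩).number ∨
         (m = ((e.state τ₃).token ⟨k, hk⟩).number ∧ r.val < k)) ∨
        ((e.state τ₃).token ⟨k, hk⟩).color ≠ some c ∨
        ((e.state τ₃).token ⟨k, hk⟩).session = 0 ∨
        ((e.state τ₃).token ⟨k, hk⟩).session = s)) ∨
     (((e.state τ₂).token ⟨k, hk⟩).color ≠ some c ∧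
       ((e.state τ₃).gcolor ≠ c ∨ ((e.state τ₃).token ⟨k, hk⟩).color = some c ∨
        ((e.state τ₃).token ⟨k, hk⟩).session = 0 ∨
        ((e.state τ₃).token ⟨k, hk⟩).session = s)))

/-- Exit-scan pass record. -/
def XP (s : ℕ) (c : Color) (m : ℕ) (r : Fin N) (k : ℕ) (t n : ℕ) : Prop :=
  ∃ (hk : k < N) (τ : ℕ), t < τ ∧ τ < n ∧
    ¬(((e.state τ).token ⟨k, hk⟩).session ≠ 0 ∧
      ((e.state τ).token ⟨k, hk⟩).color = some c.opp)

theorem back_x1 {r : Fin N} {s : ℕ} {c : Color} {m : ℕ} : ∀ n j,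
    (e.state n).pc r = .x1 s c m j →
    m ≠ 1 ∧ ∃ t, t < n ∧ (e.state t).pc r = .cs s c m ∧ bwActiveThrough e r t n ∧
      ∀ k, k < j → k < N → XP e s c m r k t n := by
  intro n
  induction n using Nat.strong_induction_on with
  | _ n ih =>
    intro j hn
    obtain ⟨t0, ht0n, hne, hconst, hsched, hnext⟩ :=
      lastEntry e (by simp) hn
    have hstep : bwStep (e.state t0) r (e.state (t0+1)) := hsched ▸ e.step t0
    rcases inv_to_x1 hstep hnext hne with ⟨rfl, hm1, hcs⟩ | ⟨j', hj', rfl, hx1, hcond⟩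
    · exact ⟨hm1, t0, ht0n, hcs, active_of_const e (by simp) hconst,
        fun k hk _ => absurd hk (Nat.not_lt_zero k)⟩
    · obtain ⟨hm1, t, htt0, hcs, hact, hev⟩ := ih t0 ht0n j' hx1
      refine ⟨hm1, t, htt0.trans ht0n, hcs,
        active_trans e hact (active_of_const e (by simp) hconst), ?_⟩
      intro k hk hkN
      rcases Nat.lt_or_ge k j' with h | h
      · obtain ⟨hk', τ, h1, h2, h3⟩ := hev k h hkN
        exact ⟨hk', τ, h1, h2.trans ht0n, h3⟩
      · have : k = j' := by omega
        subst this
        exact ⟨hkN, t0, htt0, ht0n, by convert hcond using 3⟩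

theorem back_cs {r : Fin N} {s : ℕ} {c : Color} {m n : ℕ}
    (hn : (e.state n).pc r = .cs s c m) :
    ∃ t jn, t < n ∧ N ≤ jn ∧ (e.state t).pc r = .w1 s c m jn ∧
      bwActiveThrough e r t n := by
  obtain ⟨t0, ht0n, hne, hconst, hsched, hnext⟩ := lastEntry e (by simp) hn
  have hstep : bwStep (e.state t0) r (e.state (t0+1)) := hsched ▸ e.step t0
  obtain ⟨jn, hjn, hw⟩ := inv_to_cs hstep hnext hne
  exact ⟨t0, jn, ht0n, hjn, hw, active_of_const e (by simp) hconst⟩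

theorem back_w1 {r : Fin N} {s : ℕ} {c : Color} {m : ℕ} : ∀ n j,
    (e.state n).pc r = .w1 s c m j →
    ∃ t, t < n ∧ (e.state t).pc r = .d5 s c m ∧ bwActiveThrough e r t n ∧
      ∀ k, k < j → k < N → WP e r s c m k t n := by
  intro n
  induction n using Nat.strong_induction_on with
  | _ n ih =>
    intro j hn
    obtain ⟨t0, ht0n, hne, hconst, hsched, hnext⟩ := lastEntry e (by simp) hn
    have hstep : bwStep (e.state t0) r (e.state (t0+1)) := hsched ▸ e.step t0
    rcases inv_to_w1 hstep hnext hne with ⟨rfl, hd5⟩ | ⟨j', hj', rfl, hbr⟩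
    · exact ⟨t0, ht0n, hd5, active_of_const e (by simp) hconst,
        fun k hk _ => absurd hk (Nat.not_lt_zero k)⟩
    · -- pass of index j' at t0, via wSame or wDiff
      rcases hbr with ⟨hwS, hScond⟩ | ⟨hwD, hDcond⟩
      · -- walk back from wSame
        obtain ⟨t1, ht1t0, hne1, hconst1, hsched1, hnext1⟩ := lastEntry e (by simp) hwS
        have hstep1 : bwStep (e.state t1) r (e.state (t1+1)) := hsched1 ▸ e.step t1
        obtain ⟨hj1, hwB, hcol⟩ := inv_to_wS hstep1 hnext1 hne1
        obtain ⟨t2, ht2t1, hne2, hconst2, hsched2, hnext2⟩ := lastEntry e (by simp) hwB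
        have hstep2 : bwStep (e.state t2) r (e.state (t2+1)) := hsched2 ▸ e.step t2
        obtain ⟨hj2, hw1, hch⟩ := inv_to_wB hstep2 hnext2 hne2
        obtain ⟨t, htt2, hd5, hact, hev⟩ := ih t2 (ht2t1.trans (ht1t0.trans ht0n)) j' hw1
        refine ⟨t, by omega, hd5, ?_, ?_⟩
        · exact active_trans e hact (active_trans e
            (active_of_const e (by simp) hconst2) (active_trans e
              (active_of_const e (by simp) hconst1)
              (active_of_const e (by simp) hconst)))
        · intro k hk hkN
          rcases Nat.lt_or_ge k j' with h | h
          · obtain ⟨hk', τ₁, τ₂, τ₃, h1, h2, h3, h4, h5, h6⟩ := hev k h hkN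
            exact ⟨hk', τ₁, τ₂, τ₃, h1, h2, h3, by omega, h5, h6⟩
          · have : k = j' := by omega
            subst this
            refine ⟨hkN, t2, t1, t0, htt2, ht2t1, ht1t0, ht0n,
              by convert hch using 3, Or.inl ⟨by convert hcol using 3, by convert hScond using 4⟩⟩
      · obtain ⟨t1, ht1t0, hne1, hconst1, hsched1, hnext1⟩ := lastEntry e (by simp) hwD
        have hstep1 : bwStep (e.state t1) r (e.state (t1+1)) := hsched1 ▸ e.step t1
        obtain ⟨hj1, hwB, hcol⟩ := inv_to_wD hstep1 hnext1 hne1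
        obtain ⟨t2, ht2t1, hne2, hconst2, hsched2, hnext2⟩ := lastEntry e (by simp) hwB
        have hstep2 : bwStep (e.state t2) r (e.state (t2+1)) := hsched2 ▸ e.step t2
        obtain ⟨hj2, hw1, hch⟩ := inv_to_wB hstep2 hnext2 hne2
        obtain ⟨t, htt2, hd5, hact, hev⟩ := ih t2 (ht2t1.trans (ht1t0.trans ht0n)) j' hw1
        refine ⟨t, by omega, hd5, ?_, ?_⟩
        · exact active_trans e hact (active_trans e
            (active_of_const e (by simp) hconst2) (active_trans e
              (active_of_const e (by simp) hconst1)
              (active_of_const e (by simp) hconst)))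
        · intro k hk hkN
          rcases Nat.lt_or_ge k j' with h | h
          · obtain ⟨hk', τ₁, τ₂, τ₃, h1, h2, h3, h4, h5, h6⟩ := hev k h hkN
            exact ⟨hk', τ₁, τ₂, τ₃, h1, h2, h3, by omega, h5, h6⟩
          · have : k = j' := by omega
            subst this
            refine ⟨hkN, t2, t1, t0, htt2, ht2t1, ht1t0, ht0n,
              by convert hch using 3, Or.inr ⟨by convert hcol using 3, by convert hDcond using 3⟩⟩

theorem back_d5 {r : Fin N} {s : ℕ} {c : Color} {m n : ℕ}
    (hn : (e.state n).pc r = .d5 s c m) :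
    ∃ t, t < n ∧ (e.state t).pc r = .d4 s c m ∧ bwActiveThrough e r t n := by
  obtain ⟨t0, ht0n, hne, hconst, hsched, hnext⟩ := lastEntry e (by simp) hn
  have hstep : bwStep (e.state t0) r (e.state (t0+1)) := hsched ▸ e.step t0
  exact ⟨t0, ht0n, inv_to_d5 hstep hnext hne, active_of_const e (by simp) hconst⟩

theorem back_d4 {r : Fin N} {s : ℕ} {c : Color} {m n : ℕ}
    (hn : (e.state n).pc r = .d4 s c m) :
    ∃ t jn m', t < n ∧ N ≤ jn ∧ (e.state t).pc r = .scan s c jn m' ∧ m = m' + 1 ∧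
      bwActiveThrough e r t n := by
  obtain ⟨t0, ht0n, hne, hconst, hsched, hnext⟩ := lastEntry e (by simp) hn
  have hstep : bwStep (e.state t0) r (e.state (t0+1)) := hsched ▸ e.step t0
  obtain ⟨jn, m', hjn, hsc, hm⟩ := inv_to_d4 hstep hnext hne
  exact ⟨t0, jn, m', ht0n, hjn, hsc, hm, active_of_const e (by simp) hconst⟩

theorem back_scan {r : Fin N} {s : ℕ} {c : Color} : ∀ n j m,
    (e.state n).pc r = .scan s c j m →
    ∃ t, t < n ∧ bwLine5 e r s c t ∧ (e.state t).gcolor = c ∧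
      bwActiveThrough e r t n ∧
      (m ≠ 0 → ∃ (τ k : ℕ) (hk : k < N), t < τ ∧ τ < n ∧
        ((e.state τ).token ⟨k, hk⟩).color = some c ∧
        ((e.state τ).token ⟨k, hk⟩).session ≠ 0 ∧
        ((e.state τ).token ⟨k, hk⟩).session ≠ s ∧
        ((e.state τ).token ⟨k, hk⟩).number = m ∧
        (∃ jj mm, (e.state τ).pc r = .scan s c jj mm)) := by
  intro n
  induction n using Nat.strong_induction_on with
  | _ n ih =>
    intro j m hn
    obtain ⟨t0, ht0n, hne, hconst, hsched, hnext⟩ := lastEntry e (by simp) hn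
    have hstep : bwStep (e.state t0) r (e.state (t0+1)) := hsched ▸ e.step t0
    rcases inv_to_scan hstep hnext hne with ⟨rfl, rfl, hd3, hgc⟩ | ⟨j', m', rfl, hsc, hbr⟩
    · exact ⟨t0, ht0n, ⟨hd3, hnext⟩, hgc, active_of_const e (by simp) hconst,
        fun hm => absurd rfl hm⟩
    · obtain ⟨t, htt0, hl5, hgc, hact, hprov⟩ := ih t0 ht0n j' m' hsc
      refine ⟨t, htt0.trans ht0n, hl5, hgc,
        active_trans e hact (active_of_const e (by simp) hconst), ?_⟩
      intro hm
      rcases hbr with rfl | ⟨hj', hcol, hs0, hss, hmax⟩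
      · obtain ⟨τ, k, hk, h1, h2, h3⟩ := hprov hm
        exact ⟨τ, k, hk, h1, h2.trans ht0n, h3⟩
      · by_cases hmm : m = m'
        · subst hmm
          obtain ⟨τ, k, hk, h1, h2, h3⟩ := hprov hm
          exact ⟨τ, k, hk, h1, h2.trans ht0n, h3⟩
        · have hnum : ((e.state t0).token ⟨j', hj'⟩).number = m := by
            rw [hmax]
            rcases Nat.le_total ((e.state t0).token ⟨j', hj'⟩).number m' with h | h
            · exact absurd (hmax.trans (Nat.max_eq_left h)) hmm
            · exact (Nat.max_eq_right h).symm
          exact ⟨t0, j', hj', htt0, ht0n, hcol, hs0, hss, hnum, j', m', hsc⟩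

end BWProof
namespace BWProof
set_option linter.unreachableTactic false
set_option linter.unusedTactic false

variable {N : ℕ} (e : BWExec N)

theorem WP_mono {r : Fin N} {s : ℕ} {c : Color} {m k t n t' n' : ℕ}
    (h : WP e r s c m k t n) (h1 : t' ≤ t) (h2 : n ≤ n') : WP e r s c m k t' n' := by
  obtain ⟨hk, τ₁, τ₂, τ₃, a1, a2, a3, a4, a5, a6⟩ := h
  exact ⟨hk, τ₁, τ₂, τ₃, by omega, a2, a3, by omega, a5, a6⟩

theorem XP_mono {r : Fin N} {s : ℕ} {c : Color} {m k t n t' n' : ℕ}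
    (h : XP e s c m r k t n) (h1 : t' ≤ t) (h2 : n ≤ n') : XP e s c m r k t' n' := by
  obtain ⟨hk, τ, a1, a2, a3⟩ := h
  exact ⟨hk, τ, by omega, by omega, a3⟩

/-- Full dossier from a `cs` control point, with ordered windows:
line5 at `t`, doorway scan within `(t, ta)`, waiting-room passes within `(ta, tb)`. -/
theorem full_from_cs {r : Fin N} {s : ℕ} {c : Color} {m n : ℕ}
    (hn : (e.state n).pc r = .cs s c m) :
    ∃ t ta tb, t < ta ∧ ta < tb ∧ tb < n ∧ bwLine5 e r s c t ∧ (e.state t).gcolor = c ∧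
      bwActiveThrough e r t n ∧
      (∀ k, k < N → WP e r s c m k ta tb) ∧
      (m ≠ 1 → ∃ (τ k : ℕ) (hk : k < N) (m' : ℕ), t < τ ∧ τ < ta ∧ m = m' + 1 ∧
        ((e.state τ).token ⟨k, hk⟩).color = some c ∧
        ((e.state τ).token ⟨k, hk⟩).session ≠ 0 ∧
        ((e.state τ).token ⟨k, hk⟩).session ≠ s ∧
        ((e.state τ).token ⟨k, hk⟩).number = m' ∧
        (∃ jj mm, (e.state τ).pc r = .scan s c jj mm)) := by
  obtain ⟨t1, jn, h1n, hjn, hw1, hact1⟩ := back_cs e hn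
  obtain ⟨t2, h2n, hd5, hact2, hwp⟩ := back_w1 e t1 jn hw1
  obtain ⟨t3, h3n, hd4, hact3⟩ := back_d5 e hd5
  obtain ⟨t4, jn', m', h4n, hjn', hscan, hm, hact4⟩ := back_d4 e hd4
  obtain ⟨t5, h5n, hl5, hgc, hact5, hprov⟩ := back_scan e t4 jn' m' hscan
  have hord : t5 < t4 ∧ t4 < t3 ∧ t3 < t2 ∧ t2 < t1 ∧ t1 < n := ⟨h5n, h4n, h3n, h2n, h1n⟩
  refine ⟨t5, t2, t1, by omega, by omega, by omega, hl5, hgc, ?_, ?_, ?_⟩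
  · exact active_trans e hact5 (active_trans e hact4 (active_trans e hact3
      (active_trans e hact2 hact1)))
  · intro k hk
    exact hwp k (lt_of_lt_of_le hk hjn) hk
  · intro hm1
    have hm' : m' ≠ 0 := by omega
    obtain ⟨τ, k, hk, a1, a2, a3⟩ := hprov hm'
    exact ⟨τ, k, hk, m', by omega, by omega, hm, a3.1, a3.2.1, a3.2.2.1, a3.2.2.2.1,
      a3.2.2.2.2⟩

/-- Full dossier from an `xFlip` control point, with ordered windows. -/
theorem full_from_xFlip {r : Fin N} {s : ℕ} {c : Color} {m n : ℕ}
    (hn : (e.state n).pc r = .xFlip s c m) :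
    m ≠ 1 ∧
    ∃ t ta tb tc, t < ta ∧ ta < tb ∧ tb ≤ tc ∧ tc < n ∧
      bwLine5 e r s c t ∧ (e.state t).gcolor = c ∧
      bwActiveThrough e r t n ∧
      (∀ k, k < N → WP e r s c m k ta tb) ∧
      (∀ k, k < N → XP e s c m r k tc n) ∧
      (m ≠ 1 → ∃ (τ k : ℕ) (hk : k < N) (m' : ℕ), t < τ ∧ τ < ta ∧ m = m' + 1 ∧
        ((e.state τ).token ⟨k, hk⟩).color = some c ∧
        ((e.state τ).token ⟨k, hk⟩).session ≠ 0 ∧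
        ((e.state τ).token ⟨k, hk⟩).session ≠ s ∧
        ((e.state τ).token ⟨k, hk⟩).number = m' ∧
        (∃ jj mm, (e.state τ).pc r = .scan s c jj mm)) := by
  obtain ⟨t0, h0n, hne, hconst, hsched, hnext⟩ := lastEntry e (by simp) hn
  have hstep : bwStep (e.state t0) r (e.state (t0+1)) := hsched ▸ e.step t0
  obtain ⟨jn, hjn, hx1⟩ := inv_to_xFlip hstep hnext hne
  obtain ⟨hm1, t1, h1n, hcs, hact1, hxp⟩ := back_x1 e t0 jn hx1
  obtain ⟨t, ta, tb, hta, htb, htbn, hl5, hgc, hact, hwp, hprov⟩ := full_from_cs e hcs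
  refine ⟨hm1, t, ta, tb, t1, hta, htb, by omega, by omega, hl5, hgc, ?_, hwp, ?_, hprov⟩
  · exact active_trans e hact (active_trans e hact1
      (active_of_const e (by simp) hconst))
  · intro k hk
    exact XP_mono e (hxp k (lt_of_lt_of_le hk hjn) hk) (le_refl t1) (by omega)

/-- By fairness, a process at `x2` eventually completes its exit,
its pc staying `x2` in between. -/
theorem exit_exists {r : Fin N} {n : ℕ} (hpc : (e.state n).pc r = .x2) :
    ∃ t, n ≤ t ∧ bwCompletesExit e r t ∧
      ∀ k, n ≤ k → k ≤ t → (e.state k).pc r = .x2 := by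
  classical
  have hfair := e.fair r n (by rw [hpc]; simp)
  have hex : ∃ t, n ≤ t ∧ e.sched t = r := hfair
  set Q : ℕ → Prop := fun t => n ≤ t ∧ e.sched t = r with hQ
  obtain ⟨t0, ht0⟩ := hex
  have hQex : ∃ t, Q t := ⟨t0, ht0⟩
  set t := Nat.find hQex with htdef
  obtain ⟨htn, htsched⟩ : Q t := Nat.find_spec hQex
  have hmin : ∀ k, k < t → ¬ Q k := fun k hk => Nat.find_min hQex hk
  have hconst : ∀ k, n ≤ k → k ≤ t → (e.state k).pc r = .x2 := by
    intro k hk1 hk2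
    induction k with
    | zero => exact Nat.le_zero.mp hk1 ▸ hpc
    | succ k ihk =>
      rcases Nat.lt_or_ge n (k+1) with h | h
      · have hk : n ≤ k := by omega
        have hprev := ihk hk (by omega)
        have hns : e.sched k ≠ r := by
          intro hs
          exact hmin k (by omega) ⟨hk, hs⟩
        rw [(frame_at e hns).1]
        exact hprev
      · have : n = k + 1 := by omega
        exact this ▸ hpc
  have hx2 : (e.state t).pc r = .x2 := hconst t htn (le_refl t)
  have hstep : bwStep (e.state t) r (e.state (t+1)) := htsched ▸ e.step t
  have := fwd_x2 hstep hx2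
  refine ⟨t, htn, ⟨hx2, ?_⟩, hconst⟩
  rw [this]
  simp [Function.update_self]

/-- If a colored token changes, its owner completed its exit meanwhile. -/
theorem token_change_exit {r : Fin N} {T : BWTok} {cc : Color}
    (hcol : T.color = some cc) {a b : ℕ} (hab : a ≤ b)
    (ha : (e.state a).token r = T) (hb : (e.state b).token r ≠ T) :
    ∃ ρ, a ≤ ρ ∧ ρ < b ∧ (e.state ρ).pc r = .x2 ∧
      bwCompletesExit e r ρ ∧ (e.state ρ).token r = T := by
  classical
  have hex : ∃ k, a ≤ k ∧ k < b ∧ (e.state k).token r = T ∧ (e.state (k+1)).token r ≠ T := by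
    by_contra hc
    push_neg at hc
    have : ∀ k, a ≤ k → k ≤ b → (e.state k).token r = T := by
      intro k hk1 hk2
      induction k with
      | zero => exact Nat.le_zero.mp hk1 ▸ ha
      | succ k ihk =>
        rcases Nat.lt_or_ge a (k+1) with h | h
        · have hk : a ≤ k := by omega
          exact (not_not.mp (fun hne => hne (hc k hk (by omega) (ihk hk (by omega))))
            : (e.state (k+1)).token r = T)
        · have : a = k + 1 := by omega
          exact this ▸ ha
    exact hb (this b hab (le_refl b))
  obtain ⟨ρ, hρa, hρb, hρT, hρT'⟩ := hex
  have hsched : e.sched ρ = r := sched_of_token_change e (by rw [hρT]; exact hρT')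
  have hstep : bwStep (e.state ρ) r (e.state (ρ+1)) := hsched ▸ e.step ρ
  have hch := inv_token_change hstep (by rw [hρT]; exact hρT')
  have hcoup := coupled e ρ r
  rcases hch with ⟨s', hpc⟩ | ⟨s', c', m', hpc⟩ | hpc
  · rw [hpc] at hcoup
    simp only [TokOf] at hcoup
    have hTi : T = BWTok.init := by rw [← hρT, hcoup.1]
    rw [hTi] at hcol
    exact absurd hcol (by simp [BWTok.init])
  · rw [hpc] at hcoup
    simp only [TokOf] at hcoup
    have hTc : T.color = none := by rw [← hρT, hcoup.1]
    rw [hcol] at hTc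
    exact absurd hTc (by simp)
  · have := fwd_x2 hstep hpc
    refine ⟨ρ, hρa, hρb, hpc, ⟨hpc, ?_⟩, hρT⟩
    rw [this]
    simp [Function.update_self]

end BWProof
namespace BWProof
set_option linter.unreachableTactic false
set_option linter.unusedTactic false

variable {N : ℕ} (e : BWExec N)

/-- Walking back from an exit point with a known (colored) token value. -/
theorem exit_back {r : Fin N} {ρ σ nn : ℕ} {cc : Color}
    (hpc : (e.state ρ).pc r = .x2)
    (htok : (e.state ρ).token r = ⟨σ, some cc, nn⟩) :
    ∃ t1, t1 < ρ ∧ bwActiveThrough e r t1 ρ ∧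
      ((e.state t1).pc r = .xFlip σ cc nn ∨ (∃ j, (e.state t1).pc r = .x1 σ cc nn j) ∨
       ((e.state t1).pc r = .cs σ cc nn ∧ nn = 1)) := by
  obtain ⟨t1, ht1, hne, hconst, hsched, hnext⟩ := lastEntry e (by simp) hpc
  have hstep : bwStep (e.state t1) r (e.state (t1+1)) := hsched ▸ e.step t1
  -- token is constant on [t1, ρ]
  have htokconst : ∀ k, t1 + 1 ≤ k → k ≤ ρ → (e.state k).token r = (e.state (t1+1)).token r := by
    intro k hk1 hk2
    induction k with
    | zero => omega
    | succ k ihk =>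
      rcases Nat.lt_or_ge (t1+1) (k+1) with h | h
      · have hk : t1 + 1 ≤ k := by omega
        have ih := ihk hk (by omega)
        by_cases hs : e.sched k = r
        · have hstepk : bwStep (e.state k) r (e.state (k+1)) := hs ▸ e.step k
          by_cases htk : (e.state (k+1)).token r = (e.state k).token r
          · rw [htk]; exact ih
          · exfalso
            rcases inv_token_change hstepk htk with ⟨s', hpck⟩ | ⟨s', c', m', hpck⟩ | hpck
            · rw [hconst k (by omega) (by omega)] at hpck; cases hpck
            · rw [hconst k (by omega) (by omega)] at hpck; cases hpck
            · have := fwd_x2 hstepk hpck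
              have hrem : (e.state (k+1)).pc r = .remainder := by
                rw [this]; simp [Function.update_self]
              rw [hconst (k+1) (by omega) (by omega)] at hrem
              cases hrem
        · rw [(frame_at e hs).2.1]; exact ih
      · have : t1 + 1 = k + 1 := by omega
        rw [this]
  have htok1 : (e.state (t1+1)).token r = ⟨σ, some cc, nn⟩ := by
    rcases Nat.lt_or_ge (t1+1) ρ with h | h
    · rw [← htokconst ρ (by omega) (le_refl ρ)]; exact htok
    · have : t1 + 1 = ρ := by omega
      rw [this]; exact htok
  -- the step into x2 does not change the token
  have htok0 : (e.state t1).token r = ⟨σ, some cc, nn⟩ := by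
    by_cases htk : (e.state (t1+1)).token r = (e.state t1).token r
    · rw [← htk]; exact htok1
    · exfalso
      rcases inv_to_x2 hstep hnext hne with ⟨s', c', m', hp⟩ | ⟨s', c', m', j', hp⟩ | ⟨s', c', hp⟩ <;>
        rcases inv_token_change hstep htk with ⟨s'', hpk⟩ | ⟨s'', c'', m'', hpk⟩ | hpk <;>
        rw [hp] at hpk <;> cases hpk
  have hcoup := coupled e t1 r
  have hact : bwActiveThrough e r t1 ρ := active_of_const e (by simp) hconst
  rcases inv_to_x2 hstep hnext hne with ⟨s', c', m', hp⟩ | ⟨s', c', m', j', hp⟩ | ⟨s', c', hp⟩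
  · rw [hp] at hcoup
    simp only [TokOf] at hcoup
    rw [htok0] at hcoup
    obtain ⟨h1, -, -⟩ := hcoup
    injection h1 with e1 e2 e3
    injection e2 with e2
    exact ⟨t1, ht1, hact, Or.inl (by rw [hp, e1, e2, e3])⟩
  · rw [hp] at hcoup
    simp only [TokOf] at hcoup
    rw [htok0] at hcoup
    obtain ⟨h1, -, -⟩ := hcoup
    injection h1 with e1 e2 e3
    injection e2 with e2
    exact ⟨t1, ht1, hact, Or.inr (Or.inl ⟨j', by rw [hp, e1, e2, e3]⟩)⟩
  · rw [hp] at hcoup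
    simp only [TokOf] at hcoup
    rw [htok0] at hcoup
    obtain ⟨h1, -, -⟩ := hcoup
    injection h1 with e1 e2 e3
    injection e2 with e2
    exact ⟨t1, ht1, hact, Or.inr (Or.inr ⟨by rw [hp, e1, e2, e3], e3⟩)⟩

/-- Dossier of a process from an exit point with colored token. -/
theorem full_from_exit {r : Fin N} {ρ σ nn : ℕ} {cc : Color}
    (hpc : (e.state ρ).pc r = .x2)
    (htok : (e.state ρ).token r = ⟨σ, some cc, nn⟩) :
    ∃ t, t < ρ ∧ bwLine5 e r σ cc t ∧ (e.state t).gcolor = cc ∧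
      bwActiveThrough e r t ρ ∧ (∀ k, k < N → WP e r σ cc nn k t ρ) := by
  obtain ⟨t1, ht1, hact1, hcase⟩ := exit_back e hpc htok
  rcases hcase with hxf | ⟨j, hx1⟩ | ⟨hcs, hnn⟩
  · obtain ⟨hm1, t, ta, tb, tc, o1, o2, o3, o4, hl5, hgc, hact, hwp, -, -⟩ :=
      full_from_xFlip e hxf
    exact ⟨t, by omega, hl5, hgc, active_trans e hact hact1,
      fun k hk => WP_mono e (hwp k hk) (by omega) (by omega)⟩
  · obtain ⟨hm1, t2, ht2, hcs, hact2, -⟩ := back_x1 e t1 j hx1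
    obtain ⟨t, ta, tb, o1, o2, o3, hl5, hgc, hact, hwp, -⟩ := full_from_cs e hcs
    exact ⟨t, by omega, hl5, hgc,
      active_trans e hact (active_trans e hact2 hact1),
      fun k hk => WP_mono e (hwp k hk) (by omega) (by omega)⟩
  · obtain ⟨t, ta, tb, o1, o2, o3, hl5, hgc, hact, hwp, -⟩ := full_from_cs e hcs
    exact ⟨t, by omega, hl5, hgc, active_trans e hact hact1,
      fun k hk => WP_mono e (hwp k hk) (by omega) (by omega)⟩

end BWProof
namespace BWProof
set_option linter.unreachableTactic false
set_option linter.unusedTactic false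

/-- Phase 1 of process `i`'s invocation with color `c`: doorway scan / pre-token. -/
def Phi1 {N : ℕ} (st : BWState N) (i : Fin N) (s : ℕ) (c : Color) : Prop :=
  (∃ j m, st.pc i = .scan s c j m) ∨ (∃ m, st.pc i = .d4 s c m)

/-- Phase 2: colored token written, up to `xFlip`. -/
def Phi2 {N : ℕ} (st : BWState N) (i : Fin N) (s : ℕ) (c : Color) : Prop :=
  ∃ m, st.pc i = .d5 s c m ∨ (∃ j, st.pc i = .w1 s c m j) ∨ (∃ j, st.pc i = .wB s c m j) ∨
    (∃ j, st.pc i = .wSame s c m j) ∨ (∃ j, st.pc i = .wDiff s c m j) ∨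
    st.pc i = .cs s c m ∨ (∃ j, st.pc i = .x1 s c m j) ∨ st.pc i = .xFlip s c m

/-- Phase 3: at `x2`, token still colored. -/
def Phi3 {N : ℕ} (st : BWState N) (i : Fin N) (s : ℕ) (c : Color) : Prop :=
  st.pc i = .x2 ∧ ∃ m, st.token i = ⟨s, some c, m⟩

variable {N : ℕ} (e : BWExec N)

theorem phi1_step {i : Fin N} {s : ℕ} {c : Color} {t : ℕ}
    (h : Phi1 (e.state t) i s c) :
    Phi1 (e.state (t+1)) i s c ∨ Phi2 (e.state (t+1)) i s c := by
  by_cases hs : e.sched t = i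
  · have hstep : bwStep (e.state t) i (e.state (t+1)) := hs ▸ e.step t
    rcases h with ⟨j, m, hpc⟩ | ⟨m, hpc⟩
    · unfold bwStep at hstep
      rw [hpc] at hstep; dsimp only [] at hstep
      split at hstep
      · rw [hstep]
        exact Or.inl (Or.inl ⟨j+1, _, Function.update_self _ _ _⟩)
      · rw [hstep]
        exact Or.inl (Or.inr ⟨m+1, by simp [Function.update_self]⟩)
    · unfold bwStep at hstep
      rw [hpc] at hstep; dsimp only [] at hstep
      rw [hstep]
      exact Or.inr ⟨m, Or.inl (by simp [Function.update_self])⟩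
  · have := (frame_at e hs).1
    rcases h with ⟨j, m, hpc⟩ | ⟨m, hpc⟩
    · exact Or.inl (Or.inl ⟨j, m, this ▸ hpc⟩)
    · exact Or.inl (Or.inr ⟨m, this ▸ hpc⟩)

theorem phi2_step {i : Fin N} {s : ℕ} {c : Color} {t : ℕ}
    (h : Phi2 (e.state t) i s c) :
    Phi2 (e.state (t+1)) i s c ∨ Phi3 (e.state (t+1)) i s c := by
  by_cases hs : e.sched t = i
  · have hstep : bwStep (e.state t) i (e.state (t+1)) := hs ▸ e.step t
    have hcoup := coupled e t i
    obtain ⟨m, hc⟩ := h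
    rcases hc with hpc | ⟨j, hpc⟩ | ⟨j, hpc⟩ | ⟨j, hpc⟩ | ⟨j, hpc⟩ | hpc | ⟨j, hpc⟩ | hpc
    · -- d5 → w1
      unfold bwStep at hstep; rw [hpc] at hstep; dsimp only [] at hstep; rw [hstep]
      exact Or.inl ⟨m, Or.inr (Or.inl ⟨0, by simp [Function.update_self]⟩)⟩
    · -- w1
      unfold bwStep at hstep; rw [hpc] at hstep; dsimp only [] at hstep
      split at hstep
      · split at hstep
        · rw [hstep]
          exact Or.inl ⟨m, Or.inr (Or.inr (Or.inl ⟨j, by simp [Function.update_self]⟩))⟩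
        · rw [hstep]
          exact Or.inl ⟨m, Or.inr (Or.inl ⟨j, hpc⟩)⟩
      · rw [hstep]
        exact Or.inl ⟨m, Or.inr (Or.inr (Or.inr (Or.inr (Or.inr (Or.inl
          (by simp [Function.update_self]))))))⟩
    · -- wB
      unfold bwStep at hstep; rw [hpc] at hstep; dsimp only [] at hstep
      split at hstep
      · split at hstep
        · rw [hstep]
          exact Or.inl ⟨m, Or.inr (Or.inr (Or.inr (Or.inl ⟨j, by simp [Function.update_self]⟩)))⟩
        · rw [hstep]
          exact Or.inl ⟨m, Or.inr (Or.inr (Or.inr (Or.inr (Or.inl ⟨j, by simp [Function.update_self]⟩))))⟩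
      · rw [hstep]
        exact Or.inl ⟨m, Or.inr (Or.inr (Or.inl ⟨j, hpc⟩))⟩
    · -- wSame
      unfold bwStep at hstep; rw [hpc] at hstep; dsimp only [] at hstep
      split at hstep
      · split at hstep
        · rw [hstep]
          exact Or.inl ⟨m, Or.inr (Or.inl ⟨j+1, by simp [Function.update_self]⟩)⟩
        · rw [hstep]
          exact Or.inl ⟨m, Or.inr (Or.inr (Or.inr (Or.inl ⟨j, hpc⟩)))⟩
      · rw [hstep]
        exact Or.inl ⟨m, Or.inr (Or.inr (Or.inr (Or.inl ⟨j, hpc⟩)))⟩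
    · -- wDiff
      unfold bwStep at hstep; rw [hpc] at hstep; dsimp only [] at hstep
      split at hstep
      · split at hstep
        · rw [hstep]
          exact Or.inl ⟨m, Or.inr (Or.inl ⟨j+1, by simp [Function.update_self]⟩)⟩
        · rw [hstep]
          exact Or.inl ⟨m, Or.inr (Or.inr (Or.inr (Or.inr (Or.inl ⟨j, hpc⟩))))⟩
      · rw [hstep]
        exact Or.inl ⟨m, Or.inr (Or.inr (Or.inr (Or.inr (Or.inl ⟨j, hpc⟩))))⟩
    · -- cs
      unfold bwStep at hstep; rw [hpc] at hstep; dsimp only [] at hstep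
      rcases hstep with hstep | hstep
      · rw [hstep]
        exact Or.inl ⟨m, Or.inr (Or.inr (Or.inr (Or.inr (Or.inr (Or.inl hpc)))))⟩
      · rw [hpc] at hcoup
        simp only [TokOf] at hcoup
        by_cases hm : m = 1
        · rw [hstep]
          refine Or.inr ⟨by simp [Function.update_self, hm], ⟨m, ?_⟩⟩
          simpa using hcoup.1
        · rw [hstep]
          exact Or.inl ⟨m, Or.inr (Or.inr (Or.inr (Or.inr (Or.inr (Or.inr (Or.inl
            ⟨0, by simp [Function.update_self, hm]⟩))))))⟩
    · -- x1
      unfold bwStep at hstep; rw [hpc] at hstep; dsimp only [] at hstep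
      rw [hpc] at hcoup
      simp only [TokOf] at hcoup
      split at hstep
      · split at hstep
        · rw [hstep]
          refine Or.inr ⟨by simp [Function.update_self], ⟨m, ?_⟩⟩
          simpa using hcoup.1
        · rw [hstep]
          exact Or.inl ⟨m, Or.inr (Or.inr (Or.inr (Or.inr (Or.inr (Or.inr (Or.inl
            ⟨j+1, by simp [Function.update_self]⟩))))))⟩
      · rw [hstep]
        exact Or.inl ⟨m, Or.inr (Or.inr (Or.inr (Or.inr (Or.inr (Or.inr (Or.inr
          (by simp [Function.update_self])))))))⟩
    · -- xFlip
      unfold bwStep at hstep; rw [hpc] at hstep; dsimp only [] at hstep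
      rw [hpc] at hcoup
      simp only [TokOf] at hcoup
      rw [hstep]
      refine Or.inr ⟨by simp [Function.update_self], ⟨m, ?_⟩⟩
      simpa using hcoup.1
  · obtain ⟨h1, h2, h3⟩ := frame_at e hs
    obtain ⟨m, hc⟩ := h
    rw [← h1] at hc
    exact Or.inl ⟨m, hc⟩

theorem phi3_step {i : Fin N} {s : ℕ} {c : Color} {t : ℕ}
    (h : Phi3 (e.state t) i s c) (hact : (e.state (t+1)).pc i ≠ .remainder) :
    Phi3 (e.state (t+1)) i s c := by
  obtain ⟨hpc, m, htok⟩ := h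
  by_cases hs : e.sched t = i
  · exfalso
    have hstep : bwStep (e.state t) i (e.state (t+1)) := hs ▸ e.step t
    have := fwd_x2 hstep hpc
    apply hact
    rw [this]
    simp [Function.update_self]
  · obtain ⟨h1, h2, h3⟩ := frame_at e hs
    exact ⟨h1 ▸ hpc, m, h2 ▸ htok⟩

/-- Φ holds throughout `i`'s invocation after line 5. -/
theorem phi_all {i : Fin N} {s : ℕ} {c : Color} {u w : ℕ}
    (hline5 : bwLine5 e i s c u) (hactive : bwActiveThrough e i u w) :
    ∀ t, u < t → t ≤ w →
      Phi1 (e.state t) i s c ∨ Phi2 (e.state t) i s c ∨ Phi3 (e.state t) i s c := by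
  intro t
  induction t with
  | zero => omega
  | succ t ih =>
    intro h1 h2
    rcases Nat.lt_or_ge u t with h | h
    · have hprev := ih h (by omega)
      rcases hprev with hp | hp | hp
      · rcases phi1_step e hp with h' | h'
        · exact Or.inl h'
        · exact Or.inr (Or.inl h')
      · rcases phi2_step e hp with h' | h'
        · exact Or.inr (Or.inl h')
        · exact Or.inr (Or.inr h')
      · exact Or.inr (Or.inr (phi3_step e hp (hactive (t+1) (by omega) h2)))
    · have : u = t := by omega
      subst this
      exact Or.inl (Or.inl ⟨0, 0, hline5.2⟩)

/-- Phases 2–3 are upward closed in time (within the invocation). -/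
theorem phi23_mono {i : Fin N} {s : ℕ} {c : Color} {u w : ℕ}
    (hactive : bwActiveThrough e i u w) :
    ∀ a b, u < a → a ≤ b → b ≤ w →
      (Phi2 (e.state a) i s c ∨ Phi3 (e.state a) i s c) →
      (Phi2 (e.state b) i s c ∨ Phi3 (e.state b) i s c) := by
  intro a b hua hab hbw h
  induction b with
  | zero =>
    have : a = 0 := by omega
    exact this ▸ h
  | succ b ih =>
    rcases Nat.lt_or_ge a (b+1) with hlt | hge
    · have hb := ih (by omega) (by omega)
      rcases hb with hp | hp
      · exact phi2_step e hp
      · exact Or.inr (phi3_step e hp (hactive (b+1) (by omega) hbw))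
    · have : a = b + 1 := by omega
      exact this ▸ h
end BWProof
namespace BWProof
set_option linter.unreachableTactic false
set_option linter.unusedTactic false

theorem Color.eq_opp_of_ne {a b : Color} (h : a ≠ b) : a = b.opp := by
  cases a <;> cases b <;> simp_all [_root_.Color.opp]

variable {N : ℕ}

theorem phi_pc_ne_d3 {st : BWState N} {i : Fin N} {s : ℕ} {c : Color}
    (h : Phi1 st i s c ∨ Phi2 st i s c ∨ Phi3 st i s c) (s' : ℕ) :
    st.pc i ≠ .d3 s' := by
  rcases h with (⟨j, m, hp⟩ | ⟨m, hp⟩) | ⟨m, hc⟩ | ⟨hp, -⟩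
  · simp [hp]
  · simp [hp]
  · rcases hc with hp | ⟨j, hp⟩ | ⟨j, hp⟩ | ⟨j, hp⟩ | ⟨j, hp⟩ | hp | ⟨j, hp⟩ | hp <;> simp [hp]
  · simp [hp]

theorem phi1_fields {st : BWState N} {i : Fin N} {s : ℕ} {c : Color}
    (hcoup : TokOf (st.pc i) (st.token i) (st.choosing i))
    (h : Phi1 st i s c) :
    st.choosing i = true ∧ st.token i = ⟨s, none, 0⟩ := by
  rcases h with ⟨j, m, hp⟩ | ⟨m, hp⟩ <;>
    (rw [hp] at hcoup; simp only [TokOf] at hcoup; exact ⟨hcoup.2.1, hcoup.1⟩)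

theorem phi23_token {st : BWState N} {i : Fin N} {s : ℕ} {c : Color}
    (hcoup : TokOf (st.pc i) (st.token i) (st.choosing i))
    (h : Phi2 st i s c ∨ Phi3 st i s c) :
    ∃ m, st.token i = ⟨s, some c, m⟩ := by
  rcases h with ⟨m, hc⟩ | ⟨-, m, htok⟩
  · rcases hc with hp | ⟨j, hp⟩ | ⟨j, hp⟩ | ⟨j, hp⟩ | ⟨j, hp⟩ | hp | ⟨j, hp⟩ | hp <;>
      (rw [hp] at hcoup; simp only [TokOf] at hcoup; exact ⟨m, hcoup.1⟩)
  · exact ⟨m, htok⟩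

theorem phi_token_session {st : BWState N} {i : Fin N} {s : ℕ} {c : Color}
    (hcoup : TokOf (st.pc i) (st.token i) (st.choosing i))
    (h : Phi1 st i s c ∨ Phi2 st i s c ∨ Phi3 st i s c) :
    (st.token i).session = s := by
  rcases h with h | h
  · rw [(phi1_fields hcoup h).2]
  · obtain ⟨m, htok⟩ := phi23_token hcoup h
    rw [htok]

theorem phi_token_color_ne {st : BWState N} {i : Fin N} {s : ℕ} {c : Color}
    (hcoup : TokOf (st.pc i) (st.token i) (st.choosing i))
    (h : Phi1 st i s c ∨ Phi2 st i s c ∨ Phi3 st i s c) :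
    (st.token i).color ≠ some c.opp := by
  rcases h with h | h
  · rw [(phi1_fields hcoup h).2]; simp
  · obtain ⟨m, htok⟩ := phi23_token hcoup h
    rw [htok]
    simp only [ne_eq, Option.some.injEq]
    exact fun hc => Color.ne_opp c hc

theorem bw_key (e : BWExec N) : ∀ (f2 : ℕ) (i : Fin N) (s : ℕ) (c : Color) (u w f1 : ℕ),
    bwLine5 e i s c u → bwActiveThrough e i u w → bwCompletesExit e i w →
    u < f1 → f1 < f2 → f2 ≤ w → bwFlipAt e f1 → bwFlipAt e f2 → False := by
  intro f2
  induction f2 using Nat.strong_induction_on with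
  | _ f2 IH =>
  intro i s c u w f1 hline5 hactive hexit h1 h12 h2w hf1 hf2
  classical
  -- basics about the line-5 read
  have hsu : e.sched u = i := sched_of_pc_change e (by rw [hline5.2, hline5.1]; simp)
  have hstepu : bwStep (e.state u) i (e.state (u+1)) := hsu ▸ e.step u
  have hfw := fwd_d3 hstepu hline5.1
  have hgcu : (e.state u).gcolor = c := by
    have hh : (e.state (u+1)).pc i = .scan s ((e.state u).gcolor) 0 0 := by
      rw [hfw]; simp [Function.update_self]
    rw [hline5.2] at hh
    injection hh with e1 e2 e3 e4
    exact e2.symm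
  have hnoflipu : ¬ bwFlipAt e u := by
    intro hff
    obtain ⟨s', m', hpcu, -⟩ := inv_gcolor_change hstepu hff
    rw [hline5.1] at hpcu; cases hpcu
  have hs0 : s ≠ 0 := by
    have hcoup := coupled e u i
    rw [hline5.1] at hcoup
    simp only [TokOf] at hcoup
    exact hcoup.2.2
  -- gcolor is c throughout [u, f1]
  have hgf1 : (e.state f1).gcolor = c := by
    have hnf : ∀ t, u ≤ t → t < f1 → ¬ bwFlipAt e t := by
      intro t ht1 ht2 hft
      rcases Nat.eq_or_lt_of_le ht1 with rfl | hlt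
      · exact hnoflipu hft
      · exact IH f1 (by omega) i s c u w t hline5 hactive hexit hlt ht2 (by omega) hft hf1
    rw [gcolor_const e (by omega : u ≤ f1) hnf, hgcu]
  -- least flip g2 in (f1, f2]
  have hex : ∃ t, f1 < t ∧ t ≤ f2 ∧ bwFlipAt e t := ⟨f2, h12, le_refl f2, hf2⟩
  set g2 := Nat.find hex with hg2def
  obtain ⟨hg2a, hg2b, hg2flip⟩ : f1 < g2 ∧ g2 ≤ f2 ∧ bwFlipAt e g2 := Nat.find_spec hex
  have hg2min : ∀ t, f1 < t → t < g2 → ¬ bwFlipAt e t := by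
    intro t ha hb hft
    exact Nat.find_min hex hb ⟨ha, by omega, hft⟩
  have hgbar : ∀ t, f1 + 1 ≤ t → t ≤ g2 → (e.state t).gcolor = c.opp := by
    intro t ha hb
    have h1' : (e.state (f1+1)).gcolor = c.opp := by
      have hfx := hf1
      unfold bwFlipAt at hfx
      rw [hgf1] at hfx
      exact Color.eq_opp_of_ne hfx
    rw [gcolor_const e ha (fun k hk1 hk2 => hg2min k (by omega) (by omega)), h1']
  -- the flipper q at g2
  have hstepg2 : bwStep (e.state g2) (e.sched g2) (e.state (g2+1)) := e.step g2
  obtain ⟨sq, mq, hpcq, hgc', hpcq', -⟩ := inv_gcolor_change hstepg2 hg2flip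
  rw [hgbar g2 (by omega) (le_refl g2)] at hpcq
  set q := e.sched g2 with hqdef
  -- q's dossier
  obtain ⟨hmq1, tq, ta, tb, tc, o1, o2, o3, o4, hl5q, hgtq, hactq, hwpq, hxpq, hprovq⟩ :=
    full_from_xFlip e hpcq
  by_cases htqf1 : tq ≤ f1
  · -- Case B : q's read is old; q itself witnesses an earlier double flip
    have htqne : tq ≠ f1 := by
      intro hh
      rw [hh, hgf1] at hgtq
      exact Color.ne_opp c hgtq
    obtain ⟨e', he1, he2, he3⟩ := exists_flip e (show tq ≤ f1 by omega)
      (by rw [hgf1, hgtq]; exact Color.ne_opp c)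
    have hsq' : e.sched tq = q := sched_of_pc_change e (by rw [hl5q.2, hl5q.1]; simp)
    have hnofliptq : ¬ bwFlipAt e tq := by
      intro hff
      obtain ⟨s', m', hpcc, -⟩ := inv_gcolor_change (hsq' ▸ e.step tq) hff
      rw [hl5q.1] at hpcc; cases hpcc
    have he1' : tq < e' := by
      rcases Nat.eq_or_lt_of_le he1 with rfl | h
      · exact absurd he3 hnofliptq
      · exact h
    obtain ⟨tx, htx1, hcex, hconstx⟩ := exit_exists e (show (e.state (g2+1)).pc q = .x2 from hpcq')
    have hactx : bwActiveThrough e q tq tx := by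
      apply active_trans e (b := g2) hactq
      intro k hk1 hk2
      rw [hconstx k (by omega) hk2]; simp
    exact IH f1 (by omega) q sq c.opp tq tx e' hl5q hactx hcex he1' he2 (by omega) he3 hf1
  · -- Case A : q's read is inside (f1, g2)
    push_neg at htqf1
    have hphi := phi_all e hline5 hactive
    have hiq : i ≠ q := by
      intro hh
      exact phi_pc_ne_d3 (hphi tq (by omega) (by omega)) sq (by rw [hh]; exact hl5q.1)
    -- q's waiting-room pass of index i
    obtain ⟨hkI, τ₁, τ₂, τ₃, hb1, hb2, hb3, hb4, hw1c, hbr⟩ := hwpq i.val i.isLt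
    rw [Fin.eta i hkI] at hw1c hbr
    -- If i were already past its doorway at τ₁, q's exit scan would have seen it
    have hcontra23 : ¬ (Phi2 (e.state τ₁) i s c ∨ Phi3 (e.state τ₁) i s c) := by
      intro h23
      obtain ⟨hkI2, τx, hx1, hx2, hxc⟩ := hxpq i.val i.isLt
      rw [Fin.eta i hkI2] at hxc
      have h23x := phi23_mono e hactive τ₁ τx (by omega) (by omega) (by omega) h23
      obtain ⟨mi, htoki⟩ := phi23_token (coupled e τx i) h23x
      apply hxc
      refine ⟨by rw [htoki]; exact hs0, ?_⟩
      rw [htoki, Color.opp_opp]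
    have hphi1' : Phi1 (e.state τ₁) i s c := by
      rcases hphi τ₁ (by omega) (by omega) with h' | h' | h'
      · exact h'
      · exact absurd (Or.inl h') hcontra23
      · exact absurd (Or.inr h') hcontra23
    have hch := phi1_fields (coupled e τ₁ i) hphi1'
    have hsqs : sq = s := by
      rcases hw1c with hc' | hc'
      · rw [hch.1] at hc'; cases hc'
      · rw [hch.2] at hc'; exact hc'.symm
    -- the companion d of q
    obtain ⟨τ₀, kh, hkh, m', hp1, hp2, hmq, hcolh, hs0h, hssh, hnumh, jj, mm, hpcqτ⟩ :=
      hprovq hmq1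
    set d := (⟨kh, hkh⟩ : Fin N) with hddef
    have hT : (e.state τ₀).token d = ⟨((e.state τ₀).token d).session, some c.opp, m'⟩ := by
      rcases htk : (e.state τ₀).token d with ⟨σ', col', num'⟩
      rw [htk] at hcolh hnumh
      simp only at hcolh hnumh ⊢
      rw [hcolh, hnumh]
    set σh := ((e.state τ₀).token d).session with hσdef
    have hτ₀u : u < τ₀ := by omega
    have hτ₀w : τ₀ ≤ w := by omega
    have hhi : d ≠ i := by
      intro hh
      have hne := phi_token_color_ne (coupled e τ₀ i) (hphi τ₀ hτ₀u hτ₀w)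
      rw [← hh] at hne
      rw [hT] at hne
      exact hne rfl
    have hhq : d ≠ q := by
      intro hh
      have hcoupq := coupled e τ₀ q
      rw [hpcqτ] at hcoupq
      simp only [TokOf] at hcoupq
      rw [← hh, hT] at hcoupq
      injection hcoupq.1 with a1 a2 a3
      cases a2
    -- q's waiting-room pass of index d forces d to exit before g2
    obtain ⟨hkh2, π₁, π₂, π₃, hq1, hq2, hq3, hq4, hw1ch, hbrh⟩ := hwpq kh hkh
    have hdeq : (⟨kh, hkh2⟩ : Fin N) = d := rfl
    rw [hdeq] at hw1ch hbrh
    have hνex : ∃ ν, τ₀ ≤ ν ∧ ν < g2 ∧ (e.state ν).token d ≠ ⟨σh, some c.opp, m'⟩ := by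
      by_cases hπ2 : (e.state π₂).token d = ⟨σh, some c.opp, m'⟩
      · refine ⟨π₃, by omega, by omega, ?_⟩
        intro hπ3
        rcases hbrh with ⟨hcol2, hSc⟩ | ⟨hcol2, -⟩
        · rw [hπ3] at hSc
          simp only at hSc
          rcases hSc with (h' | ⟨h', -⟩) | h' | h' | h'
          · omega
          · omega
          · exact h' rfl
          · exact hs0h h'
          · exact hssh h'
        · rw [hπ2] at hcol2
          exact hcol2 rfl
      · exact ⟨π₂, by omega, by omega, hπ2⟩
    obtain ⟨ν, hν1, hν2, hν3⟩ := hνex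
    obtain ⟨ρ, hρ1, hρ2, hρpc, hρex, hρtok⟩ :=
      token_change_exit e (show (⟨σh, some c.opp, m'⟩ : BWTok).color = some c.opp from rfl)
        hν1 hT hν3
    -- d's dossier
    obtain ⟨th, hth, hl5h, hgch, hacth, hwph⟩ := full_from_exit e hρpc hρtok
    by_cases hthf1 : th ≤ f1
    · -- d read its color before f1: earlier double flip, contradiction with IH
      have hthne : th ≠ f1 := by
        intro hh
        rw [hh, hgf1] at hgch
        exact Color.ne_opp c hgch
      obtain ⟨e'', he1'', he2'', he3''⟩ := exists_flip e (show th ≤ f1 by omega)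
        (by rw [hgf1, hgch]; exact Color.ne_opp c)
      have hsh' : e.sched th = d := sched_of_pc_change e (by rw [hl5h.2, hl5h.1]; simp)
      have hnoflipth : ¬ bwFlipAt e th := by
        intro hff
        obtain ⟨s', m'', hpcc, -⟩ := inv_gcolor_change (hsh' ▸ e.step th) hff
        rw [hl5h.1] at hpcc; cases hpcc
      have he1''' : th < e'' := by
        rcases Nat.eq_or_lt_of_le he1'' with rfl | h'
        · exact absurd he3'' hnoflipth
        · exact h'
      exact IH f1 (by omega) d σh c.opp th ρ e'' hl5h hacth hρex he1''' he2'' (by omega)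
        he3'' hf1
    · -- d read inside (f1, g2): its waiting-room pass of i is impossible
      push_neg at hthf1
      obtain ⟨hkI3, κ₁, κ₂, κ₃, hk1, hk2, hk3, hk4, hw1ci, hbri⟩ := hwph i.val i.isLt
      rw [Fin.eta i hkI3] at hw1ci hbri
      have hκ1u : u < κ₁ := by omega
      have hκ3w : κ₃ ≤ w := by omega
      have hsσ : s ≠ σh := by
        intro hh
        exact hssh (by rw [← hh, hsqs])
      have hchf : (e.state κ₁).choosing i = false := by
        rcases hw1ci with h' | h'
        · exact h'
        · exfalso
          apply hsσ
          rw [← phi_token_session (coupled e κ₁ i) (hphi κ₁ hκ1u (by omega))]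
          exact h'
      have h23κ : Phi2 (e.state κ₁) i s c ∨ Phi3 (e.state κ₁) i s c := by
        rcases hphi κ₁ hκ1u (by omega) with h' | h' | h'
        · exfalso
          have := (phi1_fields (coupled e κ₁ i) h').1
          rw [hchf] at this
          cases this
        · exact Or.inl h'
        · exact Or.inr h'
      obtain ⟨m₂, htok2⟩ := phi23_token (coupled e κ₂ i)
        (phi23_mono e hactive κ₁ κ₂ hκ1u (by omega) (by omega) h23κ)
      obtain ⟨m₃, htok3⟩ := phi23_token (coupled e κ₃ i)
        (phi23_mono e hactive κ₁ κ₃ hκ1u (by omega) (by omega) h23κ)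
      rcases hbri with ⟨hcol2, -⟩ | ⟨-, hDc⟩
      · rw [htok2] at hcol2
        simp only [Option.some.injEq] at hcol2
        exact Color.ne_opp c hcol2
      · rcases hDc with h' | h' | h' | h'
        · exact h' (hgbar κ₃ (by omega) (by omega))
        · rw [htok3] at h'
          simp only [Option.some.injEq] at h'
          exact Color.ne_opp c h'
        · rw [htok3] at h'
          exact hs0 h'
        · rw [htok3] at h'
          exact hsσ h'

end BWProof


/-- **Lemma 3 for the BWBGME algorithm (the key invariant).**  After process `i` performs
its line-5 read of GlobalColor (at step `u`), GlobalColor cannot be flipped more than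
once before `i` completes its exit section (at step `w` of the same invocation, resetting
Token[i] to (0,⊥,0)). -/
theorem bw_at_most_one_flip {N : ℕ} (e : BWExec N) (i : Fin N) (s : ℕ) (c : Color)
    (u w : ℕ)
    (hline5 : bwLine5 e i s c u) (huw : u < w)
    (hactive : bwActiveThrough e i u w)
    (hexit : bwCompletesExit e i w)
    (f1 f2 : ℕ) (h1 : u < f1) (h12 : f1 < f2) (h2w : f2 ≤ w)
    (hf1 : bwFlipAt e f1) (hf2 : bwFlipAt e f2) : False :=
  BWProof.bw_key e f2 i s c u w f1 hline5 hactive hexit h1 h12 h2w hf1 hf2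
end

section
/- The BWBGME algorithm satisfies the Concurrent Entry property: in any execution, if a process P_i is in the entry section and throughout that period every other process P_j satisfies Token[j].session ∈ {0, mysession of P_i} (i.e., there is no conflicting process), then P_i enters the critical section within a bounded number of its own steps. -/
/-! ### Auxiliary development for the proof -/

/-- Per-process structural invariant relating pc, choosing bit and token session. -/
def InvP (pc : BWPc) (ch : Bool) (sess : ℕ) : Prop :=
  match pc with
  | .remainder => ch = false ∧ sess = 0
  | .d1 s => ch = false ∧ sess = 0 ∧ 0 < s
  | .d2 s => ch = false ∧ sess = s ∧ 0 < s
  | .d3 s => ch = true ∧ sess = s ∧ 0 < s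
  | .scan s _ _ _ => ch = true ∧ sess = s ∧ 0 < s
  | .d4 s _ _ => ch = true ∧ sess = s ∧ 0 < s
  | .d5 s _ _ => ch = true ∧ sess = s ∧ 0 < s
  | .w1 s _ _ _ => ch = false ∧ sess = s ∧ 0 < s
  | .wB s _ _ _ => ch = false ∧ sess = s ∧ 0 < s
  | .wSame s _ _ _ => ch = false ∧ sess = s ∧ 0 < s
  | .wDiff s _ _ _ => ch = false ∧ sess = s ∧ 0 < s
  | .cs s _ _ => ch = false ∧ sess = s ∧ 0 < s
  | .x1 s _ _ _ => ch = false ∧ sess = s ∧ 0 < s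
  | .xFlip s _ _ => ch = false ∧ sess = s ∧ 0 < s
  | .x2 => ch = false

def BWInv {N : ℕ} (st : BWState N) : Prop :=
  ∀ j, InvP (st.pc j) (st.choosing j) ((st.token j).session)

lemma InvP_sess_zero {p : BWPc} {ch : Bool} (h : InvP p ch 0) : ch = false := by
  cases p <;> simp only [InvP] at h <;>
    first
      | exact h
      | exact h.1
      | (obtain ⟨-, h1, h2⟩ := h; omega)

/-- Non-scheduled processes are not changed by a step. -/
lemma bwStep_frame {N : ℕ} {st st' : BWState N} {k i : Fin N}
    (h : bwStep st k st') (hik : i ≠ k) :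
    st'.pc i = st.pc i ∧ st'.choosing i = st.choosing i ∧ st'.token i = st.token i := by
  unfold bwStep at h
  split at h <;>
  (repeat' split at h) <;>
  first
    | (subst h; simp [Function.update_of_ne hik])
    | (rcases h with rfl | ⟨s, _, rfl⟩ <;> simp [Function.update_of_ne hik])
    | (rcases h with rfl | rfl <;> simp [Function.update_of_ne hik])

/-- The invariant is preserved by steps. -/
lemma bwStep_inv {N : ℕ} {st st' : BWState N} {k : Fin N}
    (hI : BWInv st) (h : bwStep st k st') : BWInv st' := by
  intro j
  by_cases hjk : j = k
  · subst hjk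
    have hj := hI j
    unfold bwStep at h
    split at h <;>
    rename_i hpc <;>
    rw [hpc] at hj <;>
    (repeat' split at h) <;>
    first
      | (subst h; simp_all [InvP, BWTok.init, Function.update_self])
      | (rcases h with rfl | ⟨s, hs, rfl⟩ <;> simp_all [InvP, BWTok.init, Function.update_self])
      | (rcases h with rfl | rfl <;> simp_all [InvP, BWTok.init, Function.update_self])
  · have hf := bwStep_frame h (Ne.symm (by exact fun hh => hjk hh.symm) : j ≠ k)
    rw [hf.1, hf.2.1, hf.2.2]
    exact hI j

/-- Entry-section pcs with session `s` and in-bounds loop counters. -/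
def EP (s N : ℕ) : BWPc → Prop
  | .d1 s' => s' = s
  | .d2 s' => s' = s
  | .d3 s' => s' = s
  | .scan s' _ j _ => s' = s ∧ j ≤ N
  | .d4 s' _ _ => s' = s
  | .d5 s' _ _ => s' = s
  | .w1 s' _ _ j => s' = s ∧ j ≤ N
  | .wB s' _ _ j => s' = s ∧ j < N
  | .wSame s' _ _ j => s' = s ∧ j < N
  | .wDiff s' _ _ j => s' = s ∧ j < N
  | _ => False

lemma EP_entry {N : ℕ} {st : BWState N} {i : Fin N} {s : ℕ}
    (h : EP s N (st.pc i)) : bwInEntry st i := by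
  cases hpc : st.pc i <;> simp [EP, hpc] at h <;> simp [bwInEntry, hpc]

/-- Number of `i`-steps remaining to reach the CS. -/
def entryRank (N : ℕ) : BWPc → ℕ
  | .d1 _ => 4*N+7
  | .d2 _ => 4*N+6
  | .d3 _ => 4*N+5
  | .scan _ _ j _ => 4*N+4 - j
  | .d4 _ _ _ => 3*N+3
  | .d5 _ _ _ => 3*N+2
  | .w1 _ _ _ j => 3*(N-j)+1
  | .wB _ _ _ j => 3*(N-j)
  | .wSame _ _ _ j => 3*(N-j)-1
  | .wDiff _ _ _ j => 3*(N-j)-1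
  | _ => 0

/-- Key progress lemma: with no conflicting process, every step of `i` in the
entry section strictly decreases the rank (or enters the CS). -/
lemma bwStep_progress {N : ℕ} {st st' : BWState N} {i : Fin N} {s : ℕ}
    (hI : BWInv st)
    (hH : ∀ j, j ≠ i → (st.token j).session = 0 ∨ (st.token j).session = s)
    (hEP : EP s N (st.pc i)) (h : bwStep st i st') :
    (∃ c m, st'.pc i = BWPc.cs s c m) ∨
      (EP s N (st'.pc i) ∧ entryRank N (st'.pc i) < entryRank N (st.pc i)) := by
  have hIi := hI i
  unfold bwStep at h
  cases hpc : st.pc i <;> rw [hpc] at h hEP hIi <;> simp only [] at h <;> simp [EP] at hEP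
  case d1 s' =>
    subst hEP; subst h
    right; refine ⟨?_, ?_⟩ <;> simp [EP, entryRank, Function.update_self] <;> omega
  case d2 s' =>
    subst hEP; subst h
    right; refine ⟨?_, ?_⟩ <;> simp [EP, entryRank, Function.update_self] <;> omega
  case d3 s' =>
    subst hEP; subst h
    right; refine ⟨?_, ?_⟩ <;> simp [EP, entryRank, Function.update_self] <;> omega
  case scan s' c j m =>
    obtain ⟨rfl, hjN⟩ := hEP
    split at h
    · rename_i hjlt
      subst h
      right; refine ⟨?_, ?_⟩ <;> simp [EP, entryRank, Function.update_self] <;> omega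
    · rename_i hjge
      subst h
      right; refine ⟨?_, ?_⟩ <;> simp [EP, entryRank, Function.update_self] <;> omega
  case d4 s' c m =>
    subst hEP; subst h
    right; refine ⟨?_, ?_⟩ <;> simp [EP, entryRank, Function.update_self] <;> omega
  case d5 s' c m =>
    subst hEP; subst h
    right; refine ⟨?_, ?_⟩ <;> simp [EP, entryRank, Function.update_self] <;> omega
  case w1 s' c m j =>
    obtain ⟨rfl, hjN⟩ := hEP
    split at h
    · rename_i hjlt
      have hguard : st.choosing ⟨j, hjlt⟩ = false ∨ (st.token ⟨j, hjlt⟩).session = s' := by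
        by_cases hji : (⟨j, hjlt⟩ : Fin N) = i
        · right; rw [hji]; exact hIi.2.1
        · rcases hH _ hji with h0 | hs
          · left; exact InvP_sess_zero (h0 ▸ hI ⟨j, hjlt⟩)
          · right; exact hs
      rw [if_pos hguard] at h
      subst h
      right; refine ⟨?_, ?_⟩ <;> simp [EP, entryRank, Function.update_self] <;> omega
    · subst h
      left
      exact ⟨c, m, by simp [Function.update_self]⟩
  case wB s' c m j =>
    obtain ⟨rfl, hjN⟩ := hEP
    rw [dif_pos hjN] at h
    split at h <;> subst h <;> right <;>
      refine ⟨?_, ?_⟩ <;> simp [EP, entryRank, Function.update_self] <;> omega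
  case wSame s' c m j =>
    obtain ⟨rfl, hjN⟩ := hEP
    rw [dif_pos hjN] at h
    have hguard : (st.token ⟨j, hjN⟩).session = 0 ∨ (st.token ⟨j, hjN⟩).session = s' := by
      by_cases hji : (⟨j, hjN⟩ : Fin N) = i
      · right; rw [hji]; exact hIi.2.1
      · exact hH _ hji
    rw [if_pos (by tauto)] at h
    subst h
    right; refine ⟨?_, ?_⟩ <;> simp [EP, entryRank, Function.update_self] <;> omega
  case wDiff s' c m j =>
    obtain ⟨rfl, hjN⟩ := hEP
    rw [dif_pos hjN] at h
    have hguard : (st.token ⟨j, hjN⟩).session = 0 ∨ (st.token ⟨j, hjN⟩).session = s' := by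
      by_cases hji : (⟨j, hjN⟩ : Fin N) = i
      · right; rw [hji]; exact hIi.2.1
      · exact hH _ hji
    rw [if_pos (by tauto)] at h
    subst h
    right; refine ⟨?_, ?_⟩ <;> simp [EP, entryRank, Function.update_self] <;> omega

lemma card_filter_Ico_succ (p : ℕ → Prop) [DecidablePred p] (a k : ℕ) (h : a ≤ k) :
    ((Finset.Ico a (k+1)).filter p).card
      = ((Finset.Ico a k).filter p).card + (if p k then 1 else 0) := by
  rw [Nat.Ico_succ_right_eq_insert_Ico h, Finset.filter_insert]
  split
  · rw [Finset.card_insert_of_notMem (by simp)]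
  · simp

/-- **Concurrent entry for the BWBGME algorithm.**  There is a bound `B` (depending only
on `N`) such that in every execution, if process `i` enters the entry section requesting
session `s` and, throughout the period it is in the entry section, every other process
`j` has `Token[j].session ∈ {0, s}` (no conflicting process), then `i` enters the
critical section within `B` of its own steps. -/
theorem bw_concurrent_entry (N : ℕ) :
    ∃ B : ℕ, ∀ (e : BWExec N) (i : Fin N) (s : ℕ) (n : ℕ),
      bwEntersDoorway e i s n →
      (∀ m, n < m → bwInEntry (e.state m) i → ∀ j, j ≠ i →
        ((e.state m).token j).session = 0 ∨ ((e.state m).token j).session = s) →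
      ∀ m, n ≤ m →
        B ≤ ((Finset.Ico n m).filter (fun k => e.sched k = i)).card →
        ∃ c, n ≤ c ∧ c ≤ m ∧ bwInCS (e.state c) i := by
  refine ⟨4*N+9, ?_⟩
  intro e i s n hEnter hH m hnm hcard
  have hInvAll : ∀ k, BWInv (e.state k) := by
    intro k
    induction k with
    | zero =>
      obtain ⟨c0, h0⟩ := e.init
      rw [h0]
      intro j
      simp [bwInit, InvP, BWTok.init]
    | succ k ih => exact bwStep_inv ih (e.step k)
  have claim : ∀ k, n+1 ≤ k →
      (∃ c, n+1 ≤ c ∧ c ≤ k ∧ bwInCS (e.state c) i) ∨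
      (EP s N ((e.state k).pc i) ∧
        entryRank N ((e.state k).pc i)
          + ((Finset.Ico (n+1) k).filter (fun t => e.sched t = i)).card ≤ 4*N+7) := by
    intro k hk
    induction k, hk using Nat.le_induction with
    | base =>
      right
      rw [hEnter.2]
      simp [EP, entryRank]
    | succ k hk ih =>
      rcases ih with ⟨c, hc1, hc2, hc3⟩ | ⟨hEP, hrank⟩
      · exact Or.inl ⟨c, hc1, hc2.trans (Nat.le_succ k), hc3⟩
      · by_cases hsch : e.sched k = i
        · have hcards : ((Finset.Ico (n+1) (k+1)).filter (fun t => e.sched t = i)).card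
              = ((Finset.Ico (n+1) k).filter (fun t => e.sched t = i)).card + 1 := by
            rw [card_filter_Ico_succ _ _ _ hk]
            simp [hsch]
          have hstep := e.step k
          rw [hsch] at hstep
          have hEnt : bwInEntry (e.state k) i := EP_entry hEP
          have hH' : ∀ j, j ≠ i →
              ((e.state k).token j).session = 0 ∨ ((e.state k).token j).session = s :=
            hH k (by omega) hEnt
          rcases bwStep_progress (hInvAll k) hH' hEP hstep with ⟨c', m', hcs⟩ | ⟨hEP', hlt⟩
          · exact Or.inl ⟨k+1, by omega, le_refl _, ⟨s, c', m', hcs⟩⟩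
          · right
            refine ⟨hEP', ?_⟩
            rw [hcards]
            omega
        · have hcards : ((Finset.Ico (n+1) (k+1)).filter (fun t => e.sched t = i)).card
              = ((Finset.Ico (n+1) k).filter (fun t => e.sched t = i)).card := by
            rw [card_filter_Ico_succ _ _ _ hk]
            simp [hsch]
          have hf := bwStep_frame (e.step k) (fun hh => hsch hh.symm)
          right
          rw [hf.1, hcards]
          exact ⟨hEP, hrank⟩
  have hnm' : n + 1 ≤ m := by
    by_contra hcon
    have hmn : m = n := by omega
    subst hmn
    simp at hcard
  rcases claim m hnm' with ⟨c, hc1, hc2, hc3⟩ | ⟨hEP, hrank⟩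
  · exact ⟨c, by omega, hc2, hc3⟩
  · exfalso
    have hlt : n < m := by omega
    have hins : insert n (Finset.Ico (n+1) m) = Finset.Ico n m :=
      by simpa using Finset.insert_Ico_succ_left_eq_Ico hlt
    have hle : ((Finset.Ico n m).filter (fun t => e.sched t = i)).card
        ≤ ((Finset.Ico (n+1) m).filter (fun t => e.sched t = i)).card + 1 := by
      rw [← hins, Finset.filter_insert]
      split
      · exact Finset.card_insert_le _ _
      · omega
    omega
end
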